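/- arXiv:1304.6271 — 5 statements merged into one kernel-verified Lean document; each statement's English description precedes it below -/
import Mathlib

section
/- Fix x ∈ X and suppose there exist constants 1 < c < c' < c'' and r₀ ≥ 0 such that c' ≤ V(x,cr)/V(x,r) ≤ c'' for all r > r₀. Then ∫_a^∞ ds/V(x,s) < ∞ for every a > 0 (so the semigroup {P^t} is transient), and there exist constants k₁, k₂ > 0 depending only on c, c', c'' such that for every y ∈ X with r := d_*(x,y) > r₀ one has k₁ · r/V(x,r) ≤ g(x,y) ≤ k₂ · r/V(x,r). -/
open MeasureTheory Metric Filter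
open scoped ENNReal Classical

/-- The averaging operator `Q_r f(x) = μ(B_r(x))⁻¹ ∫_{B_r(x)} f dμ`. -/
noncomputable def avgOp {X : Type*} [MetricSpace X] [MeasurableSpace X]
    (μ : Measure X) (r : ℝ) (f : X → ℝ) (x : X) : ℝ :=
  (μ (closedBall x r)).toReal⁻¹ * ∫ y in closedBall x r, f y ∂μ

/-- The isotropic Markov operator `P^t f(x) = ∫_[0,∞) Q_r f(x) dσ^t(r)`,
where `νt` is the Lebesgue–Stieltjes measure of `σ^t`. -/
noncomputable def isoOp {X : Type*} [MetricSpace X] [MeasurableSpace X]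
    (μ : Measure X) (νt : Measure ℝ) (f : X → ℝ) (x : X) : ℝ :=
  ∫ r in Set.Ici (0:ℝ), avgOp μ r f x ∂νt

/-- The heat kernel `p(t,x,y) = ∫_[d(x,y),∞) μ(B_r(x))⁻¹ dσ^t(r)`. -/
noncomputable def heatK {X : Type*} [MetricSpace X] [MeasurableSpace X]
    (μ : Measure X) (ν : ℝ → Measure ℝ) (t : ℝ) (x y : X) : ℝ≥0∞ :=
  ∫⁻ r in Set.Ici (dist x y), (μ (closedBall x r))⁻¹ ∂(ν t)

/-- The intrinsic ultra-metric `d_*(x,y) = 1/log(1/σ(d(x,y)))` for `x ≠ y`. -/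
noncomputable def dstar {X : Type*} [MetricSpace X] (σ : ℝ → ℝ) (x y : X) : ℝ :=
  if x = y then 0 else 1 / Real.log (1 / σ (dist x y))

/-- The closed ball `B*_s(x)` of the intrinsic ultra-metric. -/
def starBall {X : Type*} [MetricSpace X] (σ : ℝ → ℝ) (x : X) (s : ℝ) : Set X :=
  {y | dstar σ x y ≤ s}

/-- The spectral distribution function `N(x,τ) = 1/μ(B*_{1/τ}(x))`. -/
noncomputable def specN {X : Type*} [MetricSpace X] [MeasurableSpace X]
    (μ : Measure X) (σ : ℝ → ℝ) (x : X) (τ : ℝ) : ℝ≥0∞ :=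
  (μ (starBall σ x (1 / τ)))⁻¹

/-- The Green function `g(x,y) = ∫_0^∞ p(t,x,y) dt`. -/
noncomputable def greenF {X : Type*} [MetricSpace X] [MeasurableSpace X]
    (μ : Measure X) (ν : ℝ → Measure ℝ) (x y : X) : ℝ≥0∞ :=
  ∫⁻ t in Set.Ioi (0:ℝ), heatK μ ν t x y

section GreenAux
open Set

/-- `∫_0^∞ p^t dt = 1/log(1/p)` for `p ∈ (0,1)`. -/
lemma gexp_lintegral {p : ℝ} (hp0 : 0 < p) (hp1 : p < 1) :
    ∫⁻ t in Set.Ioi (0:ℝ), ENNReal.ofReal (p ^ t) = ENNReal.ofReal (1 / Real.log (1 / p)) := by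
  set b : ℝ := -Real.log p with hb_def
  have hb : 0 < b := by
    have := Real.log_neg hp0 hp1
    simp only [hb_def]; linarith
  have hrw : ∀ t : ℝ, p ^ t = Real.exp (-b * t) := by
    intro t
    rw [Real.rpow_def_of_pos hp0]
    congr 1; simp [hb_def]
  have hint : IntegrableOn (fun t : ℝ => Real.exp (-b * t)) (Set.Ioi (0:ℝ)) :=
    exp_neg_integrableOn_Ioi 0 hb
  have hreal : (∫ t in Set.Ioi (0:ℝ), Real.exp (-b * t)) = 1 / b := by
    have hderiv : ∀ t ∈ Set.Ici (0:ℝ),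
        HasDerivAt (fun t : ℝ => -Real.exp (-b * t) / b) (Real.exp (-b * t)) t := by
      intro t _
      have h1 : HasDerivAt (fun t : ℝ => -b * t) (-b) t := by
        simpa using (hasDerivAt_id t).const_mul (-b)
      have h2 := (h1.exp.neg).div_const b
      exact h2.congr_deriv (by rw [mul_neg, neg_neg, mul_div_assoc, div_self hb.ne', mul_one])
    have hlim : Tendsto (fun t : ℝ => -Real.exp (-b * t) / b) atTop (nhds 0) := by
      have h1 : Tendsto (fun t : ℝ => -b * t) atTop atBot := by
        simpa using (tendsto_id (α := ℝ)).const_mul_atTop_of_neg (neg_lt_zero.2 hb)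
      have h2 := (Real.tendsto_exp_atBot.comp h1).neg.div_const b
      simpa using h2
    have := integral_Ioi_of_hasDerivAt_of_tendsto' hderiv hint hlim
    rw [this]; simp [hb.ne']; field_simp
  rw [← ofReal_integral_eq_lintegral_ofReal]
  · rw [show (∫ t in Set.Ioi (0:ℝ), p ^ t) = ∫ t in Set.Ioi (0:ℝ), Real.exp (-b * t) by
      exact integral_congr_ae (Filter.Eventually.of_forall fun t => hrw t)]
    rw [hreal]
    congr 1
    rw [one_div (Real.log (1/p)), one_div b]
    congr 1
    rw [hb_def, one_div, Real.log_inv]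
  · exact hint.congr_fun (fun t _ => (hrw t).symm) measurableSet_Ioi
  · exact Filter.Eventually.of_forall fun t => Real.rpow_nonneg hp0.le t

/-! ### Facts about the distance distribution function -/

lemma measurable_const_rpow (p : ℝ) (hp : 0 ≤ p) : Measurable fun t : ℝ => p ^ t := by
  rcases eq_or_lt_of_le hp with rfl | hp
  · have heq : (fun t : ℝ => (0:ℝ) ^ t) = fun t => if t = 0 then 1 else 0 := by
      funext t
      rcases eq_or_ne t 0 with rfl | ht
      · simp
      · simp [Real.zero_rpow ht, ht]
    rw [heq]
    exact Measurable.ite (measurableSet_singleton 0) measurable_const measurable_const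
  · have heq : (fun t : ℝ => p ^ t) = fun t => Real.exp (Real.log p * t) := by
      funext t; rw [Real.rpow_def_of_pos hp]
    rw [heq]
    exact (Real.continuous_exp.comp (continuous_const.mul continuous_id)).measurable

structure SigmaOK (σ : ℝ → ℝ) : Prop where
  mono : StrictMonoOn σ (Set.Ici 0)
  zero : σ 0 = 0
  lt1 : ∀ r : ℝ, 0 ≤ r → σ r < 1
  nonneg : ∀ r : ℝ, 0 ≤ r → 0 ≤ σ r
  lc : ∀ r : ℝ, 0 < r → ContinuousWithinAt σ (Set.Iic r) r
  zero_lim : Tendsto σ (nhdsWithin 0 (Set.Ioi 0)) (nhds 0)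
  one_lim : Tendsto σ atTop (nhds 1)

lemma sigmaOK_of (σ : ℝ → ℝ)
    (hσmono : StrictMonoOn σ (Set.Ici 0))
    (hσrange : ∀ r : ℝ, 0 ≤ r → σ r ∈ Set.Icc (0:ℝ) 1)
    (hσlc : ∀ r : ℝ, 0 < r → ContinuousWithinAt σ (Set.Iic r) r)
    (hσzero : Tendsto σ (nhdsWithin 0 (Set.Ioi 0)) (nhds 0))
    (hσtop : Tendsto σ atTop (nhds 1)) : SigmaOK σ := by
  have hzero : σ 0 = 0 := by
    have h1 : σ 0 ≤ 0 := by
      refine ge_of_tendsto hσzero ?_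
      filter_upwards [self_mem_nhdsWithin] with r hr
      exact (hσmono (Set.mem_Ici.2 le_rfl) (Set.mem_Ici.2 (le_of_lt (Set.mem_Ioi.1 hr))) hr).le
    exact le_antisymm h1 (hσrange 0 le_rfl).1
  refine ⟨hσmono, hzero, ?_, fun r hr => (hσrange r hr).1, hσlc, hσzero, hσtop⟩
  intro r hr
  exact lt_of_lt_of_le (hσmono hr (by linarith : (0:ℝ) ≤ r + 1) (by linarith))
    (hσrange (r+1) (by linarith)).2

lemma SigmaOK.pos {σ : ℝ → ℝ} (h : SigmaOK σ) {r : ℝ} (hr : 0 < r) : 0 < σ r := by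
  have := h.mono (le_refl (0:ℝ)) (le_of_lt hr) hr
  rw [h.zero] at this; exact this

/-- `φ r = 1/log(1/σ(max r 0))`, the intrinsic-scale function. -/
noncomputable def gphi (σ : ℝ → ℝ) (r : ℝ) : ℝ := 1 / Real.log (1 / σ (max r 0))

lemma gphi_nonpos {σ : ℝ → ℝ} (h : SigmaOK σ) {r : ℝ} (hr : r ≤ 0) : gphi σ r = 0 := by
  simp [gphi, max_eq_right hr, h.zero]

lemma gphi_eq {σ : ℝ → ℝ} {r : ℝ} (hr : 0 < r) :
    gphi σ r = 1 / Real.log (1 / σ r) := by simp [gphi, max_eq_left hr.le]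

lemma gphi_log_pos {σ : ℝ → ℝ} (h : SigmaOK σ) {r : ℝ} (hr : 0 < r) :
    0 < Real.log (1 / σ r) := by
  rw [one_div, Real.log_inv]
  have := Real.log_neg (h.pos hr) (h.lt1 r hr.le)
  linarith

lemma gphi_pos {σ : ℝ → ℝ} (h : SigmaOK σ) {r : ℝ} (hr : 0 < r) : 0 < gphi σ r := by
  rw [gphi_eq hr]
  exact one_div_pos.2 (gphi_log_pos h hr)

lemma gphi_nonneg {σ : ℝ → ℝ} (h : SigmaOK σ) (r : ℝ) : 0 ≤ gphi σ r := by
  rcases le_or_gt r 0 with hr | hr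
  · rw [gphi_nonpos h hr]
  · exact (gphi_pos h hr).le

lemma gphi_mono {σ : ℝ → ℝ} (h : SigmaOK σ) : Monotone (gphi σ) := by
  intro r r' hrr'
  rcases le_or_gt r 0 with hr | hr
  · rw [gphi_nonpos h hr]; exact gphi_nonneg h r'
  · have hr' : 0 < r' := lt_of_lt_of_le hr hrr'
    rw [gphi_eq hr, gphi_eq hr']
    rcases eq_or_lt_of_le hrr' with rfl | hlt
    · exact le_refl _
    have hσ : σ r < σ r' := h.mono hr.le hr'.le hlt
    have h1 : Real.log (1 / σ r') < Real.log (1 / σ r) := by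
      rw [one_div, one_div, Real.log_inv, Real.log_inv]
      exact neg_lt_neg (Real.log_lt_log (h.pos hr) hσ)
    exact le_of_lt (one_div_lt_one_div_of_lt (gphi_log_pos h hr') h1)

/-- `φ` is unbounded above. -/
lemma gphi_unbdd {σ : ℝ → ℝ} (h : SigmaOK σ) (s : ℝ) : ∃ R : ℝ, 0 < R ∧ s < gphi σ R := by
  set ε : ℝ := Real.exp (-(1 / (max s 0 + 1))) with hε_def
  have hεpos : 0 < ε := Real.exp_pos _
  have hε1 : ε < 1 := by
    rw [hε_def, Real.exp_lt_one_iff]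
    have : (0:ℝ) < max s 0 + 1 := by positivity
    simp only [neg_lt, neg_zero]  -- -(x) < 0
    positivity
  have hev : ∀ᶠ R in atTop, ε < σ R := h.one_lim.eventually (eventually_gt_nhds hε1)
  obtain ⟨R, hR1, hR2⟩ := (hev.and (eventually_ge_atTop (1:ℝ))).exists
  refine ⟨R, lt_of_lt_of_le one_pos hR2, ?_⟩
  have hRpos : 0 < R := lt_of_lt_of_le one_pos hR2
  rw [gphi_eq hRpos]
  have hlog : Real.log (1 / σ R) < 1 / (max s 0 + 1) := by
    rw [one_div, Real.log_inv]
    have : -(1 / (max s 0 + 1)) < Real.log (σ R) := by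
      calc -(1 / (max s 0 + 1)) = Real.log ε := (Real.log_exp _).symm
      _ < Real.log (σ R) := Real.log_lt_log hεpos hR1
    linarith
  have h2 : max s 0 + 1 < 1 / Real.log (1 / σ R) := by
    have hlogpos := gphi_log_pos h hRpos
    have := one_div_lt_one_div_of_lt hlogpos hlog
    rwa [one_div_one_div] at this
  calc s ≤ max s 0 := le_max_left _ _
  _ < max s 0 + 1 := by linarith
  _ < _ := h2

/-- Generalized inverse of `φ`. -/
noncomputable def grho (σ : ℝ → ℝ) (s : ℝ) : ℝ := sSup ({0} ∪ {r : ℝ | gphi σ r ≤ s})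

lemma grho_set_nonempty (σ : ℝ → ℝ) (s : ℝ) : ({0} ∪ {r : ℝ | gphi σ r ≤ s}).Nonempty :=
  ⟨0, Or.inl rfl⟩

lemma grho_set_bddAbove {σ : ℝ → ℝ} (h : SigmaOK σ) (s : ℝ) :
    BddAbove ({0} ∪ {r : ℝ | gphi σ r ≤ s}) := by
  obtain ⟨R, hR0, hRs⟩ := gphi_unbdd h s
  refine ⟨R, ?_⟩
  rintro r (rfl | hr)
  · exact hR0.le
  · by_contra hcon
    push_neg at hcon
    exact absurd (le_trans (gphi_mono h hcon.le) hr) (not_le.2 hRs)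

lemma grho_nonneg {σ : ℝ → ℝ} (h : SigmaOK σ) (s : ℝ) : 0 ≤ grho σ s :=
  le_csSup (grho_set_bddAbove h s) (Or.inl rfl)

lemma grho_mono {σ : ℝ → ℝ} (h : SigmaOK σ) : Monotone (grho σ) := by
  intro s s' hss'
  refine csSup_le_csSup (grho_set_bddAbove h s') (grho_set_nonempty σ s) ?_
  rintro r (rfl | hr)
  · exact Or.inl rfl
  · exact Or.inr (le_trans hr hss')

lemma gphi_contWithin {σ : ℝ → ℝ} (h : SigmaOK σ) {r : ℝ} (hr : 0 < r) :
    ContinuousWithinAt (gphi σ) (Set.Iic r) r := by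
  have hmax : ContinuousWithinAt (fun t : ℝ => max t 0) (Set.Iic r) r :=
    (continuous_id.max continuous_const).continuousWithinAt
  have hmaps : Set.MapsTo (fun t : ℝ => max t 0) (Set.Iic r) (Set.Iic r) := by
    intro t ht
    exact max_le ht hr.le
  have hlc' : ContinuousWithinAt σ (Set.Iic r) (max r 0) := by
    rw [max_eq_left hr.le]; exact h.lc r hr
  have hσc : ContinuousWithinAt (fun t : ℝ => σ (max t 0)) (Set.Iic r) r :=
    ContinuousWithinAt.comp (g := σ) (f := fun t : ℝ => max t 0) hlc' hmax hmaps
  have houter : ContinuousAt (fun p : ℝ => 1 / Real.log (1 / p)) (σ (max r 0)) := by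
    rw [max_eq_left hr.le]
    have h1 : σ r ≠ 0 := (h.pos hr).ne'
    have h2 : (1:ℝ) / σ r ≠ 0 := one_div_ne_zero h1
    have h3 : Real.log (1 / σ r) ≠ 0 := (gphi_log_pos h hr).ne'
    have c1 : ContinuousAt (fun p : ℝ => 1 / p) (σ r) := by
      simpa [one_div] using (continuousAt_inv₀ h1)
    have c2 : ContinuousAt Real.log ((fun p : ℝ => 1 / p) (σ r)) := Real.continuousAt_log h2
    exact continuousAt_const.div (c2.comp c1) h3
  exact ContinuousAt.comp_continuousWithinAt (g := fun p : ℝ => 1 / Real.log (1 / p))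
    (f := fun t : ℝ => σ (max t 0)) houter hσc

lemma gphi_grho_le {σ : ℝ → ℝ} (h : SigmaOK σ) {s : ℝ} (hs : 0 ≤ s) :
    gphi σ (grho σ s) ≤ s := by
  rcases eq_or_lt_of_le (grho_nonneg h s) with h0 | hpos
  · rw [← h0, gphi_nonpos h le_rfl]; exact hs
  · have hlc := gphi_contWithin h hpos
    have htend : Tendsto (gphi σ) (nhdsWithin (grho σ s) (Set.Iio (grho σ s)))
        (nhds (gphi σ (grho σ s))) := by
      exact hlc.tendsto.mono_left (nhdsWithin_mono _ Iio_subset_Iic_self)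
    refine le_of_tendsto htend ?_
    refine eventually_nhdsWithin_of_forall ?_
    intro t ht
    obtain ⟨r', hr'mem, hr'⟩ := exists_lt_of_lt_csSup (grho_set_nonempty σ s) ht
    rcases hr'mem with rfl | hr'le
    · calc gphi σ t ≤ gphi σ 0 := gphi_mono h hr'.le
      _ = 0 := gphi_nonpos h le_rfl
      _ ≤ s := hs
    · exact le_trans (gphi_mono h hr'.le) hr'le

lemma gphi_le_iff {σ : ℝ → ℝ} (h : SigmaOK σ) {s : ℝ} (hs : 0 ≤ s) (r : ℝ) :
    gphi σ r ≤ s ↔ r ≤ grho σ s := by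
  constructor
  · intro hr
    exact le_csSup (grho_set_bddAbove h s) (Or.inr hr)
  · intro hr
    exact le_trans (gphi_mono h hr) (gphi_grho_le h hs)

lemma grho_pos {σ : ℝ → ℝ} (h : SigmaOK σ) {s : ℝ} (hs : 0 < s) : 0 < grho σ s := by
  set ε : ℝ := Real.exp (-(1 / s)) with hε_def
  have hεpos : 0 < ε := Real.exp_pos _
  have hev : ∀ᶠ r in nhdsWithin 0 (Set.Ioi 0), σ r < ε :=
    h.zero_lim.eventually (eventually_lt_nhds hεpos)
  obtain ⟨r, hrσ, hr0⟩ := (hev.and self_mem_nhdsWithin).exists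
  have hφ : gphi σ r ≤ s := by
    rw [gphi_eq hr0]
    have hlog : 1 / s < Real.log (1 / σ r) := by
      rw [one_div (σ r), Real.log_inv]
      have : Real.log (σ r) < -(1/s) := by
        calc Real.log (σ r) < Real.log ε := Real.log_lt_log (h.pos hr0) hrσ
        _ = -(1/s) := Real.log_exp _
      linarith
    have h2 := one_div_lt_one_div_of_lt (one_div_pos.2 hs) hlog
    rw [one_div_one_div] at h2
    exact h2.le
  exact lt_of_lt_of_le hr0 ((gphi_le_iff h hs.le r).1 hφ)

lemma dstar_eq_gphi {X : Type*} [MetricSpace X] {σ : ℝ → ℝ} (h : SigmaOK σ) (x y : X) :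
    dstar σ x y = gphi σ (dist x y) := by
  rcases eq_or_ne x y with rfl | hxy
  · simp [dstar, gphi, h.zero]
  · rw [dstar, if_neg hxy, gphi_eq (dist_pos.2 hxy)]

lemma starBall_eq_closedBall {X : Type*} [MetricSpace X] {σ : ℝ → ℝ} (h : SigmaOK σ)
    (x : X) {s : ℝ} (hs : 0 ≤ s) : starBall σ x s = closedBall x (grho σ s) := by
  ext y
  rw [starBall, Set.mem_setOf_eq, dstar_eq_gphi h, mem_closedBall, dist_comm y x]
  exact gphi_le_iff h hs (dist x y)

/-! ### The kernel and the mixed measure -/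

noncomputable def nup (ν : ℝ → Measure ℝ) : ℝ → Measure ℝ := fun t => if 0 < t then ν t else 0

section Kernel

variable {σ : ℝ → ℝ} {ν : ℝ → Measure ℝ}
variable (hσ : SigmaOK σ)
variable (hν : ∀ t : ℝ, 0 < t → ∀ a b : ℝ, 0 ≤ a → a ≤ b →
      ν t (Set.Ico a b) = ENNReal.ofReal (σ b ^ t - σ a ^ t))
variable (hνneg : ∀ t : ℝ, 0 < t → ν t (Set.Iio 0) = 0)

include hσ hν hνneg

lemma nu_Ico {t : ℝ} (ht : 0 < t) {a b : ℝ} (hab : a ≤ b) :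
    ν t (Set.Ico a b) = ENNReal.ofReal (σ (max b 0) ^ t - σ (max a 0) ^ t) := by
  rcases le_or_gt b 0 with hb | hb
  · have h0 : ν t (Set.Ico a b) = 0 :=
      measure_mono_null (fun z hz => lt_of_lt_of_le hz.2 hb) (hνneg t ht)
    rw [h0, max_eq_right hb, max_eq_right (hab.trans hb)]
    simp
  rcases le_or_gt 0 a with ha | ha
  · rw [hν t ht a b ha hab, max_eq_left (hb.le), max_eq_left ha]
  · have hsplit : Set.Ico a 0 ∪ Set.Ico 0 b = Set.Ico a b :=
      Set.Ico_union_Ico_eq_Ico ha.le hb.le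
    have hdisj : Disjoint (Set.Ico a (0:ℝ)) (Set.Ico (0:ℝ) b) :=
      Set.Ico_disjoint_Ico_same
    have h0 : ν t (Set.Ico a 0) = 0 :=
      measure_mono_null (fun z hz => hz.2) (hνneg t ht)
    have := measure_union (μ := ν t) hdisj measurableSet_Ico
    rw [hsplit] at this
    rw [this, h0, zero_add, hν t ht 0 b le_rfl hb.le, max_eq_left hb.le,
      max_eq_right ha.le]

lemma nu_univ {t : ℝ} (ht : 0 < t) : ν t Set.univ = 1 := by
  have hsplit : Set.Iio (0:ℝ) ∪ Set.Ici (0:ℝ) = Set.univ := Set.Iio_union_Ici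
  have hdisj : Disjoint (Set.Iio (0:ℝ)) (Set.Ici (0:ℝ)) := Set.Iio_disjoint_Ici le_rfl
  have hu := measure_union (μ := ν t) hdisj measurableSet_Ici
  rw [hsplit] at hu
  rw [← hsplit] at *
  rw [hu, hνneg t ht, zero_add]
  have hIci : Set.Ici (0:ℝ) = ⋃ n : ℕ, Set.Ico (0:ℝ) n := by
    ext z; simp only [Set.mem_Ici, Set.mem_iUnion, Set.mem_Ico]
    constructor
    · intro hz
      obtain ⟨n, hn⟩ := exists_nat_gt z
      exact ⟨n, hz, hn⟩
    · rintro ⟨n, hz, _⟩; exact hz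
  have hdir : Directed (· ⊆ ·) (fun n : ℕ => Set.Ico (0:ℝ) n) := by
    intro n m
    exact ⟨max n m, Set.Ico_subset_Ico le_rfl (by exact_mod_cast le_max_left n m),
      Set.Ico_subset_Ico le_rfl (by exact_mod_cast le_max_right n m)⟩
  rw [hIci, hdir.measure_iUnion]
  have hval : ∀ n : ℕ, ν t (Set.Ico (0:ℝ) n) = ENNReal.ofReal (σ n ^ t) := by
    intro n
    rw [hν t ht 0 n le_rfl (Nat.cast_nonneg n), hσ.zero, Real.zero_rpow ht.ne', sub_zero]
  simp_rw [hval]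
  have hmono : Monotone (fun n : ℕ => ENNReal.ofReal (σ n ^ t)) := by
    intro n m hnm
    have h1 : σ n ≤ σ m := by
      rcases eq_or_lt_of_le hnm with rfl | hlt
      · exact le_rfl
      · exact (hσ.mono (Set.mem_Ici.2 (Nat.cast_nonneg n)) (Set.mem_Ici.2 (Nat.cast_nonneg m)) (by exact_mod_cast hlt)).le
    exact ENNReal.ofReal_le_ofReal
      (Real.rpow_le_rpow (hσ.nonneg _ (Nat.cast_nonneg n)) h1 ht.le)
  have htend : Tendsto (fun n : ℕ => ENNReal.ofReal (σ n ^ t)) atTop (nhds 1) := by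
    have h1 : Tendsto (fun n : ℕ => σ n) atTop (nhds 1) :=
      hσ.one_lim.comp tendsto_natCast_atTop_atTop
    have h2 : Tendsto (fun n : ℕ => σ n ^ t) atTop (nhds 1) := by
      have hc : ContinuousAt (fun z : ℝ => z ^ t) 1 :=
        Real.continuousAt_rpow_const 1 t (Or.inl one_ne_zero)
      have := hc.tendsto.comp h1
      simpa [Real.one_rpow, Function.comp_def] using this
    have h3 := (ENNReal.continuous_ofReal.tendsto 1).comp h2
    simpa [Function.comp_def] using h3
  exact tendsto_nhds_unique (tendsto_atTop_iSup hmono) htend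

lemma nup_measurable : Measurable (nup ν) := by
  apply Measure.measurable_of_measurable_coe
  have key : ∀ ⦃s : Set ℝ⦄, MeasurableSet s → Measurable (fun t => nup ν t s) := by
    refine MeasurableSpace.induction_on_inter
      (C := fun s _ => Measurable (fun t => nup ν t s))
      (BorelSpace.measurable_eq.trans (borel_eq_generateFrom_Ico ℝ))
      (isPiSystem_Ico (id : ℝ → ℝ) id) ?_ ?_ ?_ ?_
    · simp
    · rintro s ⟨a, b, hab, rfl⟩
      have heq : (fun t => nup ν t (Set.Ico a b)) =
          fun t => if 0 < t then ENNReal.ofReal (σ (max b 0) ^ t - σ (max a 0) ^ t) else 0 := by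
        funext t
        by_cases ht : 0 < t
        · rw [nup, if_pos ht, if_pos ht, nu_Ico hσ hν hνneg ht hab.le]
        · rw [nup, if_neg ht, if_neg ht]; rfl
      rw [heq]
      refine Measurable.ite measurableSet_Ioi ?_ measurable_const
      exact Measurable.ennreal_ofReal
        ((measurable_const_rpow _ (hσ.nonneg _ (le_max_right _ _))).sub
          (measurable_const_rpow _ (hσ.nonneg _ (le_max_right _ _))))
    · intro s hs hmeas
      have heq : (fun t => nup ν t sᶜ) = fun t => nup ν t Set.univ - nup ν t s := by
        funext t
        have hfin : nup ν t s ≠ ⊤ := by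
          by_cases ht : 0 < t
          · rw [nup, if_pos ht]
            exact ne_top_of_le_ne_top (by simp [nu_univ hσ hν hνneg ht])
              (measure_mono (Set.subset_univ s))
          · rw [nup, if_neg ht]; simp
        rw [measure_compl hs hfin]
      rw [heq]
      refine Measurable.sub ?_ hmeas
      have heq2 : (fun t => nup ν t Set.univ) = fun t => if 0 < t then (1:ℝ≥0∞) else 0 := by
        funext t
        by_cases ht : 0 < t
        · rw [nup, if_pos ht, if_pos ht, nu_univ hσ hν hνneg ht]
        · rw [nup, if_neg ht, if_neg ht]; rfl
      rw [heq2]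
      exact Measurable.ite measurableSet_Ioi measurable_const measurable_const
    · intro f hdisj hmeasf hC
      have heq : (fun t => nup ν t (⋃ i, f i)) = fun t => ∑' i, nup ν t (f i) := by
        funext t; exact measure_iUnion hdisj hmeasf
      rw [heq]
      exact Measurable.ennreal_tsum hC
  exact fun s hs => key hs

end Kernel

lemma lint_sub_rpow {p q : ℝ} (hq0 : 0 ≤ q) (hqp : q ≤ p) (hp1 : p < 1) :
    ∫⁻ t in Set.Ioi (0:ℝ), ENNReal.ofReal (p ^ t - q ^ t) =
      ENNReal.ofReal (1 / Real.log (1 / p) - 1 / Real.log (1 / q)) := by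
  rcases eq_or_lt_of_le hq0 with hq | hq
  · -- q = 0
    subst hq
    have hz : (1:ℝ) / Real.log (1 / 0) = 0 := by norm_num
    rw [hz, sub_zero]
    have hcong : ∫⁻ t in Set.Ioi (0:ℝ), ENNReal.ofReal (p ^ t - (0:ℝ) ^ t) =
        ∫⁻ t in Set.Ioi (0:ℝ), ENNReal.ofReal (p ^ t) := by
      refine setLIntegral_congr_fun measurableSet_Ioi ?_
      intro t ht
      dsimp only
      rw [Real.zero_rpow (ne_of_gt ht), sub_zero]
    rw [hcong]
    rcases eq_or_lt_of_le hqp with hp | hp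
    · rw [← hp]
      have : (1:ℝ) / Real.log (1 / 0) = 0 := by norm_num
      rw [this]
      have h0 : ∫⁻ t in Set.Ioi (0:ℝ), ENNReal.ofReal ((0:ℝ) ^ t) =
          ∫⁻ t in Set.Ioi (0:ℝ), 0 := by
        refine setLIntegral_congr_fun measurableSet_Ioi ?_
        intro t ht
        dsimp only
        rw [Real.zero_rpow (ne_of_gt ht)]
        simp
      rw [h0, lintegral_zero, ENNReal.ofReal_zero]
    · exact gexp_lintegral hp hp1
  · -- 0 < q
    have hp : 0 < p := lt_of_lt_of_le hq hqp
    have hq1 : q < 1 := lt_of_le_of_lt hqp hp1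
    have hcong : ∫⁻ t in Set.Ioi (0:ℝ), ENNReal.ofReal (p ^ t - q ^ t) =
        ∫⁻ t in Set.Ioi (0:ℝ), (ENNReal.ofReal (p ^ t) - ENNReal.ofReal (q ^ t)) := by
      refine setLIntegral_congr_fun measurableSet_Ioi ?_
      intro t ht
      dsimp only
      rw [ENNReal.ofReal_sub _ (Real.rpow_nonneg hq0 t)]
    rw [hcong]
    have hmeasq : Measurable fun t : ℝ => ENNReal.ofReal (q ^ t) :=
      (measurable_const_rpow q hq0).ennreal_ofReal
    have hfin : ∫⁻ t in Set.Ioi (0:ℝ), ENNReal.ofReal (q ^ t) ≠ ⊤ := by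
      rw [gexp_lintegral hq hq1]; exact ENNReal.ofReal_ne_top
    have hle : (fun t : ℝ => ENNReal.ofReal (q ^ t)) ≤ᵐ[volume.restrict (Set.Ioi (0:ℝ))]
        fun t => ENNReal.ofReal (p ^ t) := by
      filter_upwards [ae_restrict_mem measurableSet_Ioi] with t ht
      exact ENNReal.ofReal_le_ofReal (Real.rpow_le_rpow hq0 hqp ht.le)
    rw [lintegral_sub hmeasq hfin hle, gexp_lintegral hp hp1, gexp_lintegral hq hq1,
      ← ENNReal.ofReal_sub _ (le_of_lt (one_div_pos.2 ?_))]
    rw [one_div, Real.log_inv]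
    have := Real.log_neg hq hq1
    linarith

/-- The mixed measure `m = ∫_0^∞ ν_t dt`. -/
noncomputable def gm (ν : ℝ → Measure ℝ) : Measure ℝ :=
  (volume.restrict (Set.Ioi (0:ℝ))).bind (nup ν)

section GM

variable {σ : ℝ → ℝ} {ν : ℝ → Measure ℝ}
variable (hσ : SigmaOK σ)
variable (hν : ∀ t : ℝ, 0 < t → ∀ a b : ℝ, 0 ≤ a → a ≤ b →
      ν t (Set.Ico a b) = ENNReal.ofReal (σ b ^ t - σ a ^ t))
variable (hνneg : ∀ t : ℝ, 0 < t → ν t (Set.Iio 0) = 0)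

include hσ hν hνneg

lemma gm_Ico (a b : ℝ) : gm ν (Set.Ico a b) = ENNReal.ofReal (gphi σ b - gphi σ a) := by
  rcases le_or_gt b a with hba | hab
  · rw [Set.Ico_eq_empty (not_lt.2 hba), measure_empty]
    symm
    rw [ENNReal.ofReal_eq_zero, sub_nonpos]
    exact gphi_mono hσ hba
  · rw [gm, Measure.bind_apply measurableSet_Ico (nup_measurable hσ hν hνneg).aemeasurable]
    have hcong : ∫⁻ t in Set.Ioi (0:ℝ), nup ν t (Set.Ico a b) =
        ∫⁻ t in Set.Ioi (0:ℝ), ENNReal.ofReal (σ (max b 0) ^ t - σ (max a 0) ^ t) := by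
      refine setLIntegral_congr_fun measurableSet_Ioi ?_
      intro t ht
      dsimp only
      rw [nup, if_pos (show (0:ℝ) < t from ht), nu_Ico hσ hν hνneg ht hab.le]
    rw [hcong, lint_sub_rpow (hσ.nonneg _ (le_max_right _ _))
        ((hσ.mono.monotoneOn) (Set.mem_Ici.2 (le_max_right a 0)) (Set.mem_Ici.2 (le_max_right b 0))
          (max_le_max hab.le le_rfl))
        (hσ.lt1 _ (le_max_right _ _))]
    rfl

end GM

section GM2

variable {σ : ℝ → ℝ} {ν : ℝ → Measure ℝ}
variable (hσ : SigmaOK σ)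
variable (hν : ∀ t : ℝ, 0 < t → ∀ a b : ℝ, 0 ≤ a → a ≤ b →
      ν t (Set.Ico a b) = ENNReal.ofReal (σ b ^ t - σ a ^ t))
variable (hνneg : ∀ t : ℝ, 0 < t → ν t (Set.Iio 0) = 0)

include hσ hν hνneg

lemma gm_restrict_eq_map (d : ℝ) :
    (gm ν).restrict (Set.Ici d) =
      Measure.map (grho σ) (volume.restrict (Set.Ioi (gphi σ d))) := by
  haveI : IsLocallyFiniteMeasure ((gm ν).restrict (Set.Ici d)) := by
    constructor
    intro z
    refine ⟨Set.Ico (z-1) (z+1), Ico_mem_nhds (by linarith) (by linarith), ?_⟩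
    calc ((gm ν).restrict (Set.Ici d)) (Set.Ico (z-1) (z+1))
        ≤ gm ν (Set.Ico (z-1) (z+1)) := Measure.restrict_le_self _
      _ = ENNReal.ofReal (gphi σ (z+1) - gphi σ (z-1)) := gm_Ico hσ hν hνneg _ _
      _ < ⊤ := ENNReal.ofReal_lt_top
  refine Measure.ext_of_Ico _ _ ?_
  intro a b hab
  have hLHS : ((gm ν).restrict (Set.Ici d)) (Set.Ico a b) =
      ENNReal.ofReal (gphi σ b - max (gphi σ a) (gphi σ d)) := by
    rw [Measure.restrict_apply measurableSet_Ico]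
    have hset : Set.Ico a b ∩ Set.Ici d = Set.Ico (max a d) b := by
      ext z
      simp only [Set.mem_inter_iff, Set.mem_Ico, Set.mem_Ici, max_le_iff]
      tauto
    rw [hset, gm_Ico hσ hν hνneg, Monotone.map_max (gphi_mono hσ)]
  rw [hLHS, Measure.map_apply (grho_mono hσ).measurable measurableSet_Ico,
    Measure.restrict_apply ((grho_mono hσ).measurable measurableSet_Ico)]
  have hs₀ : 0 ≤ gphi σ d := gphi_nonneg hσ d
  have hset2 : grho σ ⁻¹' Set.Ico a b ∩ Set.Ioi (gphi σ d) =
      Set.Ico (gphi σ a) (gphi σ b) ∩ Set.Ioi (gphi σ d) := by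
    ext s
    simp only [Set.mem_inter_iff, Set.mem_preimage, Set.mem_Ico, Set.mem_Ioi]
    constructor
    · rintro ⟨⟨h1, h2⟩, h3⟩
      have hs : 0 ≤ s := le_trans hs₀ h3.le
      refine ⟨⟨?_, ?_⟩, h3⟩
      · exact le_trans (gphi_mono hσ h1) (gphi_grho_le hσ hs)
      · by_contra hcon
        push_neg at hcon
        exact absurd ((gphi_le_iff hσ hs b).1 hcon) (not_le.2 h2)
    · rintro ⟨⟨h1, h2⟩, h3⟩
      have hs : 0 ≤ s := le_trans hs₀ h3.le
      refine ⟨⟨(gphi_le_iff hσ hs a).1 h1, ?_⟩, h3⟩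
      by_contra hcon
      push_neg at hcon
      exact absurd (le_trans (gphi_mono hσ hcon) (gphi_grho_le hσ hs)) (not_le.2 h2)
  rw [hset2]
  rcases le_or_gt (gphi σ a) (gphi σ d) with hcase | hcase
  · have : Set.Ico (gphi σ a) (gphi σ b) ∩ Set.Ioi (gphi σ d) =
        Set.Ioo (gphi σ d) (gphi σ b) := by
      ext s
      simp only [Set.mem_inter_iff, Set.mem_Ico, Set.mem_Ioi, Set.mem_Ioo]
      constructor
      · rintro ⟨⟨_, h2⟩, h3⟩; exact ⟨h3, h2⟩
      · rintro ⟨h1, h2⟩; exact ⟨⟨le_trans hcase h1.le, h2⟩, h1⟩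
    rw [this, Real.volume_Ioo, max_eq_right hcase]
  · have : Set.Ico (gphi σ a) (gphi σ b) ∩ Set.Ioi (gphi σ d) =
        Set.Ico (gphi σ a) (gphi σ b) := by
      refine Set.inter_eq_left.2 ?_
      intro s hs
      exact lt_of_lt_of_le hcase hs.1
    rw [this, Real.volume_Ico, max_eq_left hcase.le]

lemma greenF_eq {X : Type*} [MetricSpace X] [MeasurableSpace X]
    (μ : Measure X) (x y : X) :
    greenF μ ν x y = ∫⁻ s in Set.Ioi (dstar σ x y), (μ (starBall σ x s))⁻¹ := by
  set d := dist x y with hd_def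
  have hd0 : 0 ≤ d := dist_nonneg
  set G : ℝ → ℝ≥0∞ := fun r => (μ (closedBall x r))⁻¹ with hG_def
  have hGmeas : Measurable G := by
    have hmono : Monotone fun r : ℝ => μ (closedBall x r) :=
      fun r r' hrr' => measure_mono (closedBall_subset_closedBall hrr')
    exact hmono.measurable.inv
  set f : ℝ → ℝ≥0∞ := (Set.Ici d).indicator G with hf_def
  have hfmeas : Measurable f := hGmeas.indicator measurableSet_Ici
  have h1 : greenF μ ν x y = ∫⁻ t in Set.Ioi (0:ℝ), ∫⁻ r, f r ∂(nup ν t) := by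
    rw [greenF]
    refine setLIntegral_congr_fun measurableSet_Ioi ?_
    intro t ht
    dsimp only
    rw [heatK]
    simp only [nup, if_pos (show (0:ℝ) < t from ht)]
    rw [hf_def, lintegral_indicator measurableSet_Ici]
  have h2 : ∫⁻ t in Set.Ioi (0:ℝ), ∫⁻ r, f r ∂(nup ν t) = ∫⁻ r, f r ∂(gm ν) :=
    (Measure.lintegral_bind (nup_measurable hσ hν hνneg).aemeasurable hfmeas.aemeasurable).symm
  have h3 : ∫⁻ r, f r ∂(gm ν) = ∫⁻ r, G r ∂((gm ν).restrict (Set.Ici d)) := by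
    rw [hf_def, lintegral_indicator measurableSet_Ici]
  have h4 : ∫⁻ r, G r ∂((gm ν).restrict (Set.Ici d)) =
      ∫⁻ s in Set.Ioi (gphi σ d), G (grho σ s) := by
    rw [gm_restrict_eq_map hσ hν hνneg d, lintegral_map hGmeas (grho_mono hσ).measurable]
  have h5 : ∫⁻ s in Set.Ioi (gphi σ d), G (grho σ s) =
      ∫⁻ s in Set.Ioi (gphi σ d), (μ (starBall σ x s))⁻¹ := by
    refine setLIntegral_congr_fun measurableSet_Ioi ?_
    intro s hs
    have hs0 : 0 ≤ s := le_trans (gphi_nonneg hσ d) (le_of_lt hs)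
    rw [hG_def]
    simp only []
    rw [starBall_eq_closedBall hσ x hs0]
  rw [h1, h2, h3, h4, h5, dstar_eq_gphi hσ, ← hd_def]

end GM2

/-! ### Integral estimates -/

lemma tail_est {V : ℝ → ℝ≥0∞} (hVmono : Monotone V) {c c' r₀ ρ : ℝ}
    (hc : 1 < c) (hcc' : c < c') (hr₀ : 0 ≤ r₀) (hρ : r₀ < ρ)
    (hgrow : ∀ r : ℝ, r₀ < r → ENNReal.ofReal c' * V r ≤ V (c * r)) :
    ∫⁻ s in Set.Ioi ρ, (V s)⁻¹ ≤
      ENNReal.ofReal ((c - 1) * (c' / (c' - c))) * (ENNReal.ofReal ρ * (V ρ)⁻¹) := by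
  have hρ0 : 0 < ρ := lt_of_le_of_lt hr₀ hρ
  have hc0 : (0:ℝ) < c := lt_trans one_pos hc
  have hc'0 : (0:ℝ) < c' := lt_trans hc0 hcc'
  -- powers stay above r₀
  have hpow_gt : ∀ n : ℕ, r₀ < c ^ n * ρ := by
    intro n
    have h1 : (1:ℝ) ≤ c ^ n := one_le_pow₀ hc.le
    nlinarith
  -- growth of V along powers
  have hVpow : ∀ n : ℕ, (ENNReal.ofReal c') ^ n * V ρ ≤ V (c ^ n * ρ) := by
    intro n
    induction n with
    | zero => simp
    | succ n ih =>
      have h1 : ENNReal.ofReal c' * V (c ^ n * ρ) ≤ V (c * (c ^ n * ρ)) :=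
        hgrow _ (hpow_gt n)
      have h2 : c * (c ^ n * ρ) = c ^ (n+1) * ρ := by ring
      rw [h2] at h1
      calc (ENNReal.ofReal c') ^ (n+1) * V ρ
          = ENNReal.ofReal c' * ((ENNReal.ofReal c') ^ n * V ρ) := by ring
        _ ≤ ENNReal.ofReal c' * V (c ^ n * ρ) := by
            exact mul_le_mul_right ih _
        _ ≤ V (c ^ (n+1) * ρ) := h1
  -- covering of the tail
  have hcover : Set.Ioi ρ ⊆ ⋃ n : ℕ, Set.Ioc (c ^ n * ρ) (c ^ (n+1) * ρ) := by
    intro s hs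
    have hs' : ρ < s := hs
    have hex : ∃ n : ℕ, s ≤ c ^ (n+1) * ρ := by
      obtain ⟨n, hn⟩ := pow_unbounded_of_one_lt (s / ρ) hc
      exact ⟨n, by
        have h1 : s / ρ < c ^ n := hn
        have h2 : c ^ n ≤ c ^ (n+1) := pow_le_pow_right₀ hc.le (Nat.le_succ n)
        have := (div_lt_iff₀ hρ0).1 h1
        nlinarith⟩
    classical
    set n := Nat.find hex with hn_def
    have hn1 : s ≤ c ^ (n+1) * ρ := Nat.find_spec hex
    have hn2 : c ^ n * ρ < s := by
      rcases Nat.eq_zero_or_pos n with h0 | h0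
      · rw [h0]; simpa using hs'
      · obtain ⟨m, hm⟩ := Nat.exists_eq_succ_of_ne_zero h0.ne'
        have hmin := Nat.find_min hex (hn_def ▸ hm ▸ Nat.lt_succ_self m)
        push_neg at hmin
        rw [hm]
        simpa using hmin
    exact Set.mem_iUnion.2 ⟨n, hn2, hn1⟩
  calc ∫⁻ s in Set.Ioi ρ, (V s)⁻¹
      ≤ ∫⁻ s in ⋃ n : ℕ, Set.Ioc (c ^ n * ρ) (c ^ (n+1) * ρ), (V s)⁻¹ :=
        lintegral_mono_set hcover
    _ ≤ ∑' n : ℕ, ∫⁻ s in Set.Ioc (c ^ n * ρ) (c ^ (n+1) * ρ), (V s)⁻¹ :=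
        lintegral_iUnion_le _ _
    _ ≤ ∑' n : ℕ, (ENNReal.ofReal (c / c')) ^ n *
          (ENNReal.ofReal (ρ * (c - 1)) * (V ρ)⁻¹) := by
        refine ENNReal.tsum_le_tsum fun n => ?_
        have hstep1 : ∫⁻ s in Set.Ioc (c ^ n * ρ) (c ^ (n+1) * ρ), (V s)⁻¹ ≤
            ∫⁻ _ in Set.Ioc (c ^ n * ρ) (c ^ (n+1) * ρ), (V (c ^ n * ρ))⁻¹ := by
          refine setLIntegral_mono' measurableSet_Ioc fun s hs => ?_
          exact ENNReal.inv_le_inv' (hVmono hs.1.le)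
        have hstep2 : (∫⁻ _ in Set.Ioc (c ^ n * ρ) (c ^ (n+1) * ρ), (V (c ^ n * ρ))⁻¹)
            = (V (c ^ n * ρ))⁻¹ * ENNReal.ofReal (c ^ n * (ρ * (c - 1))) := by
          rw [setLIntegral_const, Real.volume_Ioc]
          congr 1
          congr 1
          ring
        have hstep3 : (V (c ^ n * ρ))⁻¹ ≤ ((ENNReal.ofReal c') ^ n)⁻¹ * (V ρ)⁻¹ := by
          have h1 := ENNReal.inv_le_inv' (hVpow n)
          rwa [ENNReal.mul_inv (Or.inl (pow_ne_zero n (ENNReal.ofReal_pos.2 hc'0).ne'))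
            (Or.inl (ENNReal.pow_ne_top ENNReal.ofReal_ne_top))] at h1
        calc ∫⁻ s in Set.Ioc (c ^ n * ρ) (c ^ (n+1) * ρ), (V s)⁻¹
            ≤ (V (c ^ n * ρ))⁻¹ * ENNReal.ofReal (c ^ n * (ρ * (c - 1))) := by
              rw [← hstep2]; exact hstep1
          _ ≤ ((ENNReal.ofReal c') ^ n)⁻¹ * (V ρ)⁻¹ *
                ENNReal.ofReal (c ^ n * (ρ * (c - 1))) := by
              exact mul_le_mul_left hstep3 _
          _ = (ENNReal.ofReal (c / c')) ^ n * (ENNReal.ofReal (ρ * (c - 1)) * (V ρ)⁻¹) := by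
              rw [ENNReal.ofReal_mul (pow_nonneg hc0.le n), ENNReal.ofReal_pow hc0.le,
                ENNReal.ofReal_div_of_pos hc'0, div_eq_mul_inv, mul_pow,
                ← ENNReal.inv_pow]
              ring
    _ = (1 - ENNReal.ofReal (c / c'))⁻¹ * (ENNReal.ofReal (ρ * (c - 1)) * (V ρ)⁻¹) := by
        rw [ENNReal.tsum_mul_right, ENNReal.tsum_geometric]
    _ = ENNReal.ofReal ((c - 1) * (c' / (c' - c))) * (ENNReal.ofReal ρ * (V ρ)⁻¹) := by
        have h1 : (1:ℝ≥0∞) - ENNReal.ofReal (c / c') = ENNReal.ofReal (1 - c / c') := by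
          rw [ENNReal.ofReal_sub 1 (div_pos hc0 hc'0).le, ENNReal.ofReal_one]
        have h2 : (0:ℝ) < 1 - c / c' := by
          rw [sub_pos, div_lt_one hc'0]; exact hcc'
        have h3 : (1 - ENNReal.ofReal (c / c'))⁻¹ = ENNReal.ofReal (c' / (c' - c)) := by
          rw [h1, ← ENNReal.ofReal_inv_of_pos h2]
          congr 1
          field_simp
        rw [h3, ENNReal.ofReal_mul (sub_nonneg.2 hc.le),
          ENNReal.ofReal_mul hρ0.le]
        ring

lemma head_est {V : ℝ → ℝ≥0∞} (hVmono : Monotone V) {c c'' r : ℝ} (hc : 1 < c)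
    (hr0 : 0 < r) (hc''0 : 0 < c'')
    (hbnd : V (c * r) ≤ ENNReal.ofReal c'' * V r) :
    ENNReal.ofReal ((c - 1) / c'') * (ENNReal.ofReal r * (V r)⁻¹) ≤
      ∫⁻ s in Set.Ioi r, (V s)⁻¹ := by
  have hrc : r < c * r := by nlinarith
  have h1 : ENNReal.ofReal ((c - 1) / c'') * (ENNReal.ofReal r * (V r)⁻¹) ≤
      (V (c * r))⁻¹ * ENNReal.ofReal (c * r - r) := by
    have hinv : (ENNReal.ofReal c'')⁻¹ * (V r)⁻¹ ≤ (V (c * r))⁻¹ := by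
      have := ENNReal.inv_le_inv' hbnd
      rwa [ENNReal.mul_inv (Or.inl (ENNReal.ofReal_pos.2 hc''0).ne')
        (Or.inl ENNReal.ofReal_ne_top)] at this
    calc ENNReal.ofReal ((c - 1) / c'') * (ENNReal.ofReal r * (V r)⁻¹)
        = ((ENNReal.ofReal c'')⁻¹ * (V r)⁻¹) * ENNReal.ofReal (c * r - r) := by
          rw [div_eq_mul_inv, ENNReal.ofReal_mul (sub_nonneg.2 hc.le),
            ENNReal.ofReal_inv_of_pos hc''0,
            show c * r - r = (c - 1) * r by ring,
            ENNReal.ofReal_mul (sub_nonneg.2 hc.le)]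
          ring
      _ ≤ (V (c * r))⁻¹ * ENNReal.ofReal (c * r - r) := mul_le_mul_left hinv _
  have h2 : (V (c * r))⁻¹ * ENNReal.ofReal (c * r - r) ≤
      ∫⁻ s in Set.Ioc r (c * r), (V s)⁻¹ := by
    have := setLIntegral_const (μ := volume) (s := Set.Ioc r (c * r)) ((V (c * r))⁻¹)
    rw [Real.volume_Ioc] at this
    rw [← this]
    refine setLIntegral_mono' measurableSet_Ioc fun s hs => ?_
    exact ENNReal.inv_le_inv' (hVmono hs.2)
  have h3 : ∫⁻ s in Set.Ioc r (c * r), (V s)⁻¹ ≤ ∫⁻ s in Set.Ioi r, (V s)⁻¹ :=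
    lintegral_mono_set Set.Ioc_subset_Ioi_self
  exact le_trans h1 (le_trans h2 h3)


end GreenAux

open Set in
theorem statement_12
    {X : Type*} [MetricSpace X] [TopologicalSpace.SeparableSpace X]
    [MeasurableSpace X] [BorelSpace X]
    (hd : ∀ x y z : X, dist x z ≤ max (dist x y) (dist y z))
    (hcb : ∀ (x : X) (r : ℝ), IsCompact (closedBall x r))
    (μ : Measure X)
    (hμpos : ∀ (x : X) (r : ℝ), 0 < r → 0 < μ (closedBall x r))
    (hμfin : ∀ (x : X) (r : ℝ), 0 < r → μ (closedBall x r) < ⊤)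
    (σ : ℝ → ℝ)
    (hσmono : StrictMonoOn σ (Set.Ici 0))
    (hσrange : ∀ r : ℝ, 0 ≤ r → σ r ∈ Set.Icc (0:ℝ) 1)
    (hσlc : ∀ r : ℝ, 0 < r → ContinuousWithinAt σ (Set.Iic r) r)
    (hσzero : Tendsto σ (nhdsWithin 0 (Set.Ioi 0)) (nhds 0))
    (hσtop : Tendsto σ atTop (nhds 1))
    (ν : ℝ → Measure ℝ)
    (hν : ∀ t : ℝ, 0 < t → ∀ a b : ℝ, 0 ≤ a → a ≤ b →
      ν t (Set.Ico a b) = ENNReal.ofReal (σ b ^ t - σ a ^ t))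
    (hνneg : ∀ t : ℝ, 0 < t → ν t (Set.Iio 0) = 0)
    (x : X) (c c' c'' r₀ : ℝ)
    (hc : 1 < c) (hcc' : c < c') (hc'c'' : c' < c'') (hr₀ : 0 ≤ r₀)
    (hV : ∀ r : ℝ, r₀ < r →
      ENNReal.ofReal c' * μ (starBall σ x r) ≤ μ (starBall σ x (c * r)) ∧
      μ (starBall σ x (c * r)) ≤ ENNReal.ofReal c'' * μ (starBall σ x r)) :
    (∀ a : ℝ, 0 < a → (∫⁻ s in Set.Ioi a, (μ (starBall σ x s))⁻¹) < ⊤) ∧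
    ∃ k₁ k₂ : ℝ, 0 < k₁ ∧ 0 < k₂ ∧
      ∀ y : X, r₀ < dstar σ x y →
        ENNReal.ofReal k₁ *
            (ENNReal.ofReal (dstar σ x y) / μ (starBall σ x (dstar σ x y))) ≤
          greenF μ ν x y ∧
        greenF μ ν x y ≤
          ENNReal.ofReal k₂ *
            (ENNReal.ofReal (dstar σ x y) / μ (starBall σ x (dstar σ x y))) := by
  have hσ : SigmaOK σ := sigmaOK_of σ hσmono hσrange hσlc hσzero hσtop
  have hc0 : (0:ℝ) < c := lt_trans one_pos hc
  have hc'0 : (0:ℝ) < c' := lt_trans hc0 hcc'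
  have hc''0 : (0:ℝ) < c'' := lt_trans hc'0 hc'c''
  set V : ℝ → ℝ≥0∞ := fun s => μ (starBall σ x s) with hV_def
  have hVmono : Monotone V := fun s s' hss' =>
    measure_mono (fun z hz => le_trans hz hss')
  have hVpos : ∀ s : ℝ, 0 < s → 0 < V s := by
    intro s hs
    show 0 < μ (starBall σ x s)
    rw [starBall_eq_closedBall hσ x hs.le]
    exact hμpos x _ (grho_pos hσ hs)
  have hVfin : ∀ s : ℝ, 0 < s → V s < ⊤ := by
    intro s hs
    show μ (starBall σ x s) < ⊤
    rw [starBall_eq_closedBall hσ x hs.le]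
    exact hμfin x _ (grho_pos hσ hs)
  have hgrow : ∀ r : ℝ, r₀ < r → ENNReal.ofReal c' * V r ≤ V (c * r) :=
    fun r hr => (hV r hr).1
  constructor
  · -- transience
    intro a ha
    show (∫⁻ s in Set.Ioi a, (V s)⁻¹) < ⊤
    have htail : ∀ ρ : ℝ, r₀ < ρ → (∫⁻ s in Set.Ioi ρ, (V s)⁻¹) < ⊤ := by
      intro ρ hρ
      have hρ0 : 0 < ρ := lt_of_le_of_lt hr₀ hρ
      refine lt_of_le_of_lt (tail_est hVmono hc hcc' hr₀ hρ hgrow) ?_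
      exact ENNReal.mul_lt_top ENNReal.ofReal_lt_top
        (ENNReal.mul_lt_top ENNReal.ofReal_lt_top
          (ENNReal.inv_lt_top.2 (hVpos ρ hρ0)))
    rcases lt_or_ge r₀ a with hra | hra
    · exact htail a hra
    · set ρ := r₀ + 1 with hρ_def
      have haρ : a ≤ ρ := by rw [hρ_def]; linarith
      have hsplit : Set.Ioi a = Set.Ioc a ρ ∪ Set.Ioi ρ :=
        (Set.Ioc_union_Ioi_eq_Ioi haρ).symm
      rw [hsplit, lintegral_union measurableSet_Ioi (Set.Ioc_disjoint_Ioi le_rfl)]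
      refine ENNReal.add_lt_top.2 ⟨?_, htail ρ (by rw [hρ_def]; linarith)⟩
      have hbound : (∫⁻ s in Set.Ioc a ρ, (V s)⁻¹) ≤ (V a)⁻¹ * volume (Set.Ioc a ρ) := by
        rw [← setLIntegral_const]
        refine setLIntegral_mono' measurableSet_Ioc fun s hs => ?_
        exact ENNReal.inv_le_inv' (hVmono hs.1.le)
      refine lt_of_le_of_lt hbound ?_
      rw [Real.volume_Ioc]
      exact ENNReal.mul_lt_top (ENNReal.inv_lt_top.2 (hVpos a ha)) ENNReal.ofReal_lt_top
  · refine ⟨(c - 1) / c'', (c - 1) * (c' / (c' - c)),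
      div_pos (by linarith) hc''0,
      mul_pos (by linarith) (div_pos hc'0 (by linarith)), ?_⟩
    intro y hry
    set r : ℝ := dstar σ x y with hr_def
    have hr0 : 0 < r := lt_of_le_of_lt hr₀ hry
    have hgreen : greenF μ ν x y = ∫⁻ s in Set.Ioi r, (V s)⁻¹ :=
      greenF_eq hσ hν hνneg μ x y
    have hdiv : ENNReal.ofReal r / μ (starBall σ x r) = ENNReal.ofReal r * (V r)⁻¹ := by
      rw [div_eq_mul_inv]
    constructor
    · rw [hgreen, hdiv]
      exact head_est hVmono hc hr0 hc''0 (hV r hry).2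
    · rw [hgreen, hdiv]
      exact tail_est hVmono hc hcc' hr₀ hry hgrow
end

section
/- For every ball C ⊊ X with parent ball B: Q_s f_C = f_C for all 0 < s < ρ(B), Q_s f_C = 0 for all s ≥ ρ(B), and consequently P f_C = σ(ρ(B)) · f_C pointwise, i.e. f_C is an eigenfunction of the isotropic Markov operator P with eigenvalue σ(ρ(B)). Moreover the system of these functions is complete: if μ(X) = ∞, the linear span of {f_C : C a ball with C ⊊ X} is dense in L²(X,μ), while if μ(X) < ∞ the linear span of this family together with the constant function 1 is dense in L²(X,μ). -/
open MeasureTheory Metric Filter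
open scoped ENNReal Classical

/-- A (closed) ball of positive radius. -/
def IsBallSet {X : Type*} [MetricSpace X] (B : Set X) : Prop :=
  ∃ (x : X) (r : ℝ), 0 < r ∧ B = closedBall x r

/-- The minimal radius `ρ(B)` of a ball. -/
noncomputable def minRad {X : Type*} [MetricSpace X] (B : Set X) : ℝ :=
  sInf {r : ℝ | 0 < r ∧ ∃ x : X, B = closedBall x r}

/-- `B` is the parent ball of `C`: the minimal ball properly containing `C`. -/
def IsParent {X : Type*} [MetricSpace X] (B C : Set X) : Prop :=
  IsBallSet B ∧ C ⊂ B ∧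
    ∀ A : Set X, IsBallSet A → C ⊆ A → A ⊆ B → A = C ∨ A = B

/-- The eigenfunction `f_C = μ(C)⁻¹ 1_C − μ(B)⁻¹ 1_B` attached to a ball `C`
with parent `B`. -/
noncomputable def eigenFn {X : Type*} [MetricSpace X] [MeasurableSpace X]
    (μ : Measure X) (C B : Set X) (x : X) : ℝ :=
  (μ C).toReal⁻¹ * C.indicator (fun _ => (1:ℝ)) x -
    (μ B).toReal⁻¹ * B.indicator (fun _ => (1:ℝ)) x


section Ultra
variable {X : Type*} [MetricSpace X]

/-- recenter a closed ball at any of its points (ultrametric) -/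
theorem um_recenter (hd : ∀ x y z : X, dist x z ≤ max (dist x y) (dist y z))
    {x y : X} {r : ℝ} (hy : y ∈ closedBall x r) : closedBall y r = closedBall x r := by
  ext w
  simp only [mem_closedBall] at *
  constructor
  · intro hw
    calc dist w x ≤ max (dist w y) (dist y x) := hd _ _ _
    _ ≤ r := max_le hw hy
  · intro hw
    rw [dist_comm]
    calc dist y w ≤ max (dist y x) (dist x w) := hd _ _ _
    _ ≤ r := max_le hy (by rwa [dist_comm] at hw)

theorem um_subset (hd : ∀ x y z : X, dist x z ≤ max (dist x y) (dist y z))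
    {x y : X} {r s : ℝ} (hrs : r ≤ s)
    (hne : (closedBall x r ∩ closedBall y s).Nonempty) :
    closedBall x r ⊆ closedBall y s := by
  obtain ⟨z, hz1, hz2⟩ := hne
  have h1 : closedBall z r = closedBall x r := um_recenter hd hz1
  have h2 : closedBall z s = closedBall y s := um_recenter hd hz2
  rw [← h1, ← h2]
  exact closedBall_subset_closedBall hrs
end Ultra

section MinRad
variable {X : Type*} [MetricSpace X]
variable (hd : ∀ x y z : X, dist x z ≤ max (dist x y) (dist y z))

/-- the set of radii of a ball -/
def radSet (B : Set X) : Set ℝ := {r : ℝ | 0 < r ∧ ∃ x : X, B = closedBall x r}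

theorem minRad_eq (B : Set X) : minRad B = sInf (radSet B) := rfl

theorem radSet_nonempty {B : Set X} (hB : IsBallSet B) : (radSet B).Nonempty := by
  obtain ⟨x, r, hr, hBr⟩ := hB
  exact ⟨r, hr, x, hBr⟩

theorem radSet_bddBelow (B : Set X) : BddBelow (radSet B) :=
  ⟨0, fun r hr => le_of_lt hr.1⟩

include hd in
/-- a ball recentred at any of its points with any of its radii -/
theorem ball_eq_of_mem_radSet {B : Set X} {x : X} {r : ℝ} (hx : x ∈ B) (hr : r ∈ radSet B) :
    B = closedBall x r := by
  obtain ⟨-, c, hc⟩ := hr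
  rw [hc] at hx ⊢
  exact (um_recenter hd hx).symm

include hd in
theorem ball_eq_closedBall_minRad {B : Set X} (hB : IsBallSet B) {x : X} (hx : x ∈ B) :
    B = closedBall x (minRad B) := by
  obtain ⟨r₀, hr₀⟩ := radSet_nonempty hB
  apply Set.Subset.antisymm
  · intro w hw
    have : ∀ r ∈ radSet B, dist w x ≤ r := by
      intro r hr
      have := ball_eq_of_mem_radSet hd hx hr
      rw [this] at hw
      exact hw
    exact le_csInf ⟨r₀, hr₀⟩ this
  · intro w hw
    have h1 : B = closedBall x r₀ := ball_eq_of_mem_radSet hd hx hr₀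
    rw [h1]
    exact closedBall_subset_closedBall (csInf_le (radSet_bddBelow B) hr₀) hw

theorem minRad_nonneg (B : Set X) (hB : IsBallSet B) : 0 ≤ minRad B :=
  le_csInf (radSet_nonempty hB) (fun r hr => le_of_lt hr.1)

theorem ballSet_nonempty {B : Set X} (hB : IsBallSet B) : B.Nonempty := by
  obtain ⟨x, r, hr, hBr⟩ := hB
  exact ⟨x, by rw [hBr]; exact mem_closedBall_self hr.le⟩

include hd in
/-- if `C ⊊ B` for balls then `minRad B > 0` -/
theorem minRad_pos_of_ssub {C B : Set X} (hB : IsBallSet B) (hC : C.Nonempty)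
    (hCB : C ⊂ B) : 0 < minRad B := by
  rcases lt_or_eq_of_le (minRad_nonneg B hB) with h | h
  · exact h
  · exfalso
    obtain ⟨c, hc⟩ := hC
    have hcB : c ∈ B := hCB.1 hc
    have hBc : B = closedBall c (minRad B) := ball_eq_closedBall_minRad hd hB hcB
    rw [← h] at hBc
    have hBsing : B = {c} := by
      rw [hBc]; ext w; simp [mem_closedBall, dist_le_zero, eq_comm]
    obtain ⟨b, hbB, hbC⟩ := Set.exists_of_ssubset hCB
    rw [hBsing] at hbB hcB
    have : C ⊆ {c} := hBsing ▸ hCB.1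
    simp only [Set.mem_singleton_iff] at hbB
    exact hbC (hbB ▸ (by simpa using hc))
end MinRad

section Eigen
variable {X : Type*} [MetricSpace X] [MeasurableSpace X] [BorelSpace X]
variable (hd : ∀ x y z : X, dist x z ≤ max (dist x y) (dist y z))
variable (μ : Measure X)
variable (hμpos : ∀ (x : X) (r : ℝ), 0 < r → 0 < μ (closedBall x r))
variable (hμfin : ∀ (x : X) (r : ℝ), 0 < r → μ (closedBall x r) < ⊤)

theorem ball_measurable {B : Set X} (hB : IsBallSet B) : MeasurableSet B := by
  obtain ⟨x, r, -, rfl⟩ := hB; exact measurableSet_closedBall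

include hμpos in
theorem ball_meas_pos {B : Set X} (hB : IsBallSet B) : 0 < μ B := by
  obtain ⟨x, r, hr, rfl⟩ := hB; exact hμpos x r hr

include hμfin in
theorem ball_meas_fin {B : Set X} (hB : IsBallSet B) : μ B < ⊤ := by
  obtain ⟨x, r, hr, rfl⟩ := hB; exact hμfin x r hr

theorem eigenFn_eq (C B : Set X) : eigenFn μ C B = fun x =>
    C.indicator (fun _ => (μ C).toReal⁻¹) x - B.indicator (fun _ => (μ B).toReal⁻¹) x := by
  funext x
  unfold eigenFn
  by_cases hC : x ∈ C <;> by_cases hB : x ∈ B <;>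
    simp [Set.indicator_apply, hC, hB]

variable {C B : Set X} (hC : IsBallSet C) (hP : IsParent B C)

include hd hP hC in
/-- geometric dichotomy: a ball of radius `< minRad B` meeting `C` is inside `C` -/
theorem small_ball_sub_C {x : X} {s : ℝ} (hs : 0 < s) (hsB : s < minRad B)
    (hne : (closedBall x s ∩ C).Nonempty) : closedBall x s ⊆ C := by
  obtain ⟨y, hyA, hyC⟩ := hne
  have hA : closedBall x s = closedBall y s := (um_recenter hd hyA).symm
  rcases le_or_gt s (minRad C) with h | h
  · rw [hA]
    have : C = closedBall y (minRad C) := ball_eq_closedBall_minRad hd hC hyC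
    rw [this]
    exact closedBall_subset_closedBall h
  · -- C ⊆ closedBall y s ⊆ B, use minimality
    have hCsub : C ⊆ closedBall y s := by
      have : C = closedBall y (minRad C) := ball_eq_closedBall_minRad hd hC hyC
      rw [this]
      exact closedBall_subset_closedBall h.le
    have hsubB : closedBall y s ⊆ B := by
      have hyB : y ∈ B := hP.2.1.1 hyC
      have : B = closedBall y (minRad B) := ball_eq_closedBall_minRad hd hP.1 hyB
      rw [this]
      exact closedBall_subset_closedBall hsB.le
    rcases hP.2.2 (closedBall y s) ⟨y, s, hs, rfl⟩ hCsub hsubB with h1 | h1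
    · rw [hA, h1]
    · exfalso
      have : s ∈ radSet B := ⟨hs, y, h1.symm⟩
      exact absurd (csInf_le (radSet_bddBelow B) this) (not_le.2 hsB)

include hd hP in
theorem small_ball_sub_B {x : X} {s : ℝ} (hsB : s < minRad B)
    (hne : (closedBall x s ∩ B).Nonempty) : closedBall x s ⊆ B := by
  obtain ⟨y, hyA, hyB⟩ := hne
  have hA : closedBall x s = closedBall y s := (um_recenter hd hyA).symm
  have : B = closedBall y (minRad B) := ball_eq_closedBall_minRad hd hP.1 hyB
  rw [hA, this]
  exact closedBall_subset_closedBall hsB.le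

include hd hμpos hμfin hC hP in
theorem avg_eigen_lt {s : ℝ} (hs : 0 < s) (hsB : s < minRad B) (x : X) :
    avgOp μ s (eigenFn μ C B) x = eigenFn μ C B x := by
  have hCm : MeasurableSet C := ball_measurable hC
  have hBm : MeasurableSet B := ball_measurable hP.1
  set A := closedBall x s with hAdef
  have hAfin : μ A < ⊤ := hμfin x s hs
  have hApos : 0 < μ A := hμpos x s hs
  have hAtr : (μ A).toReal ≠ 0 := by
    simp [ENNReal.toReal_eq_zero_iff, hApos.ne', hAfin.ne]
  set c₁ := (μ C).toReal⁻¹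
  set c₂ := (μ B).toReal⁻¹
  have hint : ∫ y in A, eigenFn μ C B y ∂μ =
      (μ (A ∩ C)).toReal • c₁ - (μ (A ∩ B)).toReal • c₂ := by
    rw [show (fun y => eigenFn μ C B y) = fun y =>
        C.indicator (fun _ => c₁) y - B.indicator (fun _ => c₂) y from by
      rw [← eigenFn_eq]]
    rw [integral_sub]
    · rw [setIntegral_indicator hCm, setIntegral_indicator hBm,
        setIntegral_const, setIntegral_const, measureReal_def, measureReal_def]
    · exact (integrableOn_const hAfin.ne).indicator hCm
    · exact (integrableOn_const hAfin.ne).indicator hBm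
  by_cases hxC : x ∈ C
  · have hAC : A ⊆ C := small_ball_sub_C hd hC hP hs hsB ⟨x, mem_closedBall_self hs.le, hxC⟩
    have hAB : A ⊆ B := hAC.trans hP.2.1.1
    rw [avgOp, hint, Set.inter_eq_left.2 hAC, Set.inter_eq_left.2 hAB]
    rw [eigenFn_eq]
    simp only [Set.indicator_of_mem hxC, Set.indicator_of_mem (hP.2.1.1 hxC), smul_eq_mul]
    rw [← mul_sub, inv_mul_cancel_left₀ hAtr]
  · by_cases hxB : x ∈ B
    · have hAB : A ⊆ B := small_ball_sub_B hd hP hsB ⟨x, mem_closedBall_self hs.le, hxB⟩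
      have hAC : A ∩ C = ∅ := by
        by_contra h
        have hne : (A ∩ C).Nonempty := Set.nonempty_iff_ne_empty.2 h
        exact hxC (small_ball_sub_C hd hC hP hs hsB hne (mem_closedBall_self hs.le))
      rw [avgOp, hint, hAC, Set.inter_eq_left.2 hAB]
      rw [eigenFn_eq]
      simp only [Set.indicator_of_notMem hxC, Set.indicator_of_mem hxB,
        measure_empty, ENNReal.toReal_zero, zero_smul, zero_sub, smul_eq_mul]
      rw [zero_mul, zero_sub, mul_neg, inv_mul_cancel_left₀ hAtr]
    · have hAB : A ∩ B = ∅ := by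
        by_contra h
        have hne : (A ∩ B).Nonempty := Set.nonempty_iff_ne_empty.2 h
        exact hxB (small_ball_sub_B hd hP hsB hne (mem_closedBall_self hs.le))
      have hAC : A ∩ C = ∅ := by
        apply Set.eq_empty_of_subset_empty
        rw [← hAB]
        exact Set.inter_subset_inter_right _ hP.2.1.1
      rw [avgOp, hint, hAC, hAB]
      rw [eigenFn_eq]
      simp [Set.indicator_of_notMem hxC, Set.indicator_of_notMem hxB]

include hd hμpos hμfin hC hP in
theorem avg_eigen_ge {s : ℝ} (hsB : minRad B ≤ s) (x : X) :
    avgOp μ s (eigenFn μ C B) x = 0 := by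
  have hCm : MeasurableSet C := ball_measurable hC
  have hBm : MeasurableSet B := ball_measurable hP.1
  have hCpos : 0 < μ C := ball_meas_pos μ hμpos hC
  have hCfin : μ C < ⊤ := ball_meas_fin μ hμfin hC
  have hBpos : 0 < μ B := ball_meas_pos μ hμpos hP.1
  have hBfin : μ B < ⊤ := ball_meas_fin μ hμfin hP.1
  set A := closedBall x s with hAdef
  set c₁ := (μ C).toReal⁻¹
  set c₂ := (μ B).toReal⁻¹
  have hAfin : μ A < ⊤ := by
    have h0 : 0 < minRad B :=
      minRad_pos_of_ssub hd hP.1 (ballSet_nonempty hC) hP.2.1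
    exact hμfin x s (h0.trans_le hsB)
  have hint : ∫ y in A, eigenFn μ C B y ∂μ =
      (μ (A ∩ C)).toReal • c₁ - (μ (A ∩ B)).toReal • c₂ := by
    rw [show (fun y => eigenFn μ C B y) = fun y =>
        C.indicator (fun _ => c₁) y - B.indicator (fun _ => c₂) y from by
      rw [← eigenFn_eq]]
    rw [integral_sub]
    · rw [setIntegral_indicator hCm, setIntegral_indicator hBm,
        setIntegral_const, setIntegral_const, measureReal_def, measureReal_def]
    · exact (integrableOn_const hAfin.ne).indicator hCm
    · exact (integrableOn_const hAfin.ne).indicator hBm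
  by_cases hAB : (A ∩ B).Nonempty
  · obtain ⟨y, hyA, hyB⟩ := hAB
    have hBsub : B ⊆ A := by
      have h1 : B = closedBall y (minRad B) := ball_eq_closedBall_minRad hd hP.1 hyB
      have h2 : A = closedBall y s := (um_recenter hd hyA).symm
      rw [h1, h2]
      exact closedBall_subset_closedBall hsB
    have hCsub : C ⊆ A := (hP.2.1.1).trans hBsub
    rw [avgOp, hint, Set.inter_eq_right.2 hCsub, Set.inter_eq_right.2 hBsub]
    have h1 : (μ C).toReal • c₁ = 1 := by
      rw [smul_eq_mul, mul_inv_cancel₀]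
      simp [ENNReal.toReal_eq_zero_iff, hCpos.ne', hCfin.ne]
    have h2 : (μ B).toReal • c₂ = 1 := by
      rw [smul_eq_mul, mul_inv_cancel₀]
      simp [ENNReal.toReal_eq_zero_iff, hBpos.ne', hBfin.ne]
    rw [h1, h2]
    simp
  · have hABe : A ∩ B = ∅ := Set.not_nonempty_iff_eq_empty.1 hAB
    have hACe : A ∩ C = ∅ := by
      apply Set.eq_empty_of_subset_empty
      rw [← hABe]
      exact Set.inter_subset_inter_right _ hP.2.1.1
    rw [avgOp, hint, hACe, hABe]
    simp

end Eigen

section Iso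
variable {X : Type*} [MetricSpace X] [MeasurableSpace X] [BorelSpace X]

theorem iso_eigen (hd : ∀ x y z : X, dist x z ≤ max (dist x y) (dist y z))
    (μ : Measure X)
    (hμpos : ∀ (x : X) (r : ℝ), 0 < r → 0 < μ (closedBall x r))
    (hμfin : ∀ (x : X) (r : ℝ), 0 < r → μ (closedBall x r) < ⊤)
    {C B : Set X} (hC : IsBallSet C) (hP : IsParent B C)
    (σ : ℝ → ℝ) (hσ0 : σ 0 = 0) (hσnn : 0 ≤ σ (minRad B))
    (ν : Measure ℝ)
    (hν : ∀ a b : ℝ, 0 ≤ a → a ≤ b → ν (Set.Ico a b) = ENNReal.ofReal (σ b - σ a))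
    (hν0 : ν {0} = 0) (x : X) :
    isoOp μ ν (eigenFn μ C B) x = σ (minRad B) * eigenFn μ C B x := by
  set ρ := minRad B with hρdef
  have hρ : 0 < ρ := minRad_pos_of_ssub hd hP.1 (ballSet_nonempty hC) hP.2.1
  have hae : ∀ᵐ r ∂ν, r ≠ 0 := by
    rw [ae_iff]
    simpa using hν0
  have key : isoOp μ ν (eigenFn μ C B) x =
      ∫ r in Set.Ici (0:ℝ), (Set.Ioo 0 ρ).indicator (fun _ => eigenFn μ C B x) r ∂ν := by
    rw [isoOp]
    apply setIntegral_congr_ae measurableSet_Ici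
    filter_upwards [hae] with r hr0 hrIci
    rcases lt_or_ge r ρ with h | h
    · have hrpos : 0 < r := lt_of_le_of_ne hrIci (Ne.symm hr0)
      rw [avg_eigen_lt hd μ hμpos hμfin hC hP hrpos h x,
        Set.indicator_of_mem (Set.mem_Ioo.mpr ⟨hrpos, h⟩)]
    · rw [avg_eigen_ge hd μ hμpos hμfin hC hP h x,
        Set.indicator_of_notMem (by simp [Set.mem_Ioo]; intro _; exact h)]
  have hinter : Set.Ioo 0 ρ ∩ Set.Ici 0 = Set.Ioo 0 ρ :=
    Set.inter_eq_left.2 (fun r hr => le_of_lt hr.1)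
  rw [key, integral_indicator_const _ measurableSet_Ioo, measureReal_def,
    Measure.restrict_apply measurableSet_Ioo, hinter]
  have hIoo : ν (Set.Ioo 0 ρ) = ENNReal.ofReal (σ ρ) := by
    have h1 : ν (Set.Ico 0 ρ) = ENNReal.ofReal (σ ρ) := by
      rw [hν 0 ρ le_rfl hρ.le, hσ0, sub_zero]
    have h2 : Set.Ioo 0 ρ ∪ {0} = Set.Ico 0 ρ := Set.Ioo_union_left hρ
    have h3 : ν (Set.Ioo 0 ρ ∪ {0}) = ν (Set.Ioo 0 ρ) + ν {0} := by
      apply measure_union _ (measurableSet_singleton 0)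
      simp [Set.disjoint_singleton_right]
    rw [h2] at h3
    rw [h1] at h3
    rw [hν0, add_zero] at h3
    exact h3.symm
  rw [hIoo, ENNReal.toReal_ofReal hσnn, smul_eq_mul]

end Iso

section Parent
variable {X : Type*} [MetricSpace X]

theorem parent_exists (hd : ∀ x y z : X, dist x z ≤ max (dist x y) (dist y z))
    (hcb : ∀ (x : X) (r : ℝ), IsCompact (closedBall x r))
    {C : Set X} (hC : IsBallSet C) (hCne : C ≠ Set.univ) : ∃ B, IsParent B C := by
  obtain ⟨x, r, hr, hCr⟩ := hC
  have hx : x ∈ C := hCr ▸ mem_closedBall_self hr.le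
  set S : Set ℝ := {t : ℝ | closedBall x t = C} with hSdef
  have hrS : r ∈ S := hCr.symm
  have hSne : S.Nonempty := ⟨r, hrS⟩
  obtain ⟨z, hz⟩ := Set.ne_univ_iff_exists_notMem C |>.1 hCne
  have hSbdd : BddAbove S := by
    refine ⟨dist z x, fun t ht => ?_⟩
    by_contra h
    push_neg at h
    exact hz (ht ▸ (mem_closedBall.2 h.le))
  set R := sSup S with hRdef
  have hrR : r ≤ R := le_csSup hSbdd hrS
  have hR0 : 0 < R := lt_of_lt_of_le hr hrR
  have hCsubR : C ⊆ closedBall x R := by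
    rw [hCr]; exact closedBall_subset_closedBall hrR
  by_cases hRC : closedBall x R = C
  · -- C is itself the ball of radius R; find the next distance by compactness
    set D : Set ℝ := {t : ℝ | ∃ y : X, y ∉ C ∧ dist y x = t} with hDdef
    have hDne : D.Nonempty := ⟨dist z x, z, hz, rfl⟩
    have hDbdd : BddBelow D := ⟨0, fun t ⟨y, _, hy⟩ => hy ▸ dist_nonneg⟩
    have hDgtR : ∀ t ∈ D, R < t := by
      rintro t ⟨y, hyC, rfl⟩
      by_contra h
      push_neg at h
      exact hyC (hRC ▸ mem_closedBall.2 h)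
    set R₂ := sInf D with hR₂def
    have hyn : ∀ n : ℕ, ∃ y : X, y ∉ C ∧ dist y x < R₂ + 1/(n+1) := by
      intro n
      have hlt : R₂ < R₂ + 1/(n+1) := lt_add_of_pos_right _ (by positivity)
      obtain ⟨t, htD, htlt⟩ := exists_lt_of_csInf_lt hDne hlt
      obtain ⟨y, hyC, rfl⟩ := htD
      exact ⟨y, hyC, htlt⟩
    choose y hyC hylt using hyn
    have hymem : ∀ n : ℕ, y n ∈ closedBall x (R₂ + 1) := by
      intro n
      apply mem_closedBall.2
      have h1 : (1:ℝ)/(n+1) ≤ 1 := by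
        rw [div_le_one (by positivity)]
        simp
      exact le_trans (hylt n).le (by linarith)
    obtain ⟨ystar, hystar, φ, hφ, hconv⟩ := (hcb x (R₂ + 1)).tendsto_subseq hymem
    have hlow : ∀ n : ℕ, R₂ ≤ dist (y n) x := fun n => csInf_le hDbdd ⟨y n, hyC n, rfl⟩
    have hup : ∀ n : ℕ, dist (y (φ n)) x ≤ R₂ + 1/(n+1) := by
      intro n
      refine le_trans (hylt (φ n)).le (add_le_add_right ?_ _)
      apply one_div_le_one_div_of_le (by positivity)
      have hnφ : n ≤ φ n := hφ.le_apply
      have : ((n:ℝ)+1) ≤ ((φ n : ℝ)+1) := by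
        have := (Nat.cast_le (α := ℝ)).2 hnφ
        linarith
      linarith [this]
    have h2 : Tendsto (fun n => dist (y (φ n)) x) atTop (nhds R₂) := by
      have hc : Tendsto (fun n : ℕ => R₂ + 1/((n:ℝ)+1)) atTop (nhds (R₂ + 0)) :=
        tendsto_const_nhds.add tendsto_one_div_add_atTop_nhds_zero_nat
      rw [add_zero] at hc
      exact tendsto_of_tendsto_of_tendsto_of_le_of_le tendsto_const_nhds hc
        (fun n => hlow (φ n)) hup
    have h1 : Tendsto (fun n => dist (y (φ n)) x) atTop (nhds (dist ystar x)) :=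
      hconv.dist tendsto_const_nhds
    have hdstar : dist ystar x = R₂ := tendsto_nhds_unique h1 h2
    have hystarC : ystar ∉ C := by
      intro h
      have hyR : dist ystar x ≤ R := mem_closedBall.1 (hRC ▸ h)
      obtain ⟨N, hN⟩ := (Metric.tendsto_atTop.1 hconv) R hR0
      have hgt : R < dist (y (φ N)) x := hDgtR _ ⟨y (φ N), hyC (φ N), rfl⟩
      have := hd (y (φ N)) ystar x
      have hd2 : dist (y (φ N)) x ≤ max (dist (y (φ N)) ystar) (dist ystar x) := this
      rcases max_cases (dist (y (φ N)) ystar) (dist ystar x) with ⟨heq, -⟩ | ⟨heq, -⟩ <;>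
        rw [heq] at hd2
      · exact absurd (hN N le_rfl) (not_lt.2 (le_trans hgt.le hd2))
      · linarith
    have hR₂D : R₂ ∈ D := ⟨ystar, hystarC, hdstar⟩
    have hRR₂ : R < R₂ := hDgtR _ hR₂D
    refine ⟨closedBall x R₂, ⟨x, R₂, hR0.trans hRR₂, rfl⟩, ⟨?_, ?_⟩, ?_⟩
    · exact hCsubR.trans (closedBall_subset_closedBall hRR₂.le)
    · intro hsub
      exact hystarC (hsub (mem_closedBall.2 hdstar.le))
    · rintro A ⟨a, s, hs, hA⟩ hCA hAB
      have hxA : x ∈ closedBall a s := hA ▸ hCA hx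
      have hAx : A = closedBall x s := hA.trans (um_recenter hd hxA).symm
      by_cases hAC : A = C
      · exact Or.inl hAC
      · right
        obtain ⟨u, huA, huC⟩ := Set.exists_of_ssubset (ssubset_of_subset_of_ne hCA (Ne.symm hAC))
        have h1 : R₂ ≤ dist u x := csInf_le hDbdd ⟨u, huC, rfl⟩
        have h2 : dist u x ≤ s := mem_closedBall.1 (hAx ▸ huA)
        refine Set.Subset.antisymm hAB ?_
        rw [hAx]
        exact closedBall_subset_closedBall (h1.trans h2)
  · -- the ball of radius R is already strictly bigger than C
    refine ⟨closedBall x R, ⟨x, R, hR0, rfl⟩, ⟨hCsubR, ?_⟩, ?_⟩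
    · intro hsub
      exact hRC (Set.Subset.antisymm hsub hCsubR)
    · rintro A ⟨a, s, hs, hA⟩ hCA hAB
      have hxA : x ∈ closedBall a s := hA ▸ hCA hx
      have hAx : A = closedBall x s := hA.trans (um_recenter hd hxA).symm
      by_cases hAC : A = C
      · exact Or.inl hAC
      · right
        obtain ⟨u, huA, huC⟩ := Set.exists_of_ssubset (ssubset_of_subset_of_ne hCA (Ne.symm hAC))
        have h1 : ∀ t ∈ S, t ≤ dist u x := by
          intro t ht
          by_contra h
          push_neg at h
          exact huC (ht ▸ mem_closedBall.2 h.le)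
        have h2 : R ≤ dist u x := csSup_le hSne h1
        have h3 : dist u x ≤ s := mem_closedBall.1 (hAx ▸ huA)
        refine Set.Subset.antisymm hAB ?_
        rw [hAx]
        exact closedBall_subset_closedBall (h2.trans h3)
end Parent

section Chain
variable {X : Type*} [MetricSpace X]

theorem chain_master (hd : ∀ x y z : X, dist x z ≤ max (dist x y) (dist y z))
    (hcb : ∀ (x : X) (r : ℝ), IsCompact (closedBall x r))
    {C : Set X} (hC : IsBallSet C) :
    ∃ A : ℕ → Set X, A 0 = C ∧ (∀ n, IsBallSet (A n)) ∧
      (∀ n, A n ≠ Set.univ → IsParent (A (n+1)) (A n)) ∧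
      (∀ n, A n = Set.univ → A (n+1) = A n) ∧
      Monotone A ∧ (⋃ n, A n) = Set.univ := by
  classical
  let step : Set X → Set X := fun E =>
    if h : IsBallSet E ∧ E ≠ Set.univ then Classical.choose (parent_exists hd hcb h.1 h.2)
    else E
  let A : ℕ → Set X := fun n => step^[n] C
  have hA0 : A 0 = C := rfl
  have hAsucc : ∀ n, A (n+1) = step (A n) := fun n => Function.iterate_succ_apply' step n C
  have hball : ∀ n, IsBallSet (A n) := by
    intro n
    induction n with
    | zero => exact hC
    | succ n ih =>
      rw [hAsucc]
      by_cases h : IsBallSet (A n) ∧ A n ≠ Set.univ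
      · have := Classical.choose_spec (parent_exists hd hcb h.1 h.2)
        simp only [step, dif_pos h]
        exact this.1
      · simp only [step, dif_neg h]
        exact ih
  have hpar : ∀ n, A n ≠ Set.univ → IsParent (A (n+1)) (A n) := by
    intro n hne
    have h : IsBallSet (A n) ∧ A n ≠ Set.univ := ⟨hball n, hne⟩
    have := Classical.choose_spec (parent_exists hd hcb h.1 h.2)
    rw [hAsucc]
    simp only [step, dif_pos h]
    exact this
  have huniv : ∀ n, A n = Set.univ → A (n+1) = A n := by
    intro n hu
    rw [hAsucc]
    have hneg : ¬(IsBallSet (A n) ∧ A n ≠ Set.univ) := fun h => h.2 hu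
    simp only [step, dif_neg hneg]
  have hmono : Monotone A := by
    apply monotone_nat_of_le_succ
    intro n
    by_cases h : A n = Set.univ
    · rw [huniv n h]
    · exact (hpar n h).2.1.1
  refine ⟨A, hA0, hball, hpar, huniv, hmono, ?_⟩
  by_cases hexu : ∃ n, A n = Set.univ
  · obtain ⟨n, hn⟩ := hexu
    apply Set.eq_univ_of_univ_subset
    rw [← hn]
    exact Set.subset_iUnion A n
  · push_neg at hexu
    -- all proper balls: radii diverge by the compactness argument
    obtain ⟨x, r0, hr0, hCx⟩ := hC
    have hx : ∀ n, x ∈ A n := by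
      intro n
      apply hmono (Nat.zero_le n)
      rw [hA0, hCx]
      exact mem_closedBall_self hr0.le
    set ρ : ℕ → ℝ := fun n => minRad (A n) with hρdef
    have hAeq : ∀ n, A n = closedBall x (ρ n) :=
      fun n => ball_eq_closedBall_minRad hd (hball n) (hx n)
    have hssub : ∀ n, A n ⊂ A (n+1) := fun n => (hpar n (hexu n)).2.1
    have hρmono : StrictMono ρ := by
      apply strictMono_nat_of_lt_succ
      intro n
      rcases lt_trichotomy (ρ n) (ρ (n+1)) with h | h | h
      · exact h
      · exfalso
        have := hssub n
        rw [hAeq n, hAeq (n+1), h] at this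
        exact this.2 (subset_refl _)
      · exfalso
        have h2 := (hssub n).2
        rw [hAeq n, hAeq (n+1)] at h2
        exact h2 (closedBall_subset_closedBall h.le)
    have hρpos : 0 < ρ 1 :=
      minRad_pos_of_ssub hd (hball 1) (ballSet_nonempty (hball 0)) (hssub 0)
    have hdiv : Tendsto ρ atTop atTop := by
      by_contra hnd
      have hbdd : BddAbove (Set.range ρ) := by
        by_contra hb
        exact hnd (tendsto_atTop_atTop_of_monotone hρmono.monotone
          (fun M => by
            obtain ⟨t, ⟨n, rfl⟩, hMt⟩ := not_bddAbove_iff.1 hb M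
            exact ⟨n, hMt.le⟩))
      set ρstar := ⨆ n, ρ n with hρstar
      have htend : Tendsto ρ atTop (nhds ρstar) :=
        tendsto_atTop_ciSup hρmono.monotone hbdd
      have hlt : ∀ n, ρ n < ρstar := fun n =>
        lt_of_lt_of_le (hρmono (Nat.lt_succ_self n)) (le_ciSup hbdd (n+1))
      -- pick witnesses in A (n+1) \ A n
      have hw : ∀ n, ∃ y, y ∈ A (n+1) ∧ y ∉ A n := fun n => Set.exists_of_ssubset (hssub n)
      choose y hy1 hy2 using hw
      have hymem : ∀ n, y n ∈ closedBall x ρstar := by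
        intro n
        have : y n ∈ closedBall x (ρ (n+1)) := (hAeq (n+1)) ▸ hy1 n
        exact closedBall_subset_closedBall (hlt (n+1)).le this
      obtain ⟨ystar, hystar, φ, hφ, hconv⟩ := (hcb x ρstar).tendsto_subseq hymem
      have hlow : ∀ n, ρ n < dist (y n) x := by
        intro n
        by_contra h
        push_neg at h
        exact hy2 n ((hAeq n) ▸ mem_closedBall.2 h)
      have hup : ∀ n, dist (y n) x ≤ ρ (n+1) := fun n => mem_closedBall.1 ((hAeq (n+1)) ▸ hy1 n)
      have hsq : Tendsto (fun n => dist (y (φ n)) x) atTop (nhds ρstar) := by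
        have h1 : Tendsto (fun n => ρ (φ n)) atTop (nhds ρstar) :=
          htend.comp (hφ.tendsto_atTop)
        have hφ1 : Tendsto (fun n => φ n + 1) atTop atTop :=
          tendsto_atTop_mono (fun n => (hφ.le_apply : n ≤ φ n).trans (Nat.le_succ _)) tendsto_id
        have h2 : Tendsto (fun n => ρ (φ n + 1)) atTop (nhds ρstar) :=
          htend.comp hφ1
        exact tendsto_of_tendsto_of_tendsto_of_le_of_le h1 h2
          (fun n => (hlow (φ n)).le) (fun n => hup (φ n))
      have hdstar : dist ystar x = ρstar :=
        tendsto_nhds_unique (hconv.dist tendsto_const_nhds) hsq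
      have hρstarpos : 0 < ρstar := lt_of_lt_of_le hρpos (le_ciSup hbdd 1)
      obtain ⟨N, hN⟩ := (Metric.tendsto_atTop.1 hconv) ρstar hρstarpos
      have hstrict : dist (y (φ N)) x < ρstar :=
        lt_of_le_of_lt (hup (φ N)) (hlt (φ N + 1))
      have hcontra := hd ystar (y (φ N)) x
      rw [hdstar] at hcontra
      rcases max_cases (dist ystar (y (φ N))) (dist (y (φ N)) x) with ⟨heq, -⟩ | ⟨heq, -⟩ <;>
        rw [heq] at hcontra
      · have := hN N le_rfl
        rw [dist_comm] at this
        exact absurd hcontra (not_le.2 this)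
      · exact absurd hcontra (not_le.2 hstrict)
    apply Set.eq_univ_of_forall
    intro w
    obtain ⟨n, hn⟩ := (tendsto_atTop.1 hdiv (dist w x)).exists
    exact Set.mem_iUnion.2 ⟨n, (hAeq n) ▸ mem_closedBall.2 hn⟩
end Chain

section Helpers
variable {X : Type*} [MetricSpace X] [MeasurableSpace X] [BorelSpace X]
variable (μ : Measure X)

/-- normalized indicator of a set -/
noncomputable def nInd (E : Set X) : X → ℝ :=
  fun x => (μ E).toReal⁻¹ * E.indicator (fun _ => (1:ℝ)) x

theorem eigenFn_eq_nInd (C B : Set X) : eigenFn μ C B = nInd μ C - nInd μ B := rfl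

theorem nInd_eq_indicator (E : Set X) :
    nInd μ E = E.indicator (fun _ => (μ E).toReal⁻¹) := by
  funext x
  by_cases hx : x ∈ E <;> simp [nInd, Set.indicator_apply, hx]

theorem eLpNorm_indicator_real {E : Set X} (hE : MeasurableSet E) (c : ℝ) (hc : 0 ≤ c) :
    eLpNorm (E.indicator (fun _ => c)) 2 μ = ENNReal.ofReal c * μ E ^ ((1:ℝ)/2) := by
  rw [eLpNorm_indicator_const hE two_ne_zero ENNReal.ofNat_ne_top]
  congr 1
  exact Real.enorm_eq_ofReal hc

theorem span_aestronglyMeasurable {T : Set (X → ℝ)}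
    (hT : ∀ f ∈ T, AEStronglyMeasurable f μ) :
    ∀ g ∈ Submodule.span ℝ T, AEStronglyMeasurable g μ := by
  intro g hg
  induction hg using Submodule.span_induction with
  | mem f hf => exact hT f hf
  | zero => exact aestronglyMeasurable_const
  | add f₁ f₂ h₁ h₂ ih₁ ih₂ => exact ih₁.add ih₂
  | smul a f hf ih => exact ih.const_smul a

theorem eigenFn_aestronglyMeasurable {C B : Set X} (hC : IsBallSet C) (hB : IsBallSet B) :
    AEStronglyMeasurable (eigenFn μ C B) μ := by
  rw [eigenFn_eq μ C B]
  apply AEStronglyMeasurable.sub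
  · exact ((aestronglyMeasurable_const).indicator (ball_measurable hC))
  · exact ((aestronglyMeasurable_const).indicator (ball_measurable hB))

theorem nInd_aestronglyMeasurable {E : Set X} (hE : MeasurableSet E) :
    AEStronglyMeasurable (nInd μ E) μ := by
  rw [nInd_eq_indicator]
  exact (aestronglyMeasurable_const).indicator hE
end Helpers

section BallApprox
variable {X : Type*} [MetricSpace X] [MeasurableSpace X] [BorelSpace X]
variable (hd : ∀ x y z : X, dist x z ≤ max (dist x y) (dist y z))
variable (hcb : ∀ (x : X) (r : ℝ), IsCompact (closedBall x r))
variable (μ : Measure X)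
variable (hμpos : ∀ (x : X) (r : ℝ), 0 < r → 0 < μ (closedBall x r))
variable (hμfin : ∀ (x : X) (r : ℝ), 0 < r → μ (closedBall x r) < ⊤)
variable (T : Set (X → ℝ))
variable (hT : ∀ C B : Set X, IsBallSet C → C ≠ Set.univ → IsParent B C → eigenFn μ C B ∈ T)

include hT in
theorem nInd_diff_mem_span (A : ℕ → Set X)
    (hball : ∀ n, IsBallSet (A n))
    (hpar : ∀ n, A n ≠ Set.univ → IsParent (A (n+1)) (A n))
    (n : ℕ) (hne : ∀ k, k < n → A k ≠ Set.univ) :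
    nInd μ (A 0) - nInd μ (A n) ∈ Submodule.span ℝ T := by
  induction n with
  | zero => rw [sub_self]; exact Submodule.zero_mem _
  | succ n ih =>
    have h1 := ih (fun k hk => hne k (hk.trans (Nat.lt_succ_self n)))
    have hAn := hne n (Nat.lt_succ_self n)
    have h2 : eigenFn μ (A n) (A (n+1)) ∈ T := hT _ _ (hball n) hAn (hpar n hAn)
    have h3 : nInd μ (A n) - nInd μ (A (n+1)) ∈ Submodule.span ℝ T := by
      rw [← eigenFn_eq_nInd]
      exact Submodule.subset_span h2
    have h4 := Submodule.add_mem _ h1 h3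
    rwa [sub_add_sub_cancel] at h4

include hd hcb hμpos hμfin hT in
theorem ball_approx_inf (hμinf : μ Set.univ = ⊤) {C : Set X} (hC : IsBallSet C)
    {ε : ℝ} (hε : 0 < ε) :
    ∃ g ∈ Submodule.span ℝ T,
      eLpNorm ((C.indicator fun _ => (1:ℝ)) - g) 2 μ < ENNReal.ofReal ε := by
  obtain ⟨A, hA0, hball, hpar, -, hmono, hU⟩ := chain_master hd hcb hC
  have hAne : ∀ n, A n ≠ Set.univ := by
    intro n hn
    have h := ball_meas_fin μ hμfin (hball n)
    rw [hn, hμinf] at h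
    exact absurd h (lt_irrefl _)
  set K := (μ C).toReal with hK
  have hCpos := ball_meas_pos μ hμpos hC
  have hCfin := ball_meas_fin μ hμfin hC
  have hK0 : 0 < K := ENNReal.toReal_pos hCpos.ne' hCfin.ne
  have hsup : (⨆ n, μ (A n)) = ⊤ := by
    rw [← hmono.directed_le.measure_iUnion, hU, hμinf]
  have hbig : ∃ n, ENNReal.ofReal ((K/ε)^2) < μ (A n) := by
    have h : ENNReal.ofReal ((K/ε)^2) < ⨆ n, μ (A n) := hsup ▸ ENNReal.ofReal_lt_top
    exact lt_iSup_iff.1 h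
  obtain ⟨n, hn⟩ := hbig
  set t := (μ (A n)).toReal with ht
  have hAfin : μ (A n) < ⊤ := ball_meas_fin μ hμfin (hball n)
  have hApos : 0 < μ (A n) := ball_meas_pos μ hμpos (hball n)
  have htpos : 0 < t := ENNReal.toReal_pos hApos.ne' hAfin.ne
  have htbig : (K/ε)^2 < t :=
    (ENNReal.ofReal_lt_iff_lt_toReal (by positivity) hAfin.ne).1 hn
  have hspan := nInd_diff_mem_span μ T hT A hball hpar n (fun k _ => hAne k)
  rw [hA0] at hspan
  refine ⟨K • (nInd μ C - nInd μ (A n)), Submodule.smul_mem _ K hspan, ?_⟩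
  have hCA : C ⊆ A n := hA0 ▸ hmono (Nat.zero_le n)
  have hdiff : (C.indicator fun _ => (1:ℝ)) - K • (nInd μ C - nInd μ (A n))
      = (A n).indicator (fun _ => K * t⁻¹) := by
    funext x
    simp only [Pi.sub_apply, Pi.smul_apply, smul_eq_mul, nInd]
    by_cases hx1 : x ∈ C
    · have hx2 : x ∈ A n := hCA hx1
      simp only [Set.indicator_of_mem hx1, Set.indicator_of_mem hx2]
      field_simp
      simp only [← hK, ← ht]
      linear_combination (-t) * mul_inv_cancel₀ hK0.ne' + K * mul_inv_cancel₀ htpos.ne'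
    · by_cases hx2 : x ∈ A n
      · simp only [Set.indicator_of_notMem hx1, Set.indicator_of_mem hx2]
        ring
      · simp only [Set.indicator_of_notMem hx1, Set.indicator_of_notMem hx2]
        ring
  rw [hdiff, eLpNorm_indicator_real μ (ball_measurable (hball n)) _ (by positivity)]
  have hμAn : μ (A n) = ENNReal.ofReal t := (ENNReal.ofReal_toReal hAfin.ne).symm
  rw [hμAn, ENNReal.ofReal_rpow_of_pos htpos, ← ENNReal.ofReal_mul (by positivity)]
  rw [ENNReal.ofReal_lt_ofReal_iff hε, ← Real.sqrt_eq_rpow]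
  have hs : 0 < Real.sqrt t := Real.sqrt_pos.2 htpos
  have hss : Real.sqrt t * Real.sqrt t = t := Real.mul_self_sqrt htpos.le
  have hKε : K/ε < Real.sqrt t := by
    have h := Real.sqrt_lt_sqrt (by positivity) htbig
    rwa [Real.sqrt_sq (by positivity)] at h
  have heq : K * t⁻¹ * Real.sqrt t = K / Real.sqrt t := by
    rw [eq_div_iff hs.ne', mul_assoc, hss, mul_assoc, inv_mul_cancel₀ htpos.ne', mul_one]
  rw [heq, div_lt_iff₀ hs]
  have := (div_lt_iff₀ hε).1 hKε
  linarith

include hd hcb hμpos hμfin hT in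
theorem ball_approx_fin (hμfin' : μ Set.univ < ⊤)
    (h1T : (fun _ : X => (1:ℝ)) ∈ T)
    {C : Set X} (hC : IsBallSet C) {ε : ℝ} (hε : 0 < ε) :
    ∃ g ∈ Submodule.span ℝ T,
      eLpNorm ((C.indicator fun _ => (1:ℝ)) - g) 2 μ < ENNReal.ofReal ε := by
  obtain ⟨A, hA0, hball, hpar, huniv, hmono, hU⟩ := chain_master hd hcb hC
  set K := (μ C).toReal with hK
  have hCpos := ball_meas_pos μ hμpos hC
  have hCfin := ball_meas_fin μ hμfin hC
  have hK0 : 0 < K := ENNReal.toReal_pos hCpos.ne' hCfin.ne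
  set m := (μ Set.univ).toReal with hm
  have hmpos : 0 < m := ENNReal.toReal_pos
    (fun h => (hCpos.trans_le (measure_mono (Set.subset_univ C))).ne' h) hμfin'.ne
  have hone : nInd μ Set.univ = (m⁻¹ : ℝ) • (fun _ : X => (1:ℝ)) := by
    funext x
    simp [nInd, Set.indicator_univ]
    exact hm.symm
  by_cases hex : ∃ n, A n = Set.univ
  · -- the chain reaches the whole space: exact representation
    classical
    let n₀ := Nat.find hex
    have hn₀ : A n₀ = Set.univ := Nat.find_spec hex
    have hlt : ∀ k, k < n₀ → A k ≠ Set.univ := fun k hk => Nat.find_min hex hk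
    have hspan := nInd_diff_mem_span μ T hT A hball hpar n₀ hlt
    rw [hA0, hn₀, hone] at hspan
    have hg : nInd μ C ∈ Submodule.span ℝ T := by
      have h2 : (m⁻¹ : ℝ) • (fun _ : X => (1:ℝ)) ∈ Submodule.span ℝ T :=
        Submodule.smul_mem _ _ (Submodule.subset_span h1T)
      have h3 := Submodule.add_mem _ hspan h2
      rwa [sub_add_cancel] at h3
    refine ⟨K • nInd μ C, Submodule.smul_mem _ K hg, ?_⟩
    have hzero : (C.indicator fun _ => (1:ℝ)) - K • nInd μ C = 0 := by
      funext x
      simp only [Pi.sub_apply, Pi.smul_apply, smul_eq_mul, nInd, Pi.zero_apply]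
      by_cases hx : x ∈ C
      · simp only [Set.indicator_of_mem hx]
        field_simp
        rw [← hK, div_self hK0.ne', sub_self]
      · simp only [Set.indicator_of_notMem hx]
        ring
    rw [hzero, eLpNorm_zero]
    exact ENNReal.ofReal_pos.2 hε
  · -- the chain is infinite; use convergence of measures
    push_neg at hex
    have htend : Tendsto (fun n => μ (A n)) atTop (nhds (μ Set.univ)) := by
      have h := tendsto_measure_iUnion_atTop (μ := μ) hmono
      rwa [hU] at h
    have hdtend : Tendsto (fun n => μ (Set.univ \ A n)) atTop (nhds 0) := by
      have hsub : ∀ n, μ (Set.univ \ A n) = μ Set.univ - μ (A n) := by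
        intro n
        exact measure_diff (Set.subset_univ _) (ball_measurable (hball n)).nullMeasurableSet
          (ball_meas_fin μ hμfin (hball n)).ne
      simp only [hsub]
      have h := ENNReal.Tendsto.sub (tendsto_const_nhds (x := μ Set.univ)) htend
        (Or.inl hμfin'.ne)
      simpa using h
    have httend : Tendsto (fun n => (μ (A n)).toReal) atTop (nhds m) :=
      (ENNReal.tendsto_toReal hμfin'.ne).comp htend
    -- real-valued error bound
    set e : ℕ → ℝ := fun n =>
      |((μ (A n)).toReal)⁻¹ - m⁻¹| * Real.sqrt m + m⁻¹ * Real.sqrt ((μ (Set.univ \ A n)).toReal)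
    have hetend : Tendsto e atTop (nhds 0) := by
      have h1 : Tendsto (fun n => ((μ (A n)).toReal)⁻¹) atTop (nhds m⁻¹) :=
        httend.inv₀ hmpos.ne'
      have h2 : Tendsto (fun n => |((μ (A n)).toReal)⁻¹ - m⁻¹|) atTop (nhds 0) := by
        have h2' : Tendsto (fun n => ((μ (A n)).toReal)⁻¹ - m⁻¹) atTop
            (nhds (m⁻¹ - m⁻¹)) := h1.sub tendsto_const_nhds
        rw [sub_self] at h2'
        simpa using h2'.abs
      have h3 : Tendsto (fun n => (μ (Set.univ \ A n)).toReal) atTop (nhds 0) := by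
        have := (ENNReal.tendsto_toReal (by simp : (0:ℝ≥0∞) ≠ ⊤)).comp hdtend
        simpa [Function.comp_def] using this
      have h4 : Tendsto (fun n => Real.sqrt ((μ (Set.univ \ A n)).toReal)) atTop
          (nhds 0) := by
        have := (Real.continuous_sqrt.tendsto 0).comp h3
        simpa [Function.comp_def] using this
      have h5 := (h2.mul_const (Real.sqrt m)).add (h4.const_mul m⁻¹)
      simpa using h5
    have henn : ∀ n, 0 ≤ e n := by
      intro n
      apply add_nonneg
      · exact mul_nonneg (abs_nonneg _) (Real.sqrt_nonneg _)
      · exact mul_nonneg (inv_nonneg.2 hmpos.le) (Real.sqrt_nonneg _)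
    obtain ⟨N, hN⟩ := Metric.tendsto_atTop.1 hetend (ε / (K+1)) (by positivity)
    have hnsmall : e N < ε / (K+1) := by
      have := hN N le_rfl
      rwa [Real.dist_eq, sub_zero, abs_of_nonneg (henn N)] at this
    set n := N
    set t := (μ (A n)).toReal with htdef
    set dn := (μ (Set.univ \ A n)).toReal with hdndef
    have hAfin : μ (A n) < ⊤ := ball_meas_fin μ hμfin (hball n)
    have hApos : 0 < μ (A n) := ball_meas_pos μ hμpos (hball n)
    have htpos : 0 < t := ENNReal.toReal_pos hApos.ne' hAfin.ne
    have hspan := nInd_diff_mem_span μ T hT A hball hpar n (fun k _ => hex k)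
    rw [hA0] at hspan
    have hgmem : (nInd μ C - nInd μ (A n)) + (m⁻¹ : ℝ) • (fun _ : X => (1:ℝ))
        ∈ Submodule.span ℝ T :=
      Submodule.add_mem _ hspan (Submodule.smul_mem _ _ (Submodule.subset_span h1T))
    refine ⟨K • ((nInd μ C - nInd μ (A n)) + (m⁻¹ : ℝ) • (fun _ : X => (1:ℝ))),
      Submodule.smul_mem _ K hgmem, ?_⟩
    set F : X → ℝ := (A n).indicator (fun _ => t⁻¹ - m⁻¹) +
      (Set.univ \ A n).indicator (fun _ => -m⁻¹) with hFdef
    have hdiff : (C.indicator fun _ => (1:ℝ)) -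
        K • ((nInd μ C - nInd μ (A n)) + (m⁻¹ : ℝ) • (fun _ : X => (1:ℝ))) = K • F := by
      funext x
      have hCA : C ⊆ A n := hA0 ▸ hmono (Nat.zero_le n)
      simp only [Pi.sub_apply, Pi.smul_apply, Pi.add_apply, smul_eq_mul, nInd, hFdef]
      by_cases hx2 : x ∈ A n
      · have hx2' : x ∉ Set.univ \ A n := fun h => h.2 hx2
        by_cases hx1 : x ∈ C
        · simp only [Set.indicator_of_mem hx1, Set.indicator_of_mem hx2,
            Set.indicator_of_notMem hx2']
          field_simp
          simp only [← hK, ← htdef]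
          linear_combination (-(m*t)) * mul_inv_cancel₀ hK0.ne' + (m*K) * inv_mul_cancel₀ htpos.ne'
        · simp only [Set.indicator_of_notMem hx1, Set.indicator_of_mem hx2,
            Set.indicator_of_notMem hx2']
          ring
      · have hx1 : x ∉ C := fun h => hx2 (hCA h)
        have hx2' : x ∈ Set.univ \ A n := ⟨trivial, hx2⟩
        simp only [Set.indicator_of_notMem hx1, Set.indicator_of_notMem hx2,
          Set.indicator_of_mem hx2']
        ring
    rw [hdiff]
    have hAm : MeasurableSet (A n) := ball_measurable (hball n)
    have hDm : MeasurableSet (Set.univ \ A n) := MeasurableSet.univ.diff hAm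
    have hFbound : eLpNorm F 2 μ ≤ ENNReal.ofReal (e n) := by
      have htri : eLpNorm F 2 μ ≤
          eLpNorm ((A n).indicator (fun _ => t⁻¹ - m⁻¹)) 2 μ +
          eLpNorm ((Set.univ \ A n).indicator (fun _ => -m⁻¹)) 2 μ := by
        apply eLpNorm_add_le
        · exact aestronglyMeasurable_const.indicator hAm
        · exact aestronglyMeasurable_const.indicator hDm
        · exact one_le_two
      refine htri.trans ?_
      have h1 : eLpNorm ((A n).indicator (fun _ => t⁻¹ - m⁻¹)) 2 μ ≤
          ENNReal.ofReal (|t⁻¹ - m⁻¹| * Real.sqrt m) := by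
        rw [eLpNorm_indicator_const hAm two_ne_zero ENNReal.ofNat_ne_top]
        have hc : (‖t⁻¹ - m⁻¹‖ₑ : ℝ≥0∞) = ENNReal.ofReal |t⁻¹ - m⁻¹| :=
          Real.enorm_eq_ofReal_abs _
        rw [hc, ENNReal.ofReal_mul (abs_nonneg _)]
        apply mul_le_mul_right
        have hle : μ (A n) ≤ ENNReal.ofReal m := by
          rw [hm, ENNReal.ofReal_toReal hμfin'.ne]
          exact measure_mono (Set.subset_univ _)
        calc μ (A n) ^ (1 / (2:ℝ≥0∞).toReal) ≤ (ENNReal.ofReal m) ^ (1/(2:ℝ≥0∞).toReal) := by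
              apply ENNReal.rpow_le_rpow hle
              norm_num
        _ = ENNReal.ofReal (Real.sqrt m) := by
              rw [ENNReal.ofReal_rpow_of_nonneg hmpos.le (by norm_num)]
              congr 1
              rw [Real.sqrt_eq_rpow]
              norm_num
      have h2 : eLpNorm ((Set.univ \ A n).indicator (fun _ => -m⁻¹)) 2 μ ≤
          ENNReal.ofReal (m⁻¹ * Real.sqrt dn) := by
        rw [eLpNorm_indicator_const hDm two_ne_zero ENNReal.ofNat_ne_top]
        have hc : (‖-m⁻¹‖ₑ : ℝ≥0∞) = ENNReal.ofReal (m⁻¹) := by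
          rw [Real.enorm_eq_ofReal_abs, abs_neg, abs_of_nonneg (inv_nonneg.2 hmpos.le)]
        rw [hc, ENNReal.ofReal_mul (inv_nonneg.2 hmpos.le)]
        apply mul_le_mul_right
        have hdfin : μ (Set.univ \ A n) ≠ ⊤ :=
          (lt_of_le_of_lt (measure_mono (Set.subset_univ _)) hμfin').ne
        have hdeq : μ (Set.univ \ A n) = ENNReal.ofReal dn :=
          (ENNReal.ofReal_toReal hdfin).symm
        rw [hdeq, ENNReal.ofReal_rpow_of_nonneg (ENNReal.toReal_nonneg) (by norm_num)]
        apply ENNReal.ofReal_le_ofReal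
        rw [Real.sqrt_eq_rpow]
        norm_num
        exact le_rfl
      calc _ ≤ ENNReal.ofReal (|t⁻¹ - m⁻¹| * Real.sqrt m) +
            ENNReal.ofReal (m⁻¹ * Real.sqrt dn) := add_le_add h1 h2
      _ = ENNReal.ofReal (e n) := by
            rw [← ENNReal.ofReal_add (mul_nonneg (abs_nonneg _) (Real.sqrt_nonneg _))
              (mul_nonneg (inv_nonneg.2 hmpos.le) (Real.sqrt_nonneg _))]
    have hsmul : eLpNorm (K • F) 2 μ = ENNReal.ofReal K * eLpNorm F 2 μ := by
      rw [eLpNorm_const_smul]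
      congr 1
      rw [Real.enorm_eq_ofReal_abs, abs_of_nonneg hK0.le]
    rw [hsmul]
    calc ENNReal.ofReal K * eLpNorm F 2 μ ≤ ENNReal.ofReal K * ENNReal.ofReal (e n) :=
          mul_le_mul_right hFbound _
    _ = ENNReal.ofReal (K * e n) := (ENNReal.ofReal_mul hK0.le).symm
    _ < ENNReal.ofReal ε := by
          apply ENNReal.ofReal_lt_ofReal_iff hε |>.2
          have h1 : K * e n ≤ (K+1) * e n := by nlinarith [henn n]
          have h2 : (K+1) * e n < (K+1) * (ε / (K+1)) := by
            apply mul_lt_mul_of_pos_left hnsmall (by positivity)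
          have h3 : (K+1) * (ε / (K+1)) = ε := by field_simp
          calc K * e n ≤ (K+1) * e n := h1
          _ < (K+1) * (ε / (K+1)) := h2
          _ = ε := h3
end BallApprox

section Disjointify
variable {X : Type*} [MetricSpace X]

theorem disjointify (hd : ∀ x y z : X, dist x z ≤ max (dist x y) (dist y z))
    (c : ℕ → X) (rr : ℕ → ℝ) (n : ℕ) :
    ∃ s : Finset ℕ,
      (⋃ k ∈ s, closedBall (c k) (rr k)) = (⋃ k ∈ Finset.range n, closedBall (c k) (rr k)) ∧
      (∀ k ∈ s, k ∈ Finset.range n) ∧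
      (∀ k ∈ s, ∀ l ∈ s, k ≠ l →
        Disjoint (closedBall (c k) (rr k)) (closedBall (c l) (rr l))) := by
  classical
  induction n with
  | zero => exact ⟨∅, by simp, by simp, by simp⟩
  | succ n ih =>
    obtain ⟨s, hsU, hsRange, hsDisj⟩ := ih
    have hUsucc : (⋃ k ∈ Finset.range (n+1), closedBall (c k) (rr k)) =
        closedBall (c n) (rr n) ∪ ⋃ k ∈ Finset.range n, closedBall (c k) (rr k) := by
      rw [Finset.range_add_one, Finset.set_biUnion_insert]
    by_cases hcase : ∃ k ∈ s, closedBall (c n) (rr n) ⊆ closedBall (c k) (rr k)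
    · obtain ⟨k₀, hk₀s, hk₀⟩ := hcase
      refine ⟨s, ?_, ?_, hsDisj⟩
      · rw [hUsucc, hsU]
        apply Set.Subset.antisymm
        · exact Set.subset_union_right
        · apply Set.union_subset
          · refine hk₀.trans ?_
            rw [← hsU]
            intro w hw
            exact Set.mem_iUnion₂.2 ⟨k₀, hk₀s, hw⟩
          · exact Set.Subset.rfl
      · intro k hk
        exact Finset.mem_range.2 (Nat.lt_succ_of_lt (Finset.mem_range.1 (hsRange k hk)))
    · push_neg at hcase
      set s' : Finset ℕ := insert n (s.filter
        (fun k => Disjoint (closedBall (c k) (rr k)) (closedBall (c n) (rr n)))) with hs'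
      have hns : n ∉ s := fun h => absurd (hsRange n h) (by simp)
      refine ⟨s', ?_, ?_, ?_⟩
      · rw [hUsucc, ← hsU, hs']
        rw [Finset.set_biUnion_insert]
        apply Set.Subset.antisymm
        · apply Set.union_subset Set.subset_union_left
          refine Set.iUnion₂_subset fun k hk => ?_
          have hk' : k ∈ s := Finset.mem_of_mem_filter k hk
          intro w hw
          exact Set.mem_union_right _ (Set.mem_iUnion₂.2 ⟨k, hk', hw⟩)
        · apply Set.union_subset Set.subset_union_left
          refine Set.iUnion₂_subset fun k hk => ?_
          by_cases hdisj : Disjoint (closedBall (c k) (rr k)) (closedBall (c n) (rr n))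
          · have hkf : k ∈ s.filter
                (fun k => Disjoint (closedBall (c k) (rr k)) (closedBall (c n) (rr n))) :=
              Finset.mem_filter.2 ⟨hk, hdisj⟩
            intro w hw
            exact Set.mem_union_right _ (Set.mem_iUnion₂.2 ⟨k, hkf, hw⟩)
          · -- intersecting: one contains the other; n ⊆ k impossible
            have hne : (closedBall (c k) (rr k) ∩ closedBall (c n) (rr n)).Nonempty :=
              Set.not_disjoint_iff_nonempty_inter.1 hdisj
            rcases le_total (rr k) (rr n) with hle | hle
            · have : closedBall (c k) (rr k) ⊆ closedBall (c n) (rr n) :=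
                um_subset hd hle hne
              exact Set.subset_union_of_subset_left this _
            · exfalso
              apply hcase k hk
              apply um_subset hd hle
              rw [Set.inter_comm] at hne
              exact hne
      · intro k hk
        rw [hs', Finset.mem_insert] at hk
        rcases hk with rfl | hk
        · exact Finset.self_mem_range_succ k
        · exact Finset.mem_range_succ_iff.2
            (Nat.le_of_lt_succ (Nat.lt_succ_of_lt (Finset.mem_range.1
              (hsRange k (Finset.mem_of_mem_filter k hk)))))
      · intro k hk l hl hkl
        rw [hs', Finset.mem_insert] at hk hl
        rcases hk with rfl | hk <;> rcases hl with rfl | hl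
        · exact absurd rfl hkl
        · exact (Finset.mem_filter.1 hl).2.symm
        · exact (Finset.mem_filter.1 hk).2
        · exact hsDisj k (Finset.mem_of_mem_filter k hk) l (Finset.mem_of_mem_filter l hl) hkl
end Disjointify

section ApproxGeneric
variable {X : Type*} [MeasurableSpace X]

/-- `f` is approximable in `L²(μ)` by the span of `T`. -/
def ApproxIn (μ : Measure X) (T : Set (X → ℝ)) (f : X → ℝ) : Prop :=
  ∀ ε : ℝ, 0 < ε → ∃ g ∈ Submodule.span ℝ T,
    eLpNorm (f - g) 2 μ < ENNReal.ofReal ε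

variable {μ : Measure X} {T : Set (X → ℝ)}

theorem approxIn_zero : ApproxIn μ T 0 := by
  intro ε hε
  refine ⟨0, Submodule.zero_mem _, ?_⟩
  rw [sub_zero, eLpNorm_zero]
  exact ENNReal.ofReal_pos.2 hε

theorem approxIn_smul {f : X → ℝ} (hf : ApproxIn μ T f) (c : ℝ) :
    ApproxIn μ T (c • f) := by
  intro ε hε
  by_cases hc : c = 0
  · subst hc
    rw [zero_smul]
    exact approxIn_zero ε hε
  · obtain ⟨g, hg, hgε⟩ := hf (ε / |c|) (by positivity)
    refine ⟨c • g, Submodule.smul_mem _ c hg, ?_⟩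
    have h1 : c • f - c • g = c • (f - g) := (smul_sub c f g).symm
    rw [h1, eLpNorm_const_smul]
    have h2 : (‖c‖ₑ : ℝ≥0∞) = ENNReal.ofReal |c| := Real.enorm_eq_ofReal_abs c
    rw [h2]
    calc ENNReal.ofReal |c| * eLpNorm (f - g) 2 μ
        < ENNReal.ofReal |c| * ENNReal.ofReal (ε / |c|) := by
          exact ENNReal.mul_lt_mul_right (by simpa using hc) ENNReal.ofReal_ne_top hgε
    _ = ENNReal.ofReal (|c| * (ε / |c|)) := (ENNReal.ofReal_mul (abs_nonneg c)).symm
    _ = ENNReal.ofReal ε := by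
          congr 1
          field_simp

theorem approxIn_add {f₁ f₂ : X → ℝ}
    (hTm : ∀ g ∈ Submodule.span ℝ T, AEStronglyMeasurable g μ)
    (hm₁ : AEStronglyMeasurable f₁ μ) (hm₂ : AEStronglyMeasurable f₂ μ)
    (h₁ : ApproxIn μ T f₁) (h₂ : ApproxIn μ T f₂) : ApproxIn μ T (f₁ + f₂) := by
  intro ε hε
  obtain ⟨g₁, hg₁, hg₁ε⟩ := h₁ (ε/3) (by positivity)
  obtain ⟨g₂, hg₂, hg₂ε⟩ := h₂ (ε/3) (by positivity)
  refine ⟨g₁ + g₂, Submodule.add_mem _ hg₁ hg₂, ?_⟩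
  have heq : f₁ + f₂ - (g₁ + g₂) = (f₁ - g₁) + (f₂ - g₂) := by ring
  rw [heq]
  calc eLpNorm ((f₁ - g₁) + (f₂ - g₂)) 2 μ
      ≤ eLpNorm (f₁ - g₁) 2 μ + eLpNorm (f₂ - g₂) 2 μ :=
        eLpNorm_add_le (hm₁.sub (hTm g₁ hg₁)) (hm₂.sub (hTm g₂ hg₂)) one_le_two
  _ < ENNReal.ofReal (ε/3) + ENNReal.ofReal (ε/3) :=
        ENNReal.add_lt_add hg₁ε hg₂ε
  _ = ENNReal.ofReal (2*ε/3) := by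
        rw [← ENNReal.ofReal_add (by positivity) (by positivity)]
        ring_nf
  _ < ENNReal.ofReal ε := ENNReal.ofReal_lt_ofReal_iff hε |>.2 (by linarith)

theorem approxIn_sum {ι : Type*} (s : Finset ι) (f : ι → X → ℝ)
    (hTm : ∀ g ∈ Submodule.span ℝ T, AEStronglyMeasurable g μ)
    (hm : ∀ k ∈ s, AEStronglyMeasurable (f k) μ)
    (h : ∀ k ∈ s, ApproxIn μ T (f k)) : ApproxIn μ T (∑ k ∈ s, f k) := by
  classical
  induction s using Finset.induction with
  | empty => simpa using approxIn_zero
  | insert _ _ hks ih =>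
    rename_i k s
    rw [Finset.sum_insert hks]
    apply approxIn_add hTm (hm k (Finset.mem_insert_self k s))
    · have hsum : AEStronglyMeasurable (fun a => ∑ l ∈ s, f l a) μ :=
        Finset.aestronglyMeasurable_fun_sum s (fun l hl => hm l (Finset.mem_insert_of_mem hl))
      have hfe : (∑ l ∈ s, f l) = fun a => ∑ l ∈ s, f l a := by
        funext a
        simp
      rw [hfe]
      exact hsum
    · exact h k (Finset.mem_insert_self k s)
    · exact ih (fun l hl => hm l (Finset.mem_insert_of_mem hl))
        (fun l hl => h l (Finset.mem_insert_of_mem hl))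

theorem approxIn_closed {f : X → ℝ}
    (hTm : ∀ g ∈ Submodule.span ℝ T, AEStronglyMeasurable g μ)
    (hfm : AEStronglyMeasurable f μ)
    (h : ∀ δ : ℝ, 0 < δ → ∃ f' : X → ℝ, AEStronglyMeasurable f' μ ∧
      ApproxIn μ T f' ∧ eLpNorm (f - f') 2 μ ≤ ENNReal.ofReal δ) :
    ApproxIn μ T f := by
  intro ε hε
  obtain ⟨f', hf'm, hf'a, hf'e⟩ := h (ε/3) (by positivity)
  obtain ⟨g, hg, hgε⟩ := hf'a (ε/3) (by positivity)
  refine ⟨g, hg, ?_⟩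
  have heq : f - g = (f - f') + (f' - g) := by ring
  rw [heq]
  calc eLpNorm ((f - f') + (f' - g)) 2 μ
      ≤ eLpNorm (f - f') 2 μ + eLpNorm (f' - g) 2 μ :=
        eLpNorm_add_le (hfm.sub hf'm) (hf'm.sub (hTm g hg)) one_le_two
  _ ≤ ENNReal.ofReal (ε/3) + eLpNorm (f' - g) 2 μ := add_le_add_left hf'e _
  _ < ENNReal.ofReal (ε/3) + ENNReal.ofReal (ε/3) :=
        ENNReal.add_lt_add_left ENNReal.ofReal_ne_top hgε
  _ = ENNReal.ofReal (2*ε/3) := by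
        rw [← ENNReal.ofReal_add (by positivity) (by positivity)]
        ring_nf
  _ < ENNReal.ofReal ε := ENNReal.ofReal_lt_ofReal_iff hε |>.2 (by linarith)

theorem eLpNorm_indicator_one_le {S : Set X} {μ : Measure X} (hSm : MeasurableSet S) {δ : ℝ}
    (hδ : 0 ≤ δ) (hS : μ S ≤ ENNReal.ofReal (δ^2)) :
    eLpNorm (S.indicator fun _ => (1:ℝ)) 2 μ ≤ ENNReal.ofReal δ := by
  rw [eLpNorm_indicator_const hSm two_ne_zero ENNReal.ofNat_ne_top]
  have h1 : (‖(1:ℝ)‖ₑ : ℝ≥0∞) = 1 := by simp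
  rw [h1, one_mul]
  calc μ S ^ (1/(2:ℝ≥0∞).toReal) ≤ (ENNReal.ofReal (δ^2)) ^ (1/(2:ℝ≥0∞).toReal) := by
        apply ENNReal.rpow_le_rpow hS
        norm_num
  _ = ENNReal.ofReal δ := by
        rw [ENNReal.ofReal_rpow_of_nonneg (by positivity) (by norm_num)]
        congr 1
        have hexp : (1/(2:ℝ≥0∞).toReal) = (1/2 : ℝ) := by norm_num
        rw [hexp, ← Real.sqrt_eq_rpow, Real.sqrt_sq hδ]
end ApproxGeneric

section MeasApprox
variable {X : Type*} [MetricSpace X] [MeasurableSpace X] [BorelSpace X]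

theorem indicator_biUnion_eq_sum {s : Finset ℕ} {f : ℕ → Set X}
    (hdisj : ∀ k ∈ s, ∀ l ∈ s, k ≠ l → Disjoint (f k) (f l)) :
    ((⋃ k ∈ s, f k).indicator (fun _ => (1:ℝ))) =
      ∑ k ∈ s, (f k).indicator (fun _ => (1:ℝ)) := by
  funext x
  rw [Finset.sum_apply]
  by_cases hx : x ∈ ⋃ k ∈ s, f k
  · obtain ⟨k₀, hk₀s, hk₀⟩ := Set.mem_iUnion₂.1 hx
    rw [Set.indicator_of_mem hx, Finset.sum_eq_single k₀]
    · rw [Set.indicator_of_mem hk₀]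
    · intro l hl hlk
      apply Set.indicator_of_notMem
      intro hxl
      exact Set.disjoint_left.1 (hdisj l hl k₀ hk₀s hlk) hxl hk₀
    · intro hk₀s'
      exact absurd hk₀s hk₀s'
  · rw [Set.indicator_of_notMem hx]
    symm
    apply Finset.sum_eq_zero
    intro l hl
    apply Set.indicator_of_notMem
    intro hxl
    exact hx (Set.mem_iUnion₂.2 ⟨l, hl, hxl⟩)

theorem approx_open [TopologicalSpace.SeparableSpace X]
    (hd : ∀ x y z : X, dist x z ≤ max (dist x y) (dist y z))
    (μ : Measure X) (T : Set (X → ℝ))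
    (hTm : ∀ g ∈ Submodule.span ℝ T, AEStronglyMeasurable g μ)
    (hball : ∀ C : Set X, IsBallSet C → ApproxIn μ T (C.indicator fun _ => (1:ℝ)))
    {U : Set X} (hUopen : IsOpen U) (hUfin : μ U ≠ ⊤) :
    ApproxIn μ T (U.indicator fun _ => (1:ℝ)) := by
  haveI := UniformSpace.secondCountable_of_separable X
  have hcover : ∀ y : U, ∃ r : ℝ, 0 < r ∧ closedBall (y:X) r ⊆ U := by
    intro y
    obtain ⟨ε', hε', hb⟩ := Metric.isOpen_iff.1 hUopen y y.2
    exact ⟨ε'/2, by positivity, (closedBall_subset_ball (by linarith)).trans hb⟩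
  choose rad hrad1 hrad2 using hcover
  have hUeq : (⋃ y : U, ball (y:X) (rad y)) = U := by
    apply Set.Subset.antisymm
    · exact Set.iUnion_subset fun y => ball_subset_closedBall.trans (hrad2 y)
    · intro w hw
      exact Set.mem_iUnion.2 ⟨⟨w, hw⟩, mem_ball_self (hrad1 _)⟩
  obtain ⟨Tc, hTcc, hTcU⟩ := TopologicalSpace.isOpen_iUnion_countable
    (fun y : U => ball (y:X) (rad y)) (fun y => isOpen_ball)
  rw [hUeq] at hTcU
  rcases Tc.eq_empty_or_nonempty with hTe | hTne
  · have hUe : U = ∅ := by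
      rw [← hTcU, hTe]
      simp
    rw [hUe]
    have h0 : (∅ : Set X).indicator (fun _ => (1:ℝ)) = 0 := by
      funext x
      simp
    rw [h0]
    exact approxIn_zero
  · obtain ⟨fseq, hfseq⟩ := hTcc.exists_eq_range hTne
    set cc : ℕ → X := fun k => (fseq k : X) with hcc
    set rrr : ℕ → ℝ := fun k => rad (fseq k) with hrrr
    have hWU : ∀ k, closedBall (cc k) (rrr k) ⊆ U := fun k => hrad2 _
    have hUnion : (⋃ k, closedBall (cc k) (rrr k)) = U := by
      apply Set.Subset.antisymm (Set.iUnion_subset hWU)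
      intro w hw
      rw [← hTcU] at hw
      obtain ⟨y, hyT, hyb⟩ := Set.mem_iUnion₂.1 hw
      rw [hfseq] at hyT
      obtain ⟨k, rfl⟩ := hyT
      exact Set.mem_iUnion.2 ⟨k, ball_subset_closedBall hyb⟩
    set W : ℕ → Set X := fun N => ⋃ k ∈ Finset.range N, closedBall (cc k) (rrr k) with hW
    have hWm : ∀ N, MeasurableSet (W N) :=
      fun N => (Finset.range N).measurableSet_biUnion (fun k _ => measurableSet_closedBall)
    have hWsubU : ∀ N, W N ⊆ U := fun N => Set.iUnion₂_subset fun k _ => hWU k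
    have hWmono : Monotone W := by
      intro N M h w hw
      obtain ⟨k, hk, hwk⟩ := Set.mem_iUnion₂.1 hw
      exact Set.mem_iUnion₂.2 ⟨k, Finset.mem_range.2 (lt_of_lt_of_le (Finset.mem_range.1 hk) h), hwk⟩
    have hWlim : (⋃ N, W N) = U := by
      rw [← hUnion]
      apply Set.Subset.antisymm
      · exact Set.iUnion_subset fun N => (hWsubU N).trans (hUnion ▸ Set.Subset.rfl)
      · intro w hw
        obtain ⟨k, hwk⟩ := Set.mem_iUnion.1 hw
        exact Set.mem_iUnion.2 ⟨k+1, Set.mem_iUnion₂.2 ⟨k, Finset.self_mem_range_succ k, hwk⟩⟩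
    apply approxIn_closed hTm (aestronglyMeasurable_const.indicator hUopen.measurableSet)
    intro δ hδ
    have hdm : ∀ N, MeasurableSet (U \ W N) := fun N => hUopen.measurableSet.diff (hWm N)
    have htendD : Tendsto (fun N => μ (U \ W N)) atTop (nhds 0) := by
      have hI : (⋂ N, U \ W N) = ∅ := by
        rw [← Set.diff_iUnion, hWlim, Set.diff_self]
      have h := tendsto_measure_iInter_atTop (μ := μ) (fun N => (hdm N).nullMeasurableSet)
        (fun N M h => Set.diff_subset_diff_right (hWmono h))
        ⟨0, ((measure_mono Set.diff_subset).trans_lt hUfin.lt_top).ne⟩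
      rw [hI] at h
      simpa [Function.comp_def] using h
    obtain ⟨N, hN⟩ := (htendD.eventually_lt_const
      (show (0:ℝ≥0∞) < ENNReal.ofReal (δ^2) from ENNReal.ofReal_pos.2 (by positivity))).exists
    refine ⟨(W N).indicator (fun _ => (1:ℝ)),
      aestronglyMeasurable_const.indicator (hWm N), ?_, ?_⟩
    · obtain ⟨s, hsU, -, hsDisj⟩ := disjointify hd cc rrr N
      have hWeq : (W N).indicator (fun _ => (1:ℝ)) =
          ∑ k ∈ s, (closedBall (cc k) (rrr k)).indicator (fun _ => (1:ℝ)) := by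
        rw [hW]
        simp only []
        rw [← hsU]
        exact indicator_biUnion_eq_sum hsDisj
      rw [hWeq]
      apply approxIn_sum s _ hTm
      · exact fun k _ => aestronglyMeasurable_const.indicator measurableSet_closedBall
      · exact fun k _ => hball _ ⟨cc k, rrr k, hrad1 _, rfl⟩
    · have heq : U.indicator (fun _ => (1:ℝ)) - (W N).indicator (fun _ => (1:ℝ)) =
          (U \ W N).indicator (fun _ => (1:ℝ)) := by
        funext x
        by_cases hx1 : x ∈ W N
        · have hx2 : x ∈ U := hWsubU N hx1
          have hx3 : x ∉ U \ W N := fun h => h.2 hx1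
          simp [Set.indicator_of_mem hx1, Set.indicator_of_mem hx2, Set.indicator_of_notMem hx3]
        · by_cases hx2 : x ∈ U
          · have hx3 : x ∈ U \ W N := ⟨hx2, hx1⟩
            simp [Set.indicator_of_notMem hx1, Set.indicator_of_mem hx2,
              Set.indicator_of_mem hx3]
          · have hx3 : x ∉ U \ W N := fun h => hx2 h.1
            simp [Set.indicator_of_notMem hx1, Set.indicator_of_notMem hx2,
              Set.indicator_of_notMem hx3]
      rw [heq]
      exact eLpNorm_indicator_one_le (hdm N) hδ.le hN.le

theorem meas_approx [TopologicalSpace.SeparableSpace X]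
    (hd : ∀ x y z : X, dist x z ≤ max (dist x y) (dist y z))
    (hcb : ∀ (x : X) (r : ℝ), IsCompact (closedBall x r))
    (μ : Measure X)
    (hμfin : ∀ (x : X) (r : ℝ), 0 < r → μ (closedBall x r) < ⊤)
    (T : Set (X → ℝ))
    (hTm : ∀ g ∈ Submodule.span ℝ T, AEStronglyMeasurable g μ)
    (hball : ∀ C : Set X, IsBallSet C → ApproxIn μ T (C.indicator fun _ => (1:ℝ)))
    {E : Set X} (hEm : MeasurableSet E) (hEfin : μ E ≠ ⊤) :
    ApproxIn μ T (E.indicator fun _ => (1:ℝ)) := by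
  cases isEmpty_or_nonempty X with
  | inl h =>
    intro ε hε
    refine ⟨0, Submodule.zero_mem _, ?_⟩
    have hμ0 : μ = 0 := Measure.eq_zero_of_isEmpty μ
    rw [hμ0]
    simp only [eLpNorm_measure_zero]
    exact ENNReal.ofReal_pos.2 hε
  | inr hne =>
    haveI := UniformSpace.secondCountable_of_separable X
    obtain ⟨x₀⟩ := hne
    haveI : SigmaCompactSpace X :=
      ⟨⟨fun n => closedBall x₀ n, fun n => hcb _ _, iUnion_closedBall_nat x₀⟩⟩
    haveI : IsLocallyFiniteMeasure μ :=
      ⟨fun x => ⟨closedBall x 1, closedBall_mem_nhds x one_pos, hμfin x 1 one_pos⟩⟩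
    haveI : μ.Regular := Measure.Regular.of_sigmaCompactSpace_of_isLocallyFiniteMeasure μ
    apply approxIn_closed hTm (aestronglyMeasurable_const.indicator hEm)
    intro δ hδ
    set D : ℕ → Set X := fun j => E \ closedBall x₀ j with hD
    have hDm : ∀ j, MeasurableSet (D j) := fun j => hEm.diff measurableSet_closedBall
    have hDt : Tendsto (fun j => μ (D j)) atTop (nhds 0) := by
      have hI : (⋂ j, D j) = ∅ := by
        rw [hD]
        simp only []
        rw [← Set.diff_iUnion, iUnion_closedBall_nat, Set.diff_univ]
      have hanti : Antitone D := by
        intro j k h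
        apply Set.diff_subset_diff_right
        exact closedBall_subset_closedBall (Nat.cast_le.2 h)
      have h := tendsto_measure_iInter_atTop (μ := μ) (fun j => (hDm j).nullMeasurableSet) hanti
        ⟨0, ((measure_mono Set.diff_subset).trans_lt hEfin.lt_top).ne⟩
      rw [hI] at h
      simpa [Function.comp_def] using h
    obtain ⟨j, hj⟩ := (hDt.eventually_lt_const
      (show (0:ℝ≥0∞) < ENNReal.ofReal ((δ/2)^2) from ENNReal.ofReal_pos.2 (by positivity))).exists
    set E' := E ∩ closedBall x₀ j with hE'
    have hE'm : MeasurableSet E' := hEm.inter measurableSet_closedBall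
    have hE'fin : μ E' ≠ ⊤ := ((measure_mono Set.inter_subset_left).trans_lt hEfin.lt_top).ne
    obtain ⟨U, hUE', hUopen, hUfin, hUd⟩ := hE'm.exists_isOpen_diff_lt hE'fin
      (show ENNReal.ofReal ((δ/2)^2) ≠ 0 from (ENNReal.ofReal_pos.2 (by positivity)).ne')
    refine ⟨U.indicator (fun _ => (1:ℝ)),
      aestronglyMeasurable_const.indicator hUopen.measurableSet,
      approx_open hd μ T hTm hball hUopen hUfin.ne, ?_⟩
    have heq : E.indicator (fun _ => (1:ℝ)) - U.indicator (fun _ => (1:ℝ)) =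
        (E \ U).indicator (fun _ => (1:ℝ)) - (U \ E).indicator (fun _ => (1:ℝ)) := by
      funext x
      by_cases hx1 : x ∈ E <;> by_cases hx2 : x ∈ U
      · have h3 : x ∉ E \ U := fun h => h.2 hx2
        have h4 : x ∉ U \ E := fun h => h.2 hx1
        simp [Set.indicator_of_mem hx1, Set.indicator_of_mem hx2,
          Set.indicator_of_notMem h3, Set.indicator_of_notMem h4]
      · have h3 : x ∈ E \ U := ⟨hx1, hx2⟩
        have h4 : x ∉ U \ E := fun h => hx2 h.1
        simp [Set.indicator_of_mem hx1, Set.indicator_of_notMem hx2,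
          Set.indicator_of_mem h3, Set.indicator_of_notMem h4]
      · have h3 : x ∉ E \ U := fun h => hx1 h.1
        have h4 : x ∈ U \ E := ⟨hx2, hx1⟩
        simp [Set.indicator_of_notMem hx1, Set.indicator_of_mem hx2,
          Set.indicator_of_notMem h3, Set.indicator_of_mem h4]
      · have h3 : x ∉ E \ U := fun h => hx1 h.1
        have h4 : x ∉ U \ E := fun h => hx2 h.1
        simp [Set.indicator_of_notMem hx1, Set.indicator_of_notMem hx2,
          Set.indicator_of_notMem h3, Set.indicator_of_notMem h4]
    rw [heq]
    have hEU : μ (E \ U) ≤ ENNReal.ofReal ((δ/2)^2) := by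
      have hsub : E \ U ⊆ D j := by
        intro x hx
        refine ⟨hx.1, ?_⟩
        intro hxb
        exact hx.2 (hUE' ⟨hx.1, hxb⟩)
      exact (measure_mono hsub).trans hj.le
    have hUE : μ (U \ E) ≤ ENNReal.ofReal ((δ/2)^2) := by
      have hsub : U \ E ⊆ U \ E' := fun x hx => ⟨hx.1, fun h => hx.2 h.1⟩
      exact (measure_mono hsub).trans hUd.le
    calc eLpNorm ((E \ U).indicator (fun _ => (1:ℝ)) - (U \ E).indicator (fun _ => (1:ℝ))) 2 μ
        ≤ eLpNorm ((E \ U).indicator (fun _ => (1:ℝ))) 2 μ +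
          eLpNorm ((U \ E).indicator (fun _ => (1:ℝ))) 2 μ :=
          eLpNorm_sub_le (aestronglyMeasurable_const.indicator (hEm.diff hUopen.measurableSet))
            (aestronglyMeasurable_const.indicator (hUopen.measurableSet.diff hEm)) one_le_two
    _ ≤ ENNReal.ofReal (δ/2) + ENNReal.ofReal (δ/2) :=
          add_le_add
            (eLpNorm_indicator_one_le (hEm.diff hUopen.measurableSet) (by positivity) hEU)
            (eLpNorm_indicator_one_le (hUopen.measurableSet.diff hEm) (by positivity) hUE)
    _ = ENNReal.ofReal δ := by
          rw [← ENNReal.ofReal_add (by positivity) (by positivity)]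
          ring_nf
end MeasApprox

section Final
variable {X : Type*} [MetricSpace X] [MeasurableSpace X] [BorelSpace X]

theorem memlp_approx [TopologicalSpace.SeparableSpace X]
    (hd : ∀ x y z : X, dist x z ≤ max (dist x y) (dist y z))
    (hcb : ∀ (x : X) (r : ℝ), IsCompact (closedBall x r))
    (μ : Measure X)
    (hμfin : ∀ (x : X) (r : ℝ), 0 < r → μ (closedBall x r) < ⊤)
    (T : Set (X → ℝ))
    (hTm : ∀ g ∈ Submodule.span ℝ T, AEStronglyMeasurable g μ)
    (hball : ∀ C : Set X, IsBallSet C → ApproxIn μ T (C.indicator fun _ => (1:ℝ)))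
    {h : X → ℝ} (hh : MemLp h 2 μ) : ApproxIn μ T h := by
  intro ε hε
  obtain ⟨sf, hsfe, hsfm⟩ := hh.exists_simpleFunc_eLpNorm_sub_lt ENNReal.ofNat_ne_top
    (show ENNReal.ofReal (ε/2) ≠ 0 from (ENNReal.ofReal_pos.2 (by positivity)).ne')
  have hrepr : (⇑sf : X → ℝ) = ∑ y ∈ sf.range, Set.indicator (⇑sf ⁻¹' {y}) (fun _ => y) := by
    funext x
    rw [Finset.sum_apply, Finset.sum_eq_single (sf x)]
    · rw [Set.indicator_of_mem (show x ∈ ⇑sf ⁻¹' {sf x} from rfl)]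
    · intro y _ hne
      apply Set.indicator_of_notMem
      intro hx
      exact hne (Set.mem_singleton_iff.1 hx).symm
    · intro h0
      exact absurd (SimpleFunc.mem_range_self sf x) h0
  have hsfapprox : ApproxIn μ T (⇑sf) := by
    rw [hrepr]
    apply approxIn_sum _ _ hTm
    · exact fun y _ =>
        aestronglyMeasurable_const.indicator (sf.measurableSet_preimage {y})
    · intro y _
      by_cases hy : y = 0
      · subst hy
        have h0 : Set.indicator (⇑sf ⁻¹' {(0:ℝ)}) (fun _ => (0:ℝ)) = 0 := by
          funext x
          simp [Set.indicator_apply]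
        rw [h0]
        exact approxIn_zero
      · have hfin : μ (⇑sf ⁻¹' {y}) ≠ ⊤ :=
          (SimpleFunc.measure_preimage_lt_top_of_memLp two_ne_zero ENNReal.ofNat_ne_top
            sf hsfm y hy).ne
        have heq : Set.indicator (⇑sf ⁻¹' {y}) (fun _ => y) =
            y • Set.indicator (⇑sf ⁻¹' {y}) (fun _ => (1:ℝ)) := by
          funext x
          by_cases hx : x ∈ ⇑sf ⁻¹' {y} <;>
            simp [Set.indicator_apply, hx]
        rw [heq]
        exact approxIn_smul
          (meas_approx hd hcb μ hμfin T hTm hball (sf.measurableSet_preimage {y}) hfin) y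
  obtain ⟨g, hg, hgε⟩ := hsfapprox (ε/3) (by positivity)
  refine ⟨g, hg, ?_⟩
  have heq2 : h - g = (h - ⇑sf) + (⇑sf - g) := by ring
  rw [heq2]
  calc eLpNorm ((h - ⇑sf) + (⇑sf - g)) 2 μ
      ≤ eLpNorm (h - ⇑sf) 2 μ + eLpNorm (⇑sf - g) 2 μ :=
        eLpNorm_add_le (hh.aestronglyMeasurable.sub hsfm.aestronglyMeasurable)
          (hsfm.aestronglyMeasurable.sub (hTm g hg)) one_le_two
  _ < ENNReal.ofReal (ε/2) + ENNReal.ofReal (ε/3) := ENNReal.add_lt_add hsfe hgε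
  _ ≤ ENNReal.ofReal ε := by
        rw [← ENNReal.ofReal_add (by positivity) (by positivity)]
        apply ENNReal.ofReal_le_ofReal
        linarith
end Final

theorem statement_13
    {X : Type*} [MetricSpace X] [TopologicalSpace.SeparableSpace X]
    [MeasurableSpace X] [BorelSpace X]
    (hd : ∀ x y z : X, dist x z ≤ max (dist x y) (dist y z))
    (hcb : ∀ (x : X) (r : ℝ), IsCompact (closedBall x r))
    (μ : Measure X)
    (hμpos : ∀ (x : X) (r : ℝ), 0 < r → 0 < μ (closedBall x r))
    (hμfin : ∀ (x : X) (r : ℝ), 0 < r → μ (closedBall x r) < ⊤)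
    (σ : ℝ → ℝ)
    (hσmono : StrictMonoOn σ (Set.Ici 0))
    (hσrange : ∀ r : ℝ, 0 ≤ r → σ r ∈ Set.Icc (0:ℝ) 1)
    (hσlc : ∀ r : ℝ, 0 < r → ContinuousWithinAt σ (Set.Iic r) r)
    (hσzero : Tendsto σ (nhdsWithin 0 (Set.Ioi 0)) (nhds 0))
    (hσtop : Tendsto σ atTop (nhds 1))
    (ν : Measure ℝ)
    (hν : ∀ a b : ℝ, 0 ≤ a → a ≤ b →
      ν (Set.Ico a b) = ENNReal.ofReal (σ b - σ a))
    (hνneg : ν (Set.Iio 0) = 0)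
 :
    (∀ C B : Set X, IsBallSet C → C ≠ Set.univ → IsParent B C →
      (∀ s : ℝ, 0 < s → s < minRad B →
        ∀ x : X, avgOp μ s (eigenFn μ C B) x = eigenFn μ C B x) ∧
      (∀ s : ℝ, minRad B ≤ s →
        ∀ x : X, avgOp μ s (eigenFn μ C B) x = 0) ∧
      (∀ x : X, isoOp μ ν (eigenFn μ C B) x = σ (minRad B) * eigenFn μ C B x)) ∧
    (μ Set.univ = ⊤ →
      ∀ h : X → ℝ, MemLp h 2 μ → ∀ ε : ℝ, 0 < ε →
        ∃ g ∈ Submodule.span ℝ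
            {f : X → ℝ | ∃ C B : Set X,
              IsBallSet C ∧ C ≠ Set.univ ∧ IsParent B C ∧ f = eigenFn μ C B},
          eLpNorm (h - g) 2 μ < ENNReal.ofReal ε) ∧
    (μ Set.univ < ⊤ →
      ∀ h : X → ℝ, MemLp h 2 μ → ∀ ε : ℝ, 0 < ε →
        ∃ g ∈ Submodule.span ℝ
            (insert (fun _ : X => (1:ℝ))
              {f : X → ℝ | ∃ C B : Set X,
                IsBallSet C ∧ C ≠ Set.univ ∧ IsParent B C ∧ f = eigenFn μ C B}),
          eLpNorm (h - g) 2 μ < ENNReal.ofReal ε) := by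
  have hσ00 : σ 0 = 0 := by
    have h1 : 0 ≤ σ 0 := (hσrange 0 le_rfl).1
    have h2 : σ 0 ≤ 0 := by
      refine ge_of_tendsto hσzero ?_
      filter_upwards [eventually_mem_nhdsWithin] with r hr
      exact (hσmono Set.self_mem_Ici (Set.mem_Ici.2 (le_of_lt hr)) hr).le
    linarith
  have hν0 : ν {0} = 0 := by
    have hle : ∀ n : ℕ, ν {0} ≤ ENNReal.ofReal (σ (1/(n+1))) := by
      intro n
      have h := hν 0 (1/(n+1)) le_rfl (by positivity)
      rw [hσ00, sub_zero] at h
      refine le_trans (measure_mono ?_) h.le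
      intro x hx
      rw [Set.mem_singleton_iff] at hx
      subst hx
      exact ⟨le_rfl, by positivity⟩
    have htend : Tendsto (fun n : ℕ => ENNReal.ofReal (σ (1/(n+1)))) atTop (nhds 0) := by
      have h1 : Tendsto (fun n : ℕ => (1:ℝ)/(n+1)) atTop (nhdsWithin 0 (Set.Ioi 0)) := by
        apply tendsto_nhdsWithin_of_tendsto_nhds_of_eventually_within
        · exact tendsto_one_div_add_atTop_nhds_zero_nat
        · exact Eventually.of_forall (fun n => Set.mem_Ioi.2 (by positivity))
      have h2 := hσzero.comp h1
      have h3 := (ENNReal.continuous_ofReal.tendsto 0).comp h2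
      simpa [Function.comp_def] using h3
    have := ge_of_tendsto htend (Eventually.of_forall hle)
    exact le_antisymm this zero_le
  refine ⟨?_, ?_, ?_⟩
  · intro C B hC hCne hP
    refine ⟨fun s hs hsB x => avg_eigen_lt hd μ hμpos hμfin hC hP hs hsB x,
      fun s hsB x => avg_eigen_ge hd μ hμpos hμfin hC hP hsB x,
      fun x => iso_eigen hd μ hμpos hμfin hC hP σ hσ00
        ((hσrange (minRad B) (minRad_nonneg B hP.1)).1) ν hν hν0 x⟩
  · intro hμinf h hh ε hε
    set T : Set (X → ℝ) := {f : X → ℝ | ∃ C B : Set X,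
      IsBallSet C ∧ C ≠ Set.univ ∧ IsParent B C ∧ f = eigenFn μ C B} with hTdef
    have hT : ∀ C B : Set X, IsBallSet C → C ≠ Set.univ → IsParent B C → eigenFn μ C B ∈ T :=
      fun C B h1 h2 h3 => ⟨C, B, h1, h2, h3, rfl⟩
    have hTm0 : ∀ f ∈ T, AEStronglyMeasurable f μ := by
      rintro f ⟨C, B, h1, h2, h3, rfl⟩
      exact eigenFn_aestronglyMeasurable μ h1 h3.1
    have hTm := span_aestronglyMeasurable μ hTm0
    have hball : ∀ C : Set X, IsBallSet C → ApproxIn μ T (C.indicator fun _ => (1:ℝ)) :=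
      fun C hC ε' hε' => ball_approx_inf hd hcb μ hμpos hμfin T hT hμinf hC hε'
    exact memlp_approx hd hcb μ hμfin T hTm hball hh ε hε
  · intro hμtot h hh ε hε
    set T : Set (X → ℝ) := insert (fun _ : X => (1:ℝ)) {f : X → ℝ | ∃ C B : Set X,
      IsBallSet C ∧ C ≠ Set.univ ∧ IsParent B C ∧ f = eigenFn μ C B} with hTdef
    have hT : ∀ C B : Set X, IsBallSet C → C ≠ Set.univ → IsParent B C → eigenFn μ C B ∈ T :=
      fun C B h1 h2 h3 => Set.mem_insert_of_mem _ ⟨C, B, h1, h2, h3, rfl⟩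
    have h1T : (fun _ : X => (1:ℝ)) ∈ T := Set.mem_insert _ _
    have hTm0 : ∀ f ∈ T, AEStronglyMeasurable f μ := by
      rintro f (rfl | ⟨C, B, h1, h2, h3, rfl⟩)
      · exact aestronglyMeasurable_const
      · exact eigenFn_aestronglyMeasurable μ h1 h3.1
    have hTm := span_aestronglyMeasurable μ hTm0
    have hball : ∀ C : Set X, IsBallSet C → ApproxIn μ T (C.indicator fun _ => (1:ℝ)) :=
      fun C hC ε' hε' => ball_approx_fin hd hcb μ hμpos hμfin T hT hμtot h1T hC hε'
    exact memlp_approx hd hcb μ hμfin T hTm hball hh ε hε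
end

section
/- For every x ∈ X, the set Λ(x) = {d(x,y) : y ∈ X, y ≠ x} of distances from x has no accumulation point in (0,∞); consequently Λ(x) is at most countable. -/
open MeasureTheory Metric Filter
open scoped ENNReal Classical

private lemma ultra_iso {X : Type*} [MetricSpace X]
    (hd : ∀ x y z : X, dist x z ≤ max (dist x y) (dist y z))
    (x y z : X) (h : dist y z < dist x y) : dist x z = dist x y := by
  refine le_antisymm ((hd x y z).trans (max_le le_rfl h.le)) ?_
  have h2 := hd x z y
  rcases max_cases (dist x z) (dist z y) with ⟨he, _⟩ | ⟨he, _⟩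
  · rwa [he] at h2
  · rw [he] at h2
    rw [dist_comm z y] at h2
    exact absurd (h2.trans_lt h) (lt_irrefl _)

private lemma annulus_finite {X : Type*} [MetricSpace X]
    (hd : ∀ x y z : X, dist x z ≤ max (dist x y) (dist y z))
    (hcb : ∀ (x : X) (r : ℝ), IsCompact (closedBall x r))
    (x : X) (r : ℝ) (hr : 0 < r) :
    ({s : ℝ | ∃ y : X, y ≠ x ∧ s = dist x y} ∩ Set.Ioo (r/2) (2*r)).Finite := by
  set f : X → ℝ := fun y => dist x y with hf
  set K : Set X := f ⁻¹' Set.Icc (r/2) (2*r) with hK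
  have hKclosed : IsClosed K :=
    IsClosed.preimage (Continuous.dist continuous_const continuous_id) isClosed_Icc
  have hKsub : K ⊆ closedBall x (2*r) := by
    intro y hy
    rw [mem_closedBall, dist_comm]
    exact hy.2
  have hKcomp : IsCompact K := (hcb x (2*r)).of_isClosed_subset hKclosed hKsub
  obtain ⟨t, htK, hcover⟩ := hKcomp.elim_nhds_subcover (fun y => ball y (r/2))
    (fun y _ => ball_mem_nhds y (by positivity))
  have : ({s : ℝ | ∃ y : X, y ≠ x ∧ s = dist x y} ∩ Set.Ioo (r/2) (2*r)) ⊆ f '' ↑t := by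
    rintro s ⟨⟨y, -, rfl⟩, hs⟩
    have hyK : y ∈ K := ⟨hs.1.le, hs.2.le⟩
    obtain ⟨y₀, hy₀t, hy₀⟩ := Set.mem_iUnion₂.mp (hcover hyK)
    have hy₀K : y₀ ∈ K := htK y₀ hy₀t
    have : dist x y = dist x y₀ := by
      have hlt : dist y₀ y < dist x y₀ := lt_of_lt_of_le (by
        rw [dist_comm]; exact mem_ball.mp hy₀) hy₀K.1
      exact ultra_iso hd x y₀ y hlt
    exact ⟨y₀, hy₀t, this.symm⟩
  exact Set.Finite.subset ((t.finite_toSet).image f) this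

theorem statement_14
    {X : Type*} [MetricSpace X] [TopologicalSpace.SeparableSpace X]
    (hd : ∀ x y z : X, dist x z ≤ max (dist x y) (dist y z))
    (hcb : ∀ (x : X) (r : ℝ), IsCompact (closedBall x r))
    (x : X) :
    (∀ r : ℝ, 0 < r →
      ¬ AccPt r (Filter.principal {s : ℝ | ∃ y : X, y ≠ x ∧ s = dist x y})) ∧
    Set.Countable {s : ℝ | ∃ y : X, y ≠ x ∧ s = dist x y} := by
  set Λ : Set ℝ := {s : ℝ | ∃ y : X, y ≠ x ∧ s = dist x y} with hΛ
  have hnoacc : ∀ r : ℝ, 0 < r → ¬ AccPt r (𝓟 Λ) := by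
    intro r hr hacc
    have hU : Set.Ioo (r/2) (2*r) ∈ nhds r :=
      isOpen_Ioo.mem_nhds ⟨by linarith, by linarith⟩
    have hacc2 : AccPt r (𝓟 (Set.Ioo (r/2) (2*r) ∩ Λ)) := hacc.nhds_inter hU
    have hfin : (Set.Ioo (r/2) (2*r) ∩ Λ).Finite := by
      rw [Set.inter_comm]; exact annulus_finite hd hcb x r hr
    rw [accPt_principal_iff_clusterPt] at hacc2
    have hmem : r ∈ closure ((Set.Ioo (r/2) (2*r) ∩ Λ) \ {r}) :=
      mem_closure_iff_clusterPt.mpr hacc2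
    rw [((hfin.diff (t := {r})).isClosed).closure_eq] at hmem
    exact hmem.2 rfl
  refine ⟨hnoacc, ?_⟩
  have hsub : Λ ⊆ ⋃ q : ℚ, (Λ ∩ Set.Ioo ((q : ℝ)/2) (2*(q : ℝ))) := by
    rintro s ⟨y, hy, rfl⟩
    have hs : 0 < dist x y := dist_pos.mpr (Ne.symm hy)
    obtain ⟨q, hq1, hq2⟩ := exists_rat_btwn (half_lt_self hs)
    refine Set.mem_iUnion.mpr ⟨q, ⟨y, hy, rfl⟩, ?_, ?_⟩
    · have : (0:ℝ) < q := lt_trans (by linarith) hq1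
      linarith
    · linarith
  refine Set.Countable.mono hsub (Set.countable_iUnion fun q => ?_)
  by_cases hq : 0 < (q : ℝ)
  · exact (annulus_finite hd hcb x q hq).countable
  · have : Set.Ioo ((q : ℝ)/2) (2*(q : ℝ)) = ∅ := Set.Ioo_eq_empty (by push_neg at hq; intro h; linarith)
    rw [this, Set.inter_empty]
    exact Set.countable_empty
end

section
/- (Strong Liouville property) If f : X → [0,∞) is a Borel function satisfying P f(x) = f(x) for every x ∈ X, then f is constant. -/
open MeasureTheory Metric Filter
open scoped ENNReal Classical

set_option maxHeartbeats 4000000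
set_option linter.unusedSectionVars false

/-- The averaging operator on non-negative functions. -/
noncomputable def avgLin {X : Type*} [MetricSpace X] [MeasurableSpace X]
    (μ : Measure X) (r : ℝ) (f : X → ℝ≥0∞) (x : X) : ℝ≥0∞ :=
  (μ (closedBall x r))⁻¹ * ∫⁻ y in closedBall x r, f y ∂μ

/-- The isotropic Markov operator on non-negative functions. -/
noncomputable def isoLin {X : Type*} [MetricSpace X] [MeasurableSpace X]
    (μ : Measure X) (ν : Measure ℝ) (f : X → ℝ≥0∞) (x : X) : ℝ≥0∞ :=
  ∫⁻ r in Set.Ici (0:ℝ), avgLin μ r f x ∂ν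

section Aux

variable {X : Type*} [MetricSpace X] [TopologicalSpace.SeparableSpace X]
  [MeasurableSpace X] [BorelSpace X]

/-- In an ultrametric space, two closed balls of the same radius containing each
other's center coincide. -/
lemma ultra_ball_eq (hd : ∀ x y z : X, dist x z ≤ max (dist x y) (dist y z))
    {x y : X} {r : ℝ} (h : dist x y ≤ r) : closedBall x r = closedBall y r := by
  ext z
  simp only [mem_closedBall]
  constructor
  · intro hz
    calc dist z y ≤ max (dist z x) (dist x y) := hd z x y
      _ ≤ r := max_le hz h
  · intro hz
    calc dist z x ≤ max (dist z y) (dist y x) := hd z y x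
      _ ≤ r := max_le hz (by rwa [dist_comm])

lemma measurable_ball_lintegral (μ : Measure X) [SFinite μ] {g : X → ℝ≥0∞}
    (hg : Measurable g) :
    Measurable fun p : X × ℝ => ∫⁻ w in closedBall p.1 p.2, g w ∂μ := by
  haveI : SecondCountableTopology X := UniformSpace.secondCountable_of_separable X
  have hind : Measurable fun q : (X × ℝ) × X =>
      Set.indicator (closedBall q.1.1 q.1.2) g q.2 := by
    have heq : (fun q : (X × ℝ) × X => Set.indicator (closedBall q.1.1 q.1.2) g q.2)
        = Set.indicator {q : (X × ℝ) × X | dist q.2 q.1.1 ≤ q.1.2} (fun q => g q.2) := by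
      ext q
      by_cases h : dist q.2 q.1.1 ≤ q.1.2 <;>
        simp [Set.indicator, h, mem_closedBall]
    rw [heq]
    have hset : MeasurableSet {q : (X × ℝ) × X | dist q.2 q.1.1 ≤ q.1.2} := by
      have : IsClosed {q : (X × ℝ) × X | dist q.2 q.1.1 ≤ q.1.2} :=
        isClosed_le (by fun_prop) (by fun_prop)
      exact this.measurableSet
    exact (hg.comp measurable_snd).indicator hset
  have := hind.lintegral_prod_right' (ν := μ)
  simpa only [lintegral_indicator measurableSet_closedBall] using this

lemma measurable_ball_measure (μ : Measure X) [SFinite μ] :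
    Measurable fun p : X × ℝ => μ (closedBall p.1 p.2) := by
  have := measurable_ball_lintegral (μ := μ) (g := fun _ => (1 : ℝ≥0∞)) measurable_const
  simpa only [setLIntegral_one] using this

lemma measurable_avgLin (μ : Measure X) [SFinite μ] {g : X → ℝ≥0∞}
    (hg : Measurable g) :
    Measurable fun p : X × ℝ => avgLin μ p.2 g p.1 :=
  ((measurable_ball_measure μ).inv).mul (measurable_ball_lintegral μ hg)

/-- Key identity: averaging at a smaller radius preserves the integral over a ball. -/
lemma avg_integral_eq (hd : ∀ x y z : X, dist x z ≤ max (dist x y) (dist y z))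
    (μ : Measure X) [SigmaFinite μ]
    (hμpos : ∀ (x : X) (r : ℝ), 0 < r → 0 < μ (closedBall x r))
    (hμfin : ∀ (x : X) (r : ℝ), 0 < r → μ (closedBall x r) < ⊤)
    {g : X → ℝ≥0∞} (hg : Measurable g)
    {x : X} {r a : ℝ} (hr : 0 < r) (hra : r ≤ a) :
    ∫⁻ z in closedBall x a, avgLin μ r g z ∂μ = ∫⁻ z in closedBall x a, g z ∂μ := by
  haveI : SecondCountableTopology X := UniformSpace.secondCountable_of_separable X
  set B := closedBall x a with hB
  have hBmeas : MeasurableSet B := measurableSet_closedBall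
  set G : X → X → ℝ≥0∞ := fun z w =>
    Set.indicator (closedBall z r) (fun w => (μ (closedBall z r))⁻¹ * g w) w with hG
  have h1 : ∀ z, avgLin μ r g z = ∫⁻ w, G z w ∂μ := by
    intro z
    rw [avgLin, ← lintegral_const_mul _ hg, hG]
    simp only
    rw [lintegral_indicator measurableSet_closedBall]
  have hGmeas : Measurable fun q : X × X => G q.1 q.2 := by
    have heq : (fun q : X × X => G q.1 q.2)
        = Set.indicator {q : X × X | dist q.2 q.1 ≤ r}
            (fun q => (μ (closedBall q.1 r))⁻¹ * g q.2) := by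
      ext q
      by_cases h : dist q.2 q.1 ≤ r <;>
        simp [hG, Set.indicator, h, mem_closedBall]
    rw [heq]
    have hset : MeasurableSet {q : X × X | dist q.2 q.1 ≤ r} :=
      (isClosed_le (by fun_prop) (by fun_prop)).measurableSet
    have hm1 : Measurable fun q : X × X => (μ (closedBall q.1 r))⁻¹ := by
      have hc : Measurable fun q : X × X => ((q.1, r) : X × ℝ) :=
        measurable_fst.prodMk measurable_const
      exact ((measurable_ball_measure μ).comp hc).inv
    exact (hm1.mul (hg.comp measurable_snd)).indicator hset
  have hswap : ∫⁻ z in B, ∫⁻ w, G z w ∂μ ∂μ = ∫⁻ w, ∫⁻ z in B, G z w ∂μ ∂μ :=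
    lintegral_lintegral_swap hGmeas.aemeasurable
  have h2 : ∀ w, ∫⁻ z in B, G z w ∂μ = B.indicator g w := by
    intro w
    have hGw : ∀ z, G z w = Set.indicator (closedBall w r)
        (fun _ => (μ (closedBall w r))⁻¹ * g w) z := by
      intro z
      by_cases h : dist w z ≤ r
      · have hzw : dist z w ≤ r := by rwa [dist_comm]
        have hball : closedBall z r = closedBall w r := ultra_ball_eq hd hzw
        simp [hG, Set.indicator, mem_closedBall, h, hzw, hball]
      · have hzw : ¬ dist z w ≤ r := by rwa [dist_comm] at h
        simp [hG, Set.indicator, mem_closedBall, h, hzw]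
    rw [lintegral_congr hGw, lintegral_indicator_const measurableSet_closedBall,
      Measure.restrict_apply measurableSet_closedBall]
    by_cases hw : w ∈ B
    · have hsub : closedBall w r ⊆ B := by
        intro z hz
        rw [hB, mem_closedBall]
        calc dist z x ≤ max (dist z w) (dist w x) := hd z w x
          _ ≤ a := max_le ((mem_closedBall.1 hz).trans hra) (mem_closedBall.1 hw)
      rw [Set.inter_eq_self_of_subset_left hsub]
      rw [Set.indicator_of_mem hw]
      rw [mul_comm, ← mul_assoc, ENNReal.mul_inv_cancel (hμpos w r hr).ne'
        (hμfin w r hr).ne, one_mul]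
    · have hempty : closedBall w r ∩ B = ∅ := by
        ext z
        simp only [Set.mem_inter_iff, Set.mem_empty_iff_false, iff_false, not_and]
        intro hz hzB
        refine hw ?_
        have hwz : dist w z ≤ r := by
          rw [dist_comm]; exact mem_closedBall.1 hz
        rw [hB, mem_closedBall]
        calc dist w x ≤ max (dist w z) (dist z x) := hd w z x
          _ ≤ a := max_le (hwz.trans hra) (mem_closedBall.1 hzB)
      rw [hempty, Set.indicator_of_notMem hw, measure_empty, mul_zero]
  calc ∫⁻ z in B, avgLin μ r g z ∂μ = ∫⁻ z in B, ∫⁻ w, G z w ∂μ ∂μ :=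
        lintegral_congr fun z => h1 z
    _ = ∫⁻ w, ∫⁻ z in B, G z w ∂μ ∂μ := hswap
    _ = ∫⁻ w, B.indicator g w ∂μ := lintegral_congr h2
    _ = ∫⁻ z in B, g z ∂μ := lintegral_indicator hBmeas g

end Aux

theorem statement_15
    {X : Type*} [MetricSpace X] [TopologicalSpace.SeparableSpace X]
    [MeasurableSpace X] [BorelSpace X]
    (hd : ∀ x y z : X, dist x z ≤ max (dist x y) (dist y z))
    (hcb : ∀ (x : X) (r : ℝ), IsCompact (closedBall x r))
    (μ : Measure X)
    (hμpos : ∀ (x : X) (r : ℝ), 0 < r → 0 < μ (closedBall x r))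
    (hμfin : ∀ (x : X) (r : ℝ), 0 < r → μ (closedBall x r) < ⊤)
    (σ : ℝ → ℝ)
    (hσmono : StrictMonoOn σ (Set.Ici 0))
    (hσrange : ∀ r : ℝ, 0 ≤ r → σ r ∈ Set.Icc (0:ℝ) 1)
    (hσlc : ∀ r : ℝ, 0 < r → ContinuousWithinAt σ (Set.Iic r) r)
    (hσzero : Tendsto σ (nhdsWithin 0 (Set.Ioi 0)) (nhds 0))
    (hσtop : Tendsto σ atTop (nhds 1))
    (ν : Measure ℝ)
    (hν : ∀ a b : ℝ, 0 ≤ a → a ≤ b →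
      ν (Set.Ico a b) = ENNReal.ofReal (σ b - σ a))
    (hνneg : ν (Set.Iio 0) = 0)
    (f : X → ℝ) (hf : Measurable f) (hf0 : ∀ x : X, 0 ≤ f x)
    (hharm : ∀ x : X,
      isoLin μ ν (fun y => ENNReal.ofReal (f y)) x = ENNReal.ofReal (f x)) :
    ∀ x y : X, f x = f y := by
  intro x y
  -- trivial case
  rcases eq_or_ne x y with rfl | hxy
  · rfl
  set d := dist x y with hdd
  have hd0 : 0 < d := dist_pos.2 hxy
  -- σ basic facts
  have hσ0 : σ 0 = 0 := by
    rcases lt_trichotomy (σ 0) 0 with h | h | h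
    · exact absurd h (not_lt.2 (hσrange 0 le_rfl).1)
    · exact h
    · have hev : ∀ᶠ b in nhdsWithin 0 (Set.Ioi 0), σ b < σ 0 :=
        hσzero.eventually_lt_const h
      obtain ⟨b, hb1, hb2⟩ := (hev.and self_mem_nhdsWithin).exists
      exact absurd (hσmono (Set.mem_Ici.2 le_rfl) (le_of_lt hb2) hb2) (not_lt.2 hb1.le)
  have hσlt1 : ∀ r : ℝ, 0 ≤ r → σ r < 1 :=
    fun r hr => lt_of_lt_of_le
      (hσmono hr (by linarith : (0:ℝ) ≤ r + 1) (lt_add_one r))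
      (hσrange (r + 1) (by linarith)).2
  -- ν is a finite measure
  have hIci1 : ν (Set.Ici (0:ℝ)) ≤ 1 := by
    have hun : Set.Ici (0:ℝ) = ⋃ n : ℕ, Set.Ico (0:ℝ) n := by
      ext r
      simp only [Set.mem_Ici, Set.mem_iUnion, Set.mem_Ico]
      constructor
      · intro hr
        obtain ⟨n, hn⟩ := exists_nat_gt r
        exact ⟨n, hr, hn⟩
      · rintro ⟨n, hn, -⟩
        exact hn
    rw [hun, Directed.measure_iUnion]
    · refine iSup_le fun n => ?_
      rcases Nat.eq_zero_or_pos n with rfl | hn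
      · simp
      · rw [hν 0 n le_rfl (by exact_mod_cast hn.le)]
        refine ENNReal.ofReal_le_one.2 ?_
        have h1 := (hσrange n (by positivity)).2
        have h2 := (hσrange 0 le_rfl).1
        linarith
    · intro m n
      rcases le_total m n with h | h
      · exact ⟨n, Set.Ico_subset_Ico_right (by exact_mod_cast h), subset_rfl⟩
      · exact ⟨m, subset_rfl, Set.Ico_subset_Ico_right (by exact_mod_cast h)⟩
  haveI : IsFiniteMeasure ν := by
    constructor
    calc ν Set.univ = ν (Set.Iio 0 ∪ Set.Ici 0) := by rw [Set.Iio_union_Ici]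
      _ ≤ ν (Set.Iio 0) + ν (Set.Ici 0) := measure_union_le _ _
      _ ≤ 0 + 1 := add_le_add hνneg.le hIci1
      _ < ⊤ := by norm_num
  -- ν gives no mass to {0}
  have hν0 : ν {(0:ℝ)} = 0 := by
    refine le_antisymm ?_ zero_le
    refine ENNReal.le_of_forall_pos_le_add fun ε hε _ => ?_
    have hev : ∀ᶠ b in nhdsWithin 0 (Set.Ioi 0), σ b < ε :=
      hσzero.eventually_lt_const (by exact_mod_cast hε)
    obtain ⟨b, hb1, hb2⟩ := (hev.and self_mem_nhdsWithin).exists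
    calc ν {(0:ℝ)} ≤ ν (Set.Ico 0 b) :=
          measure_mono (by simp [Set.singleton_subset_iff, hb2])
      _ = ENNReal.ofReal (σ b - σ 0) := hν 0 b le_rfl hb2.le
      _ ≤ 0 + ε := by
          rw [hσ0, sub_zero, zero_add]
          exact le_trans (ENNReal.ofReal_le_ofReal hb1.le)
            (by rw [ENNReal.ofReal_coe_nnreal])
  have hIcoIoo : ∀ b : ℝ, (Set.Ico (0:ℝ) b : Set ℝ) =ᵐ[ν] Set.Ioo (0:ℝ) b := by
    intro b
    rw [MeasureTheory.ae_eq_set]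
    constructor
    · refine measure_mono_null (fun r hr => ?_) hν0
      rcases hr with ⟨⟨h1, h2⟩, h3⟩
      simp only [Set.mem_singleton_iff]
      by_contra h
      exact h3 ⟨lt_of_le_of_ne h1 (Ne.symm h), h2⟩
    · have hsub : Set.Ioo (0:ℝ) b ⊆ Set.Ico 0 b := fun r hr => ⟨hr.1.le, hr.2⟩
      rw [Set.diff_eq_empty.2 hsub]
      exact measure_empty
  -- σ-finiteness of μ
  haveI : SigmaFinite μ := by
    constructor
    refine ⟨{ set := fun n => closedBall x (n + 1)
              set_mem := fun _ => trivial
              finite := fun n => hμfin x (n + 1) (by positivity)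
              spanning := ?_ }⟩
    ext z
    simp only [Set.mem_iUnion, Set.mem_univ, iff_true, mem_closedBall]
    obtain ⟨n, hn⟩ := exists_nat_gt (dist z x)
    exact ⟨n, by push_cast; linarith⟩
  -- the averaged function
  have hA' : ∀ z, ∫⁻ r in Set.Ici (0:ℝ),
      avgLin μ r (fun w => ENNReal.ofReal (f w)) z ∂ν = ENNReal.ofReal (f z) :=
    fun z => hharm z
  set g0 : X → ℝ≥0∞ := fun z => ENNReal.ofReal (f z) with hg0def
  have hg0 : Measurable g0 := hf.ennreal_ofReal
  have hA : ∀ z, ∫⁻ r in Set.Ici (0:ℝ), avgLin μ r g0 z ∂ν = ENNReal.ofReal (f z) := hA'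
  have hmeasF : Measurable fun p : X × ℝ => avgLin μ p.2 g0 p.1 := measurable_avgLin μ hg0
  have hFz : ∀ z : X, Measurable fun r => avgLin μ r g0 z := by
    intro z
    exact hmeasF.comp (measurable_const.prodMk measurable_id)
  have hconst : ∀ {r : ℝ} {z w : X}, dist z w ≤ r → avgLin μ r g0 z = avgLin μ r g0 w := by
    intro r z w h
    simp only [avgLin, ultra_ball_eq hd h]
  -- star identity
  have star : ∀ (z : X) (a : ℝ), 0 < a →
      avgLin μ a g0 z = ν (Set.Ico 0 a) * avgLin μ a g0 z + ∫⁻ r in Set.Ici a, avgLin μ r g0 z ∂ν := by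
    intro z a ha
    set B := closedBall z a with hBdef
    have hB0 : μ B ≠ 0 := (hμpos z a ha).ne'
    have hBtop : μ B ≠ ⊤ := (hμfin z a ha).ne
    have hdisj : Disjoint (Set.Ico (0:ℝ) a) (Set.Ici a) := by
      rw [Set.disjoint_left]
      rintro r ⟨-, h2⟩ h3
      exact absurd h3 (not_le.2 h2)
    have key : ∫⁻ w in B, g0 w ∂μ
        = ν (Set.Ico 0 a) * ∫⁻ w in B, g0 w ∂μ
          + μ B * ∫⁻ r in Set.Ici a, avgLin μ r g0 z ∂ν := by
      have e1 : ∫⁻ w in B, g0 w ∂μ = ∫⁻ w in B, ∫⁻ r in Set.Ici (0:ℝ), avgLin μ r g0 w ∂ν ∂μ :=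
        lintegral_congr fun w => (hA w).symm
      have e2 : ∫⁻ w in B, ∫⁻ r in Set.Ici (0:ℝ), avgLin μ r g0 w ∂ν ∂μ
          = ∫⁻ r in Set.Ici (0:ℝ), ∫⁻ w in B, avgLin μ r g0 w ∂μ ∂ν :=
        lintegral_lintegral_swap hmeasF.aemeasurable
      have e3 : ∫⁻ r in Set.Ici (0:ℝ), ∫⁻ w in B, avgLin μ r g0 w ∂μ ∂ν
          = ∫⁻ r in Set.Ico 0 a, ∫⁻ w in B, avgLin μ r g0 w ∂μ ∂ν
            + ∫⁻ r in Set.Ici a, ∫⁻ w in B, avgLin μ r g0 w ∂μ ∂ν := by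
        rw [← Set.Ico_union_Ici_eq_Ici ha.le, lintegral_union measurableSet_Ici hdisj]
      have e4 : ∫⁻ r in Set.Ico 0 a, ∫⁻ w in B, avgLin μ r g0 w ∂μ ∂ν
          = ν (Set.Ico 0 a) * ∫⁻ w in B, g0 w ∂μ := by
        rw [Measure.restrict_congr_set (hIcoIoo a)]
        rw [setLIntegral_congr_fun measurableSet_Ioo
          (fun r hr =>
            avg_integral_eq hd μ hμpos hμfin hg0 hr.1 hr.2.le)]
        rw [setLIntegral_const, measure_congr (hIcoIoo a).symm, mul_comm]
      have e5' : ∀ r ∈ Set.Ici a, ∫⁻ w in B, avgLin μ r g0 w ∂μ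
          = avgLin μ r g0 z * μ B := by
        intro r hr
        have h1 : ∫⁻ w in B, avgLin μ r g0 w ∂μ = ∫⁻ w in B, avgLin μ r g0 z ∂μ :=
          setLIntegral_congr_fun (hBdef ▸ measurableSet_closedBall)
            (fun w hw => hconst ((mem_closedBall.1 (hBdef ▸ hw)).trans hr))
        rw [h1, setLIntegral_const]
      have e5 : ∫⁻ r in Set.Ici a, ∫⁻ w in B, avgLin μ r g0 w ∂μ ∂ν
          = μ B * ∫⁻ r in Set.Ici a, avgLin μ r g0 z ∂ν := by
        rw [setLIntegral_congr_fun measurableSet_Ici e5',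
          lintegral_mul_const _ (hFz z), mul_comm]
      calc ∫⁻ w in B, g0 w ∂μ
          = ∫⁻ w in B, ∫⁻ r in Set.Ici (0:ℝ), avgLin μ r g0 w ∂ν ∂μ := e1
        _ = ∫⁻ r in Set.Ici (0:ℝ), ∫⁻ w in B, avgLin μ r g0 w ∂μ ∂ν := e2
        _ = ∫⁻ r in Set.Ico 0 a, ∫⁻ w in B, avgLin μ r g0 w ∂μ ∂ν
            + ∫⁻ r in Set.Ici a, ∫⁻ w in B, avgLin μ r g0 w ∂μ ∂ν := e3
        _ = ν (Set.Ico 0 a) * ∫⁻ w in B, g0 w ∂μ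
            + μ B * ∫⁻ r in Set.Ici a, avgLin μ r g0 z ∂ν := by rw [e4, e5]
    calc avgLin μ a g0 z = (μ B)⁻¹ * ∫⁻ w in B, g0 w ∂μ := by rw [avgLin, ← hBdef]
      _ = (μ B)⁻¹ * (ν (Set.Ico 0 a) * ∫⁻ w in B, g0 w ∂μ
            + μ B * ∫⁻ r in Set.Ici a, avgLin μ r g0 z ∂ν) := by rw [← key]
      _ = ν (Set.Ico 0 a) * ((μ B)⁻¹ * ∫⁻ w in B, g0 w ∂μ)
            + ((μ B)⁻¹ * μ B) * ∫⁻ r in Set.Ici a, avgLin μ r g0 z ∂ν := by ring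
      _ = ν (Set.Ico 0 a) * avgLin μ a g0 z + ∫⁻ r in Set.Ici a, avgLin μ r g0 z ∂ν := by
          rw [ENNReal.inv_mul_cancel hB0 hBtop, one_mul, avgLin, ← hBdef]
  -- the tail integrals are bounded by f
  have hTle : ∀ (z : X) (a : ℝ), 0 ≤ a →
      ∫⁻ r in Set.Ici a, avgLin μ r g0 z ∂ν ≤ ENNReal.ofReal (f z) := by
    intro z a ha
    rw [← hA z]
    exact lintegral_mono_set (Set.Ici_subset_Ici.2 ha)
  -- finiteness of F
  have hFfin : ∀ (z : X) (a : ℝ), 0 < a → avgLin μ a g0 z ≠ ⊤ := by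
    intro z a ha
    have hb : (0:ℝ) < a + 1 := by linarith
    have hab : a < a + 1 := lt_add_one a
    set K := (μ (closedBall z (a+1)))⁻¹ * ∫⁻ w in closedBall z a, g0 w ∂μ with hK
    have hlow : ∀ r ∈ Set.Ico a (a+1), K ≤ avgLin μ r g0 z := by
      rintro r ⟨h1, h2⟩
      rw [avgLin]
      exact mul_le_mul'
        (ENNReal.inv_le_inv.2 (measure_mono (closedBall_subset_closedBall h2.le)))
        (lintegral_mono_set (closedBall_subset_closedBall h1))
    have hKb : K * ν (Set.Ico a (a+1)) ≤ ENNReal.ofReal (f z) := by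
      calc K * ν (Set.Ico a (a+1)) = ∫⁻ _ in Set.Ico a (a+1), K ∂ν :=
            (setLIntegral_const _ _).symm
        _ ≤ ∫⁻ r in Set.Ico a (a+1), avgLin μ r g0 z ∂ν := setLIntegral_mono (hFz z) hlow
        _ ≤ ∫⁻ r in Set.Ici 0, avgLin μ r g0 z ∂ν :=
            lintegral_mono_set (fun r hr => ha.le.trans hr.1)
        _ = ENNReal.ofReal (f z) := hA z
    have hνab : ν (Set.Ico a (a+1)) ≠ 0 := by
      rw [hν a (a+1) ha.le hab.le]
      exact (ENNReal.ofReal_pos.2 (sub_pos.2 (hσmono ha.le hb.le hab))).ne'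
    have hKfin : K ≠ ⊤ := by
      intro hKt
      rw [hKt, ENNReal.top_mul hνab] at hKb
      exact absurd (top_le_iff.1 hKb) ENNReal.ofReal_ne_top
    have hint : ∫⁻ w in closedBall z a, g0 w ∂μ = μ (closedBall z (a+1)) * K := by
      rw [hK, ← mul_assoc, ENNReal.mul_inv_cancel (hμpos z (a+1) hb).ne'
        (hμfin z (a+1) hb).ne, one_mul]
    have : ∫⁻ w in closedBall z a, g0 w ∂μ ≠ ⊤ := by
      rw [hint]
      exact ENNReal.mul_ne_top (hμfin z (a+1) hb).ne hKfin
    rw [avgLin]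
    exact ENNReal.mul_ne_top (ENNReal.inv_ne_top.2 (hμpos z a ha).ne') this
  -- the contraction constant
  set c := ENNReal.ofReal (σ d) with hcdef
  have hc1 : c < 1 := by
    rw [hcdef, ← ENNReal.ofReal_one]
    exact (ENNReal.ofReal_lt_ofReal_iff one_pos).2 (hσlt1 d hd0.le)
  have h1c0 : (1:ℝ≥0∞) - c ≠ 0 := by
    intro h
    exact absurd (tsub_eq_zero_iff_le.1 h) (not_le.2 hc1)
  have hca : ∀ a : ℝ, 0 < a → a ≤ d → ν (Set.Ico 0 a) ≤ c := by
    intro a ha had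
    rw [hν 0 a le_rfl ha.le, hσ0, sub_zero, hcdef]
    exact ENNReal.ofReal_le_ofReal (hσmono.monotoneOn ha.le hd0.le had)
  -- uniform bound on F
  have hbound : ∀ (z : X) (a : ℝ), 0 < a → a ≤ d →
      avgLin μ a g0 z ≤ ENNReal.ofReal (f z) / (1 - c) := by
    intro z a ha had
    have h1 : avgLin μ a g0 z ≤ c * avgLin μ a g0 z + ENNReal.ofReal (f z) :=
      (star z a ha).le.trans
        (add_le_add (mul_le_mul_left (hca a ha had) _) (hTle z a ha.le))
    have h2 : (1 - c) * avgLin μ a g0 z ≤ ENNReal.ofReal (f z) := by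
      rw [ENNReal.sub_mul (fun _ _ => hFfin z a ha), one_mul]
      exact tsub_le_iff_right.2 (by rwa [add_comm] at h1)
    rw [ENNReal.le_div_iff_mul_le (Or.inl h1c0)
      (Or.inl (by simp : (1:ℝ≥0∞) - c ≠ ⊤))]
    rwa [mul_comm]
  -- the supremum of differences
  set S := ⨆ a ∈ Set.Ioo (0:ℝ) d, ((avgLin μ a g0 x - avgLin μ a g0 y) ⊔ (avgLin μ a g0 y - avgLin μ a g0 x)) with hSdef
  have hSfin : S ≠ ⊤ := by
    have hle : S ≤ ENNReal.ofReal (f x) / (1 - c) ⊔ ENNReal.ofReal (f y) / (1 - c) := by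
      refine iSup₂_le fun a ha => sup_le ?_ ?_
      · exact le_sup_of_le_left (tsub_le_self.trans (hbound x a ha.1 ha.2.le))
      · exact le_sup_of_le_right (tsub_le_self.trans (hbound y a ha.1 ha.2.le))
    refine ne_top_of_le_ne_top ?_ hle
    exact (max_lt (ENNReal.div_lt_top ENNReal.ofReal_ne_top h1c0)
      (ENNReal.div_lt_top ENNReal.ofReal_ne_top h1c0)).ne
  have hSle : ∀ a ∈ Set.Ioo (0:ℝ) d, ∀ u v : X,
      ({u, v} : Set X) = {x, y} → avgLin μ a g0 u - avgLin μ a g0 v ≤ S := by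
    intro a ha u v huv
    have : (avgLin μ a g0 u - avgLin μ a g0 v) ⊔ (avgLin μ a g0 v - avgLin μ a g0 u) = (avgLin μ a g0 x - avgLin μ a g0 y) ⊔ (avgLin μ a g0 y - avgLin μ a g0 x) := by
      have := Set.pair_eq_pair_iff.1 huv
      rcases this with ⟨rfl, rfl⟩ | ⟨rfl, rfl⟩
      · rfl
      · exact sup_comm _ _
    calc avgLin μ a g0 u - avgLin μ a g0 v ≤ (avgLin μ a g0 u - avgLin μ a g0 v) ⊔ (avgLin μ a g0 v - avgLin μ a g0 u) := le_sup_left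
      _ = (avgLin μ a g0 x - avgLin μ a g0 y) ⊔ (avgLin μ a g0 y - avgLin μ a g0 x) := this
      _ ≤ S := (le_biSup (fun a => (avgLin μ a g0 x - avgLin μ a g0 y)
          ⊔ (avgLin μ a g0 y - avgLin μ a g0 x)) ha).trans_eq hSdef.symm
  -- the tail integrals agree
  have hcsum : ∀ a : ℝ, 0 < a → a < d →
      ν (Set.Ico 0 a) + ν (Set.Ico a d) = c := by
    intro a ha had
    rw [hν 0 a le_rfl ha.le, hν a d ha.le had.le, hcdef, hσ0, sub_zero,
      ← ENNReal.ofReal_add (hσrange a ha.le).1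
        (sub_nonneg.2 (hσmono.monotoneOn ha.le (ha.trans had).le had.le))]
    ring_nf
  -- key contraction step
  have hkey : ∀ a ∈ Set.Ioo (0:ℝ) d, ∀ u v : X, dist u v = d →
      ({u, v} : Set X) = {x, y} → avgLin μ a g0 u ≤ c * S + avgLin μ a g0 v := by
    intro a ha u v huvd huvs
    have hdisj : Disjoint (Set.Ico a d) (Set.Ici d) := by
      rw [Set.disjoint_left]
      rintro r ⟨-, h2⟩ h3
      exact absurd h3 (not_le.2 h2)
    have hsplit : ∀ w : X, ∫⁻ r in Set.Ici a, avgLin μ r g0 w ∂ν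
        = ∫⁻ r in Set.Ico a d, avgLin μ r g0 w ∂ν + ∫⁻ r in Set.Ici d, avgLin μ r g0 w ∂ν := by
      intro w
      rw [← Set.Ico_union_Ici_eq_Ici ha.2.le, lintegral_union measurableSet_Ici hdisj]
    have hT : ∫⁻ r in Set.Ici d, avgLin μ r g0 u ∂ν = ∫⁻ r in Set.Ici d, avgLin μ r g0 v ∂ν :=
      setLIntegral_congr_fun measurableSet_Ici
        (fun r (hr : d ≤ r) => hconst (huvd ▸ hr))
    have hb1 : avgLin μ a g0 u ≤ S + avgLin μ a g0 v :=
      tsub_le_iff_right.1 (hSle a ha u v huvs)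
    have hb2 : ∫⁻ r in Set.Ico a d, avgLin μ r g0 u ∂ν
        ≤ S * ν (Set.Ico a d) + ∫⁻ r in Set.Ico a d, avgLin μ r g0 v ∂ν := by
      calc ∫⁻ r in Set.Ico a d, avgLin μ r g0 u ∂ν
          ≤ ∫⁻ r in Set.Ico a d, (S + avgLin μ r g0 v) ∂ν := by
            refine setLIntegral_mono (measurable_const.add (hFz v)) fun r hr => ?_
            exact tsub_le_iff_right.1
              (hSle r ⟨ha.1.trans_le hr.1, hr.2⟩ u v huvs)
        _ = S * ν (Set.Ico a d) + ∫⁻ r in Set.Ico a d, avgLin μ r g0 v ∂ν := by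
            rw [lintegral_add_left measurable_const, setLIntegral_const]
    calc avgLin μ a g0 u = ν (Set.Ico 0 a) * avgLin μ a g0 u + ∫⁻ r in Set.Ici a, avgLin μ r g0 u ∂ν :=
          star u a ha.1
      _ = ν (Set.Ico 0 a) * avgLin μ a g0 u + ∫⁻ r in Set.Ico a d, avgLin μ r g0 u ∂ν
            + ∫⁻ r in Set.Ici d, avgLin μ r g0 v ∂ν := by rw [hsplit u, hT, add_assoc]
      _ ≤ ν (Set.Ico 0 a) * (S + avgLin μ a g0 v)
            + (S * ν (Set.Ico a d) + ∫⁻ r in Set.Ico a d, avgLin μ r g0 v ∂ν)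
            + ∫⁻ r in Set.Ici d, avgLin μ r g0 v ∂ν := by
          gcongr
      _ = (ν (Set.Ico 0 a) + ν (Set.Ico a d)) * S
            + (ν (Set.Ico 0 a) * avgLin μ a g0 v + (∫⁻ r in Set.Ico a d, avgLin μ r g0 v ∂ν
              + ∫⁻ r in Set.Ici d, avgLin μ r g0 v ∂ν)) := by ring
      _ = c * S + avgLin μ a g0 v := by
          rw [hcsum a ha.1 ha.2, ← hsplit v, ← star v a ha.1]
  -- S = 0
  have hS0 : S = 0 := by
    by_contra hS
    have hterm : ∀ a ∈ Set.Ioo (0:ℝ) d,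
        (avgLin μ a g0 x - avgLin μ a g0 y) ⊔ (avgLin μ a g0 y - avgLin μ a g0 x)
          ≤ c * S := by
      intro a ha
      refine sup_le ?_ ?_
      · exact tsub_le_iff_right.2 (hkey a ha x y rfl rfl)
      · exact tsub_le_iff_right.2 (hkey a ha y x (dist_comm y x) (Set.pair_comm y x))
    have hcon : S ≤ c * S := by
      conv_lhs => rw [hSdef]
      exact iSup₂_le hterm
    have : c * S < 1 * S :=
      by rw [mul_comm c, mul_comm 1]; exact ENNReal.mul_lt_mul_right hS hSfin hc1
    rw [one_mul] at this
    exact absurd (hcon.trans_lt this) (lt_irrefl S)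
  -- F agrees on (0, d)
  have hFeq : ∀ a ∈ Set.Ioo (0:ℝ) d, avgLin μ a g0 x = avgLin μ a g0 y := by
    intro a ha
    have hle : (avgLin μ a g0 x - avgLin μ a g0 y) ⊔ (avgLin μ a g0 y - avgLin μ a g0 x) ≤ 0 :=
      (le_biSup (fun a => (avgLin μ a g0 x - avgLin μ a g0 y)
        ⊔ (avgLin μ a g0 y - avgLin μ a g0 x)) ha).trans_eq (hSdef ▸ hS0)
    have h1 : avgLin μ a g0 x - avgLin μ a g0 y = 0 :=
      le_antisymm (le_trans le_sup_left hle) zero_le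
    have h2 : avgLin μ a g0 y - avgLin μ a g0 x = 0 :=
      le_antisymm (le_trans le_sup_right hle) zero_le
    exact le_antisymm (tsub_eq_zero_iff_le.1 h1) (tsub_eq_zero_iff_le.1 h2)
  -- conclude
  have hdisj : Disjoint (Set.Ico (0:ℝ) d) (Set.Ici d) := by
    rw [Set.disjoint_left]
    rintro r ⟨-, h2⟩ h3
    exact absurd h3 (not_le.2 h2)
  have hfinal : ENNReal.ofReal (f x) = ENNReal.ofReal (f y) := by
    have hx := hA x
    have hy := hA y
    rw [← Set.Ico_union_Ici_eq_Ici hd0.le,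
      lintegral_union measurableSet_Ici hdisj] at hx hy
    rw [← hx, ← hy]
    congr 1
    · rw [Measure.restrict_congr_set (hIcoIoo d)]
      exact setLIntegral_congr_fun measurableSet_Ioo
        (fun r hr => hFeq r hr)
    · exact setLIntegral_congr_fun measurableSet_Ici
        (fun r (hr : d ≤ r) => hconst (hdd ▸ hr))
  exact (ENNReal.ofReal_eq_ofReal_iff (hf0 x) (hf0 y)).1 hfinal
end

section
/- Let γ > 0, let R : (0,∞) → [0,∞) be non-decreasing, and set M(t) = ∫_0^∞ R(t/τ) e^{−τ} dτ. Then: (1) if 0 < γ < 1 and R(s) ≤ A·s^γ for all s > 0 then M(t) ≤ A·t^γ/(1−γ) for all t > 0, while if R(s) ≥ B·s^γ for all s > 0 then M(t) ≥ B·t^γ/((1−γ)·e) for all t > 0; (2) if 0 < γ < 1, R(s) = 0 for all 0 < s < t₀ (for some t₀ > 0), and R(s) ≤ A·s^γ for s > t₀, then M(t) ≤ (c/(1−γ))·min{t/t₀, (t/t₀)^γ} for all t > 0 and some constant c > 0; similarly if R(s) ≥ B·s^γ for s > t₀ then M(t) ≥ (c'/(1−γ))·min{t/t₀, (t/t₀)^γ}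 for some c' > 0; (3) if γ ≥ 1 and R(s) ≥ B·s^γ for all s ≥ t₀ (with B > 0, t₀ ≥ 0), then M(t) = ∞ for all t > 0. -/
open MeasureTheory Set
open scoped ENNReal

/-- The Laplace-type integral `M(t) = ∫_0^∞ R(t/τ) e^{-τ} dτ`. -/
noncomputable def lapM (R : ℝ → ℝ) (t : ℝ) : ℝ≥0∞ :=
  ∫⁻ τ in Set.Ioi (0:ℝ), ENNReal.ofReal (R (t / τ) * Real.exp (-τ))


lemma aux_Ioc {γ m : ℝ} (hγ1 : γ < 1) (hm : 0 < m) :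
    ∫⁻ τ in Set.Ioc (0:ℝ) m, ENNReal.ofReal (τ ^ (-γ)) =
      ENNReal.ofReal (m ^ (1 - γ) / (1 - γ)) := by
  have hint : IntegrableOn (fun τ : ℝ => τ ^ (-γ)) (Set.Ioc 0 m) := by
    have := intervalIntegral.intervalIntegrable_rpow' (a := 0) (b := m) (r := -γ)
      (by linarith)
    rwa [intervalIntegrable_iff_integrableOn_Ioc_of_le hm.le] at this
  rw [← ofReal_integral_eq_lintegral_ofReal hint ?_]
  · congr 1
    rw [← intervalIntegral.integral_of_le hm.le,
      integral_rpow (Or.inl (by linarith)),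
      show -γ + 1 = 1 - γ by ring, Real.zero_rpow (by linarith), sub_zero]
  · filter_upwards [ae_restrict_mem measurableSet_Ioc] with τ hτ
    exact Real.rpow_nonneg hτ.1.le _

lemma aux_Gamma_le {γ : ℝ} (hγ0 : 0 < γ) (hγ1 : γ < 1) :
    Real.Gamma (1 - γ) ≤ 1 / (1 - γ) := by
  have h1 : (1 - γ) * Real.Gamma (1 - γ) = Real.Gamma (2 - γ) := by
    rw [show (2:ℝ) - γ = (1 - γ) + 1 by ring, Real.Gamma_add_one (by linarith)]
  have h2 : Real.Gamma (2 - γ) ≤ 1 := by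
    have hc := Real.convexOn_Gamma.2 (mem_Ioi.mpr one_pos) (mem_Ioi.mpr two_pos)
      (le_of_lt hγ0) (by linarith : (0:ℝ) ≤ 1 - γ) (by ring)
    simp only [smul_eq_mul, Real.Gamma_one, Real.Gamma_two, mul_one] at hc
    calc Real.Gamma (2 - γ) = Real.Gamma (γ * 1 + (1 - γ) * 2) := by norm_num; ring_nf
    _ ≤ γ * 1 + (1 - γ) * 1 := by simpa [Real.Gamma_one, Real.Gamma_two] using hc
    _ = 1 := by ring
  rw [le_div_iff₀ (by linarith), mul_comm, h1]
  exact h2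

lemma aux_Ioi {γ : ℝ} (hγ0 : 0 < γ) (hγ1 : γ < 1) :
    ∫⁻ τ in Set.Ioi (0:ℝ), ENNReal.ofReal (τ ^ (-γ) * Real.exp (-τ)) =
      ENNReal.ofReal (Real.Gamma (1 - γ)) := by
  have hint : IntegrableOn (fun τ : ℝ => τ ^ (-γ) * Real.exp (-τ)) (Set.Ioi 0) := by
    have := Real.GammaIntegral_convergent (s := 1 - γ) (by linarith)
    simp only [show (1:ℝ) - γ - 1 = -γ by ring] at this
    exact this.congr_fun (fun x _ => mul_comm _ _) measurableSet_Ioi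
  rw [← ofReal_integral_eq_lintegral_ofReal hint ?_]
  · congr 1
    rw [Real.Gamma_eq_integral (by linarith)]
    simp only [show (1:ℝ) - γ - 1 = -γ by ring]
    exact (setIntegral_congr_fun measurableSet_Ioi (fun x _ => mul_comm _ _)).symm
  · filter_upwards [ae_restrict_mem measurableSet_Ioi] with τ hτ
    exact mul_nonneg (Real.rpow_nonneg (le_of_lt hτ) _) (Real.exp_nonneg _)

/-- key algebra: (t/τ)^γ = t^γ * τ^(-γ) -/
lemma key_alg {γ t τ : ℝ} (ht : 0 < t) (hτ : 0 < τ) :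
    (t / τ) ^ γ = t ^ γ * τ ^ (-γ) := by
  rw [Real.div_rpow ht.le hτ.le, Real.rpow_neg hτ.le, div_eq_mul_inv]

/-- key algebra 2 : t^γ * (t/u)^(1-γ) = u^γ * (t/u) for t,u>0 -/
lemma key_alg2 {γ t u : ℝ} (ht : 0 < t) (hu : 0 < u) :
    t ^ γ * (t / u) ^ (1 - γ) = u ^ γ * (t / u) := by
  have hx : 0 < t / u := div_pos ht hu
  have h1 : t = u * (t / u) := by field_simp
  calc t ^ γ * (t / u) ^ (1 - γ) = (u * (t / u)) ^ γ * (t / u) ^ (1 - γ) := by rw [← h1]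
  _ = u ^ γ * ((t / u) ^ γ * (t / u) ^ (1 - γ)) := by
      rw [Real.mul_rpow hu.le hx.le]; ring
  _ = u ^ γ * (t / u) ^ (γ + (1 - γ)) := by rw [Real.rpow_add hx]
  _ = u ^ γ * (t / u) := by norm_num

lemma upper_gen (R : ℝ → ℝ) {γ C t : ℝ} (hγ0 : 0 < γ) (hγ1 : γ < 1) (hC : 0 ≤ C)
    (h : ∀ᵐ τ ∂(volume.restrict (Set.Ioi (0:ℝ))),
      ENNReal.ofReal (R (t / τ) * Real.exp (-τ)) ≤
        ENNReal.ofReal (C * (τ ^ (-γ) * Real.exp (-τ)))) :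
    lapM R t ≤ ENNReal.ofReal (C / (1 - γ)) :=
  calc lapM R t ≤ ∫⁻ τ in Set.Ioi (0:ℝ),
      ENNReal.ofReal (C * (τ ^ (-γ) * Real.exp (-τ))) := lintegral_mono_ae h
  _ = ENNReal.ofReal C * ∫⁻ τ in Set.Ioi (0:ℝ),
      ENNReal.ofReal (τ ^ (-γ) * Real.exp (-τ)) := by
      simp_rw [ENNReal.ofReal_mul hC]
      exact lintegral_const_mul' _ _ ENNReal.ofReal_ne_top
  _ = ENNReal.ofReal C * ENNReal.ofReal (Real.Gamma (1 - γ)) := by rw [aux_Ioi hγ0 hγ1]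
  _ ≤ ENNReal.ofReal C * ENNReal.ofReal (1 / (1 - γ)) := by
      gcongr
      exact aux_Gamma_le hγ0 hγ1
  _ = ENNReal.ofReal (C / (1 - γ)) := by
      rw [← ENNReal.ofReal_mul hC, mul_one_div]

lemma upper_cut (R : ℝ → ℝ) {γ C t m : ℝ} (hγ1 : γ < 1) (hm : 0 < m) (hC : 0 ≤ C)
    (h : ∀ᵐ τ ∂(volume.restrict (Set.Ioi (0:ℝ))),
      ENNReal.ofReal (R (t / τ) * Real.exp (-τ)) ≤
        (Set.Ioc (0:ℝ) m).indicator (fun τ => ENNReal.ofReal (C * τ ^ (-γ))) τ) :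
    lapM R t ≤ ENNReal.ofReal (C * (m ^ (1 - γ) / (1 - γ))) :=
  calc lapM R t ≤ ∫⁻ τ in Set.Ioi (0:ℝ),
      (Set.Ioc (0:ℝ) m).indicator (fun τ => ENNReal.ofReal (C * τ ^ (-γ))) τ :=
        lintegral_mono_ae h
  _ = ∫⁻ τ in Set.Ioc (0:ℝ) m, ENNReal.ofReal (C * τ ^ (-γ)) := by
      rw [lintegral_indicator measurableSet_Ioc, Measure.restrict_restrict measurableSet_Ioc,
        Set.inter_eq_left.mpr (fun x hx => hx.1)]
  _ = ENNReal.ofReal C * ∫⁻ τ in Set.Ioc (0:ℝ) m, ENNReal.ofReal (τ ^ (-γ)) := by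
      simp_rw [ENNReal.ofReal_mul hC]
      exact lintegral_const_mul' _ _ ENNReal.ofReal_ne_top
  _ = ENNReal.ofReal (C * (m ^ (1 - γ) / (1 - γ))) := by
      rw [aux_Ioc hγ1 hm, ← ENNReal.ofReal_mul hC]

lemma lower_gen (R : ℝ → ℝ) {γ D t m : ℝ} (hγ1 : γ < 1) (hm : 0 < m) (hm1 : m ≤ 1)
    (hD : 0 ≤ D)
    (h : ∀ τ ∈ Set.Ioc (0:ℝ) m, D * τ ^ (-γ) ≤ R (t / τ)) :
    ENNReal.ofReal (D / Real.exp 1 * (m ^ (1 - γ) / (1 - γ))) ≤ lapM R t := by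
  have step : ∀ τ ∈ Set.Ioc (0:ℝ) m,
      D / Real.exp 1 * τ ^ (-γ) ≤ R (t / τ) * Real.exp (-τ) := by
    intro τ hτ
    have he : Real.exp (-1) ≤ Real.exp (-τ) := Real.exp_le_exp.mpr (by linarith [hτ.2, hm1])
    calc D / Real.exp 1 * τ ^ (-γ) = D * τ ^ (-γ) * Real.exp (-1) := by
          rw [Real.exp_neg]; ring
    _ ≤ D * τ ^ (-γ) * Real.exp (-τ) := by
          apply mul_le_mul_of_nonneg_left he
          exact mul_nonneg hD (Real.rpow_nonneg hτ.1.le _)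
    _ ≤ R (t / τ) * Real.exp (-τ) :=
          mul_le_mul_of_nonneg_right (h τ hτ) (Real.exp_nonneg _)
  calc ENNReal.ofReal (D / Real.exp 1 * (m ^ (1 - γ) / (1 - γ)))
      = ENNReal.ofReal (D / Real.exp 1) * ∫⁻ τ in Set.Ioc (0:ℝ) m,
          ENNReal.ofReal (τ ^ (-γ)) := by
        rw [aux_Ioc hγ1 hm,
          ← ENNReal.ofReal_mul (div_nonneg hD (Real.exp_nonneg 1))]
  _ = ∫⁻ τ in Set.Ioc (0:ℝ) m, ENNReal.ofReal (D / Real.exp 1 * τ ^ (-γ)) := by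
        simp_rw [ENNReal.ofReal_mul (div_nonneg hD (Real.exp_nonneg 1))]
        exact (lintegral_const_mul' _ _ ENNReal.ofReal_ne_top).symm
  _ ≤ ∫⁻ τ in Set.Ioc (0:ℝ) m, ENNReal.ofReal (R (t / τ) * Real.exp (-τ)) := by
        refine lintegral_mono_ae ?_
        filter_upwards [ae_restrict_mem measurableSet_Ioc] with τ hτ
        exact ENNReal.ofReal_le_ofReal (step τ hτ)
  _ ≤ lapM R t := lintegral_mono' (Measure.restrict_mono Ioc_subset_Ioi_self le_rfl) le_rfl

lemma inv_top {m : ℝ} (hm : 0 < m) :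
    ∫⁻ τ in Set.Ioc (0:ℝ) m, ENNReal.ofReal τ⁻¹ = ⊤ := by
  by_contra h
  have hi : Integrable (fun τ : ℝ => τ⁻¹) (volume.restrict (Set.Ioc (0:ℝ) m)) := by
    rw [← lintegral_ofReal_ne_top_iff_integrable]
    · exact h
    · exact (measurable_inv.aestronglyMeasurable)
    · filter_upwards [ae_restrict_mem measurableSet_Ioc] with τ hτ
      exact inv_nonneg.mpr hτ.1.le
  have hio : IntegrableOn (fun τ : ℝ => τ ^ (-1 : ℝ)) (Set.Ioo (0:ℝ) m) := by
    have hi' : IntegrableOn (fun τ : ℝ => τ⁻¹) (Set.Ioo (0:ℝ) m) :=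
      IntegrableOn.mono_set hi Ioo_subset_Ioc_self
    refine hi'.congr_fun ?_ measurableSet_Ioo
    intro x hx
    exact (Real.rpow_neg_one x).symm
  rw [intervalIntegral.integrableOn_Ioo_rpow_iff hm] at hio
  linarith

theorem statement_17 (R : ℝ → ℝ)
    (hRmono : MonotoneOn R (Set.Ioi 0))
    (hRnonneg : ∀ s : ℝ, 0 < s → 0 ≤ R s)
    (γ : ℝ) (hγ : 0 < γ) :
    ((γ < 1 → ∀ A : ℝ, 0 < A → (∀ s : ℝ, 0 < s → R s ≤ A * s ^ γ) →
        ∀ t : ℝ, 0 < t → lapM R t ≤ ENNReal.ofReal (A * t ^ γ / (1 - γ))) ∧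
     (γ < 1 → ∀ B : ℝ, 0 < B → (∀ s : ℝ, 0 < s → B * s ^ γ ≤ R s) →
        ∀ t : ℝ, 0 < t →
          ENNReal.ofReal (B * t ^ γ / ((1 - γ) * Real.exp 1)) ≤ lapM R t)) ∧
    ((γ < 1 → ∀ t₀ : ℝ, 0 < t₀ → (∀ s : ℝ, 0 < s → s < t₀ → R s = 0) →
        ∀ A : ℝ, 0 < A → (∀ s : ℝ, t₀ < s → R s ≤ A * s ^ γ) →
          ∃ c : ℝ, 0 < c ∧ ∀ t : ℝ, 0 < t →
            lapM R t ≤ ENNReal.ofReal (c / (1 - γ) * min (t / t₀) ((t / t₀) ^ γ))) ∧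
     (γ < 1 → ∀ t₀ : ℝ, 0 < t₀ → (∀ s : ℝ, 0 < s → s < t₀ → R s = 0) →
        ∀ B : ℝ, 0 < B → (∀ s : ℝ, t₀ < s → B * s ^ γ ≤ R s) →
          ∃ c' : ℝ, 0 < c' ∧ ∀ t : ℝ, 0 < t →
            ENNReal.ofReal (c' / (1 - γ) * min (t / t₀) ((t / t₀) ^ γ)) ≤ lapM R t)) ∧
    (1 ≤ γ → ∀ B t₀ : ℝ, 0 < B → 0 ≤ t₀ →
        (∀ s : ℝ, t₀ ≤ s → 0 < s → B * s ^ γ ≤ R s) →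
        ∀ t : ℝ, 0 < t → lapM R t = ⊤) := by
  refine ⟨⟨?p1a, ?p1b⟩, ⟨?p2a, ?p2b⟩, ?p3⟩
  case p1a =>
    intro hγ1 A hA hR t ht
    apply upper_gen R hγ (C := A * t ^ γ) hγ1
      (mul_nonneg hA.le (Real.rpow_nonneg ht.le _))
    filter_upwards [ae_restrict_mem measurableSet_Ioi] with τ hτ
    have hτ0 : (0:ℝ) < τ := hτ
    have hs : 0 < t / τ := div_pos ht hτ0
    refine ENNReal.ofReal_le_ofReal ?_
    have h2 : A * t ^ γ * (τ ^ (-γ) * Real.exp (-τ)) =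
        A * (t / τ) ^ γ * Real.exp (-τ) := by rw [key_alg ht hτ0]; ring
    rw [h2]
    exact mul_le_mul_of_nonneg_right (hR _ hs) (Real.exp_nonneg _)
  case p1b =>
    intro hγ1 B hB hR t ht
    have heq : B * t ^ γ / ((1 - γ) * Real.exp 1) =
        B * t ^ γ / Real.exp 1 * ((1:ℝ) ^ (1 - γ) / (1 - γ)) := by
      rw [Real.one_rpow, mul_one_div, div_div, mul_comm (Real.exp 1)]
    rw [heq]
    apply lower_gen R hγ1 one_pos le_rfl
      (mul_nonneg hB.le (Real.rpow_nonneg ht.le _))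
    intro τ hτ
    have hs : 0 < t / τ := div_pos ht hτ.1
    calc B * t ^ γ * τ ^ (-γ) = B * (t / τ) ^ γ := by rw [key_alg ht hτ.1]; ring
    _ ≤ R (t / τ) := hR _ hs
  case p2a =>
    intro hγ1 t₀ ht₀ hzero A hA hR
    refine ⟨A * t₀ ^ γ, mul_pos hA (Real.rpow_pos_of_pos ht₀ _), fun t ht => ?_⟩
    have hsing : ∀ᵐ τ : ℝ, τ ≠ t / t₀ := by
      refine ae_iff.mpr ?_
      simpa [not_not, Set.setOf_eq_eq_singleton] using measure_singleton (t / t₀)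
    rcases le_or_gt t₀ t with hle | hlt
    · -- t₀ ≤ t : use the global bound
      have hx1 : (1:ℝ) ≤ t / t₀ := (one_le_div ht₀).mpr hle
      have hmin : min (t / t₀) ((t / t₀) ^ γ) = (t / t₀) ^ γ := by
        refine min_eq_right ?_
        calc (t / t₀) ^ γ ≤ (t / t₀) ^ (1:ℝ) :=
              Real.rpow_le_rpow_of_exponent_le hx1 hγ1.le
        _ = t / t₀ := Real.rpow_one _
      have hpow : t₀ ^ γ * (t / t₀) ^ γ = t ^ γ := by
        rw [← Real.mul_rpow ht₀.le (div_nonneg ht.le ht₀.le)]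
        congr 1
        field_simp
      have heq : A * t₀ ^ γ / (1 - γ) * (t / t₀) ^ γ = A * t ^ γ / (1 - γ) := by
        rw [← hpow]; ring
      rw [hmin, heq]
      apply upper_gen R hγ (C := A * t ^ γ) hγ1
        (mul_nonneg hA.le (Real.rpow_nonneg ht.le _))
      filter_upwards [ae_restrict_mem measurableSet_Ioi, ae_restrict_of_ae hsing]
        with τ hτ hne
      have hτ0 : (0:ℝ) < τ := hτ
      have hs : 0 < t / τ := div_pos ht hτ0
      rcases lt_trichotomy (t / τ) t₀ with h' | h' | h'
      · simp [hzero _ hs h', zero_le]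
      · exfalso
        apply hne
        rw [eq_div_iff (ne_of_gt ht₀)]
        rw [div_eq_iff (ne_of_gt hτ0)] at h'
        linarith
      · refine ENNReal.ofReal_le_ofReal ?_
        have h2 : A * t ^ γ * (τ ^ (-γ) * Real.exp (-τ)) =
            A * (t / τ) ^ γ * Real.exp (-τ) := by rw [key_alg ht hτ0]; ring
        rw [h2]
        exact mul_le_mul_of_nonneg_right (hR _ h') (Real.exp_nonneg _)
    · -- t < t₀ : cut at m = t / t₀ < 1
      have hm : 0 < t / t₀ := div_pos ht ht₀
      have hm1 : t / t₀ < 1 := (div_lt_one ht₀).mpr hlt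
      have hmin : min (t / t₀) ((t / t₀) ^ γ) = t / t₀ := by
        refine min_eq_left ?_
        calc t / t₀ = (t / t₀) ^ (1:ℝ) := (Real.rpow_one _).symm
        _ ≤ (t / t₀) ^ γ := Real.rpow_le_rpow_of_exponent_ge hm hm1.le hγ1.le
      have heq : A * t₀ ^ γ / (1 - γ) * (t / t₀) =
          A * t ^ γ * ((t / t₀) ^ (1 - γ) / (1 - γ)) := by
        have h2 := key_alg2 (γ := γ) ht ht₀
        calc A * t₀ ^ γ / (1 - γ) * (t / t₀)
            = A * (t₀ ^ γ * (t / t₀)) / (1 - γ) := by ring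
        _ = A * (t ^ γ * (t / t₀) ^ (1 - γ)) / (1 - γ) := by rw [h2]
        _ = A * t ^ γ * ((t / t₀) ^ (1 - γ) / (1 - γ)) := by ring
      rw [hmin, heq]
      apply upper_cut R hγ1 hm (mul_nonneg hA.le (Real.rpow_nonneg ht.le _))
      filter_upwards [ae_restrict_mem measurableSet_Ioi, ae_restrict_of_ae hsing]
        with τ hτ hne
      have hτ0 : (0:ℝ) < τ := hτ
      have hs : 0 < t / τ := div_pos ht hτ0
      rcases lt_trichotomy τ (t / t₀) with h' | h' | h'
      · -- τ < t/t₀  ⇒  t₀ < t/τ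
        have hmem : τ ∈ Set.Ioc (0:ℝ) (t / t₀) := ⟨hτ0, h'.le⟩
        rw [Set.indicator_of_mem hmem]
        refine ENNReal.ofReal_le_ofReal ?_
        have ht' : t₀ < t / τ := by
          rw [lt_div_iff₀ ht₀] at h'
          rw [lt_div_iff₀ hτ0]
          linarith
        calc R (t / τ) * Real.exp (-τ) ≤ R (t / τ) * 1 := by
              apply mul_le_mul_of_nonneg_left _ (hRnonneg _ hs)
              calc Real.exp (-τ) ≤ Real.exp 0 := Real.exp_le_exp.mpr (by linarith)
              _ = 1 := Real.exp_zero
        _ = R (t / τ) := mul_one _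
        _ ≤ A * (t / τ) ^ γ := hR _ ht'
        _ = A * t ^ γ * τ ^ (-γ) := by rw [key_alg ht hτ0]; ring
      · exact absurd h' hne
      · -- τ > t/t₀ ⇒ t/τ < t₀ ⇒ R = 0
        have ht' : t / τ < t₀ := by
          rw [div_lt_iff₀ ht₀] at h'
          rw [div_lt_iff₀ hτ0]
          linarith
        simp [hzero _ hs ht', zero_le]
  case p2b =>
    intro hγ1 t₀ ht₀ hzero B hB hR
    have hc' : 0 < B * t₀ ^ γ / (2 * Real.exp 1) :=
      div_pos (mul_pos hB (Real.rpow_pos_of_pos ht₀ _))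
        (by positivity)
    refine ⟨B * t₀ ^ γ / (2 * Real.exp 1), hc', fun t ht => ?_⟩
    set c' := B * t₀ ^ γ / (2 * Real.exp 1) with hc'def
    have h2t₀ : (0:ℝ) < 2 * t₀ := by linarith
    set m := min 1 (t / (2 * t₀)) with hmdef
    have hm : 0 < m := lt_min one_pos (div_pos ht h2t₀)
    have hm1 : m ≤ 1 := min_le_left _ _
    have hD : (0:ℝ) ≤ B * t ^ γ := mul_nonneg hB.le (Real.rpow_nonneg ht.le _)
    have hlow := lower_gen R hγ1 hm hm1 hD (t := t) ?hpt
    case hpt =>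
      intro τ hτ
      have ht' : t₀ < t / τ := by
        have h1 : τ ≤ t / (2 * t₀) := le_trans hτ.2 (min_le_right _ _)
        rw [le_div_iff₀ h2t₀] at h1
        rw [lt_div_iff₀ hτ.1]
        nlinarith
      calc B * t ^ γ * τ ^ (-γ) = B * (t / τ) ^ γ := by rw [key_alg ht hτ.1]; ring
      _ ≤ R (t / τ) := hR _ ht'
    refine le_trans (ENNReal.ofReal_le_ofReal ?_) hlow
    have h1γ : (0:ℝ) < 1 - γ := by linarith
    have hkey : c' * min (t / t₀) ((t / t₀) ^ γ) ≤
        B * t ^ γ / Real.exp 1 * m ^ (1 - γ) := by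
      rcases le_or_gt (2 * t₀) t with hle | hlt
      · -- m = 1
        have hmeq : m = 1 := min_eq_left ((le_div_iff₀ h2t₀).mpr (by linarith))
        rw [hmeq, Real.one_rpow, mul_one]
        have hpow : t₀ ^ γ * (t / t₀) ^ γ = t ^ γ := by
          rw [← Real.mul_rpow ht₀.le (div_nonneg ht.le ht₀.le)]
          congr 1
          field_simp
        calc c' * min (t / t₀) ((t / t₀) ^ γ) ≤ c' * (t / t₀) ^ γ :=
              mul_le_mul_of_nonneg_left (min_le_right _ _) hc'.le
        _ = B * (t₀ ^ γ * (t / t₀) ^ γ) / (2 * Real.exp 1) := by rw [hc'def]; ring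
        _ = B * t ^ γ / (2 * Real.exp 1) := by rw [hpow]
        _ ≤ B * t ^ γ / Real.exp 1 := by
              have hE := Real.exp_pos 1
              rw [div_le_div_iff₀ (by linarith) hE]
              nlinarith [mul_nonneg hD hE.le]
      · -- m = t / (2 t₀)
        have hmeq : m = t / (2 * t₀) :=
          min_eq_right ((div_le_one h2t₀).mpr (by linarith))
        have h2 := key_alg2 (γ := γ) ht h2t₀
        have hrw : B * t ^ γ / Real.exp 1 * m ^ (1 - γ) =
            B * ((2 * t₀) ^ γ * (t / (2 * t₀))) / Real.exp 1 := by
          rw [hmeq]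
          calc B * t ^ γ / Real.exp 1 * (t / (2 * t₀)) ^ (1 - γ)
              = B * (t ^ γ * (t / (2 * t₀)) ^ (1 - γ)) / Real.exp 1 := by ring
          _ = B * ((2 * t₀) ^ γ * (t / (2 * t₀))) / Real.exp 1 := by rw [h2]
        rw [hrw]
        calc c' * min (t / t₀) ((t / t₀) ^ γ) ≤ c' * (t / t₀) :=
              mul_le_mul_of_nonneg_left (min_le_left _ _) hc'.le
        _ = B * (t₀ ^ γ * (t / (2 * t₀))) / Real.exp 1 := by rw [hc'def]; field_simp
        _ ≤ B * ((2 * t₀) ^ γ * (t / (2 * t₀))) / Real.exp 1 := by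
              have h3 : t₀ ^ γ ≤ (2 * t₀) ^ γ :=
                Real.rpow_le_rpow ht₀.le (by linarith) hγ.le
              have h4 : (0:ℝ) ≤ t / (2 * t₀) := (div_pos ht h2t₀).le
              apply div_le_div_of_nonneg_right _ (Real.exp_pos 1).le
              exact mul_le_mul_of_nonneg_left
                (mul_le_mul_of_nonneg_right h3 h4) hB.le
    calc c' / (1 - γ) * min (t / t₀) ((t / t₀) ^ γ)
        = c' * min (t / t₀) ((t / t₀) ^ γ) / (1 - γ) := by ring
    _ ≤ B * t ^ γ / Real.exp 1 * m ^ (1 - γ) / (1 - γ) := by gcongr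
    _ = B * t ^ γ / Real.exp 1 * (m ^ (1 - γ) / (1 - γ)) := by ring
  case p3 =>
    intro hγ1 B t₀ hB ht₀ hR t ht
    have ht₀1 : (0:ℝ) < t₀ + 1 := by linarith
    set m := min 1 (t / (t₀ + 1)) with hmdef
    have hm : 0 < m := lt_min one_pos (div_pos ht ht₀1)
    have hm1 : m ≤ 1 := min_le_left _ _
    have hDpos : (0:ℝ) < B * t ^ γ / Real.exp 1 :=
      div_pos (mul_pos hB (Real.rpow_pos_of_pos ht _)) (Real.exp_pos 1)
    have step : ∀ τ ∈ Set.Ioc (0:ℝ) m,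
        B * t ^ γ / Real.exp 1 * τ⁻¹ ≤ R (t / τ) * Real.exp (-τ) := by
      intro τ hτ
      have hτ0 := hτ.1
      have hτ1 : τ ≤ 1 := le_trans hτ.2 hm1
      have hs : 0 < t / τ := div_pos ht hτ0
      have ht' : t₀ ≤ t / τ := by
        have h1 : τ ≤ t / (t₀ + 1) := le_trans hτ.2 (min_le_right _ _)
        rw [le_div_iff₀ ht₀1] at h1
        rw [le_div_iff₀ hτ0]
        nlinarith
      have hinv : τ⁻¹ ≤ τ ^ (-γ) := by
        calc τ⁻¹ = τ ^ (-1 : ℝ) := (Real.rpow_neg_one τ).symm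
        _ ≤ τ ^ (-γ) :=
            Real.rpow_le_rpow_of_exponent_ge hτ0 hτ1 (by linarith)
      have hexp : Real.exp (-1) ≤ Real.exp (-τ) := Real.exp_le_exp.mpr (by linarith)
      calc B * t ^ γ / Real.exp 1 * τ⁻¹
          = B * t ^ γ * τ⁻¹ * Real.exp (-1) := by rw [Real.exp_neg]; ring
      _ ≤ B * t ^ γ * τ ^ (-γ) * Real.exp (-1) := by
            apply mul_le_mul_of_nonneg_right _ (Real.exp_nonneg _)
            exact mul_le_mul_of_nonneg_left hinv
              (mul_nonneg hB.le (Real.rpow_nonneg ht.le _))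
      _ ≤ B * t ^ γ * τ ^ (-γ) * Real.exp (-τ) := by
            apply mul_le_mul_of_nonneg_left hexp
            exact mul_nonneg (mul_nonneg hB.le (Real.rpow_nonneg ht.le _))
              (Real.rpow_nonneg hτ0.le _)
      _ = B * (t / τ) ^ γ * Real.exp (-τ) := by rw [key_alg ht hτ0]; ring
      _ ≤ R (t / τ) * Real.exp (-τ) :=
            mul_le_mul_of_nonneg_right (hR _ ht' hs) (Real.exp_nonneg _)
    have htop : ∫⁻ τ in Set.Ioc (0:ℝ) m,
        ENNReal.ofReal (B * t ^ γ / Real.exp 1 * τ⁻¹) = ⊤ := by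
      simp_rw [ENNReal.ofReal_mul hDpos.le]
      rw [lintegral_const_mul' _ _ ENNReal.ofReal_ne_top, inv_top hm,
        ENNReal.mul_top (by simp [ENNReal.ofReal_eq_zero, not_le, hDpos])]
    have hle : (⊤ : ℝ≥0∞) ≤ lapM R t := by
      rw [← htop]
      calc ∫⁻ τ in Set.Ioc (0:ℝ) m, ENNReal.ofReal (B * t ^ γ / Real.exp 1 * τ⁻¹)
          ≤ ∫⁻ τ in Set.Ioc (0:ℝ) m,
              ENNReal.ofReal (R (t / τ) * Real.exp (-τ)) := by
            refine lintegral_mono_ae ?_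
            filter_upwards [ae_restrict_mem measurableSet_Ioc] with τ hτ
            exact ENNReal.ofReal_le_ofReal (step τ hτ)
      _ ≤ lapM R t :=
            lintegral_mono' (Measure.restrict_mono Ioc_subset_Ioi_self le_rfl) le_rfl
    exact top_le_iff.mp hle
end
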